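/- arXiv:1902.05798 — 6 statements merged into one kernel-verified Lean document; each statement's English description precedes it below -/
import Mathlib

section
/- Let Ω, λ, u, α, θ₀, h, Γ_h^−, Γ_h^+, ν⁺ be as in the context, and let n ≥ 2 be an integer. Suppose Γ_h^− is a nodal line of u, i.e., u(x) = 0 for all x ∈ Γ_h^−, and Γ_h^+ is a singular line of u, i.e., ∇u(x)·ν⁺ = 0 for all x ∈ Γ_h^+. If α ≠ (2q+1)/(2p) for all integers p, q with 1 ≤ p ≤ n−1 and 0 ≤ q ≤ p−1, then u vanishes at 0 up to order n, i.e., every partial derivative of u of order strictly less than n vanishes at 0. -/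
/-- First partial derivative of `u : ℝ × ℝ → ℂ` in the `x₁` direction. -/
noncomputable def pd1 (u : ℝ × ℝ → ℂ) : ℝ × ℝ → ℂ := fun x => fderiv ℝ u x (1, 0)

/-- First partial derivative of `u : ℝ × ℝ → ℂ` in the `x₂` direction. -/
noncomputable def pd2 (u : ℝ × ℝ → ℂ) : ℝ × ℝ → ℂ := fun x => fderiv ℝ u x (0, 1)

open Filter Set

set_option maxRecDepth 8000

noncomputable def pdd (d : ℝ × ℝ) (f : ℝ × ℝ → ℂ) : ℝ × ℝ → ℂ := fun x => fderiv ℝ f x d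

variable {Ω : Set (ℝ × ℝ)} {f g : ℝ × ℝ → ℂ} {x : ℝ × ℝ}

lemma pdd_analytic (hf : AnalyticOnNhd ℝ f Ω) (d : ℝ × ℝ) :
    AnalyticOnNhd ℝ (pdd d f) Ω :=
  (ContinuousLinearMap.apply ℝ ℂ d).comp_analyticOnNhd hf.fderiv

lemma pdd_iter_analytic (hf : AnalyticOnNhd ℝ f Ω) (d : ℝ × ℝ) (i : ℕ) :
    AnalyticOnNhd ℝ ((pdd d)^[i] f) Ω := by
  induction i generalizing f with
  | zero => exact hf
  | succ i ih => rw [Function.iterate_succ_apply]; exact ih (pdd_analytic hf d)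

lemma pdd_congr (hΩ : IsOpen Ω) (hFG : Set.EqOn f g Ω) (hx : x ∈ Ω) (d : ℝ × ℝ) :
    pdd d f x = pdd d g x := by
  have : f =ᶠ[nhds x] g := Filter.eventuallyEq_of_mem (hΩ.mem_nhds hx) hFG
  simp only [pdd, this.fderiv_eq]

lemma pdd_iter_congr (hΩ : IsOpen Ω) (hFG : Set.EqOn f g Ω) (d : ℝ × ℝ) (i : ℕ) :
    Set.EqOn ((pdd d)^[i] f) ((pdd d)^[i] g) Ω := by
  induction i with
  | zero => exact hFG
  | succ i ih =>
    intro x hx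
    rw [Function.iterate_succ_apply', Function.iterate_succ_apply']
    exact pdd_congr hΩ ih hx d

lemma pdd_comm (hΩ : IsOpen Ω) (hf : AnalyticOnNhd ℝ f Ω) (hx : x ∈ Ω) (a b : ℝ × ℝ) :
    pdd a (pdd b f) x = pdd b (pdd a f) x := by
  have hfd : AnalyticOnNhd ℝ (fderiv ℝ f) Ω := hf.fderiv
  have hdiff : DifferentiableAt ℝ (fderiv ℝ f) x := (hfd x hx).differentiableAt
  have key : ∀ w : ℝ × ℝ, pdd w f = fun y => (ContinuousLinearMap.apply ℝ ℂ w) (fderiv ℝ f y) :=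
    fun w => rfl
  have e : ∀ w v : ℝ × ℝ, pdd v (pdd w f) x = fderiv ℝ (fderiv ℝ f) x v w := by
    intro w v
    have hc : HasFDerivAt (fun y => (ContinuousLinearMap.apply ℝ ℂ w) (fderiv ℝ f y))
        ((ContinuousLinearMap.apply ℝ ℂ w).comp (fderiv ℝ (fderiv ℝ f) x)) x :=
      (ContinuousLinearMap.apply ℝ ℂ w).hasFDerivAt.comp x hdiff.hasFDerivAt
    rw [key w]
    show fderiv ℝ _ x v = _
    rw [hc.fderiv]
    rfl
  have hsymm : IsSymmSndFDerivAt ℝ f x :=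
    ((hf x hx).contDiffAt (n := ⊤)).isSymmSndFDerivAt le_top
  rw [e b a, e a b]
  exact hsymm a b

lemma pdd_swap_iter (hΩ : IsOpen Ω) (hf : AnalyticOnNhd ℝ f Ω) (a b : ℝ × ℝ) (i : ℕ) :
    ∀ x ∈ Ω, pdd b ((pdd a)^[i] f) x = (pdd a)^[i] (pdd b f) x := by
  induction i generalizing f with
  | zero => intro x _; rfl
  | succ i ih =>
    intro x hx
    rw [Function.iterate_succ_apply', Function.iterate_succ_apply']
    have h1 : pdd b (pdd a ((pdd a)^[i] f)) x = pdd a (pdd b ((pdd a)^[i] f)) x :=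
      pdd_comm hΩ (pdd_iter_analytic hf a i) hx b a
    rw [h1]
    exact pdd_congr hΩ (fun y hy => ih (f := f) hf y hy) hx a

lemma pdd_linear (A B : ℂ) (hf : DifferentiableAt ℝ f x) (hg : DifferentiableAt ℝ g x)
    (d : ℝ × ℝ) :
    pdd d (fun y => A * f y + B * g y) x = A * pdd d f x + B * pdd d g x := by
  have h1 : fderiv ℝ (fun y => A * f y + B * g y) x
      = A • fderiv ℝ f x + B • fderiv ℝ g x := by
    rw [fderiv_fun_add ((hf.const_mul A)) ((hg.const_mul B)), fderiv_const_mul hf,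
      fderiv_const_mul hg]
  simp [pdd, h1, smul_eq_mul]

lemma pdd_iter_linear (hΩ : IsOpen Ω) (A B : ℂ) (hf : AnalyticOnNhd ℝ f Ω)
    (hg : AnalyticOnNhd ℝ g Ω) (d : ℝ × ℝ) (i : ℕ) :
    ∀ x ∈ Ω, (pdd d)^[i] (fun y => A * f y + B * g y) x
      = A * (pdd d)^[i] f x + B * (pdd d)^[i] g x := by
  induction i generalizing f g with
  | zero => intro x _; rfl
  | succ i ih =>
    intro x hx
    rw [Function.iterate_succ_apply]
    have heq : Set.EqOn (pdd d fun y => A * f y + B * g y)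
        (fun y => A * pdd d f y + B * pdd d g y) Ω := fun y hy =>
      pdd_linear A B ((hf y hy).differentiableAt) ((hg y hy).differentiableAt) d
    rw [pdd_iter_congr hΩ heq d i hx]
    rw [ih (pdd_analytic hf d) (pdd_analytic hg d) x hx,
      ← Function.iterate_succ_apply, ← Function.iterate_succ_apply]

lemma pdd_dir (a b : ℝ) (x : ℝ × ℝ) :
    pdd (a, b) f x = (a : ℂ) * pdd (1, 0) f x + (b : ℂ) * pdd (0, 1) f x := by
  have : ((a, b) : ℝ × ℝ) = a • ((1 : ℝ), (0 : ℝ)) + b • ((0 : ℝ), (1 : ℝ)) := by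
    simp [Prod.ext_iff]
  rw [pdd, this, map_add, (fderiv ℝ f x).map_smul, (fderiv ℝ f x).map_smul]
  simp [pdd, Complex.real_smul]

lemma ray_step (hΩ : IsOpen Ω) (hg : AnalyticOnNhd ℝ g Ω) {d : ℝ × ℝ} {h : ℝ} (hh : 0 < h)
    (hmem : ∀ r : ℝ, 0 ≤ r → r ≤ h → r • d ∈ Ω)
    (hz : ∀ r : ℝ, 0 ≤ r → r < h → g (r • d) = 0) :
    ∀ r : ℝ, 0 ≤ r → r < h → pdd d g (r • d) = 0 := by
  have hin : ∀ r : ℝ, 0 < r → r < h → pdd d g (r • d) = 0 := by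
    intro r hr hrh
    have hmem' : r • d ∈ Ω := hmem r hr.le hrh.le
    have hcurve : HasDerivAt (fun s : ℝ => s • d) d r := by
      simpa using (hasDerivAt_id r).smul_const d
    have hcomp : HasDerivAt (fun s : ℝ => g (s • d)) (fderiv ℝ g (r • d) d) r :=
      ((hg _ hmem').differentiableAt).hasFDerivAt.comp_hasDerivAt r hcurve
    have hev : (fun s : ℝ => g (s • d)) =ᶠ[nhds r] (fun _ => (0 : ℂ)) := by
      filter_upwards [Ioo_mem_nhds hr hrh] with s hs
      exact hz s hs.1.le hs.2
    have hd0 : deriv (fun s : ℝ => g (s • d)) r = 0 := by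
      rw [hev.deriv_eq]; simp
    show fderiv ℝ g (r • d) d = 0
    rw [← hcomp.deriv]
    exact hd0
  intro r hr hrh
  rcases eq_or_lt_of_le hr with he | hpos
  · subst he
    have hcont : ContinuousAt (fun s : ℝ => pdd d g (s • d)) 0 := by
      have h1 : ContinuousAt (pdd d g) ((0 : ℝ) • d) :=
        ((pdd_analytic hg d) _ (hmem 0 le_rfl hh.le)).continuousAt
      have h2 : Continuous (fun s : ℝ => s • d) := continuous_id.smul continuous_const
      exact ContinuousAt.comp (x := (0 : ℝ)) (f := fun s : ℝ => s • d) (g := pdd d g) h1 h2.continuousAt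
    have hne : (nhdsWithin (0 : ℝ) (Ioo 0 h)).NeBot := by
      rw [← mem_closure_iff_nhdsWithin_neBot, closure_Ioo hh.ne]
      exact left_mem_Icc.2 hh.le
    have t1 : Tendsto (fun s : ℝ => pdd d g (s • d)) (nhdsWithin 0 (Ioo 0 h))
        (nhds (pdd d g ((0 : ℝ) • d))) := hcont.continuousWithinAt
    have t2 : Tendsto (fun s : ℝ => pdd d g (s • d)) (nhdsWithin 0 (Ioo 0 h))
        (nhds 0) := by
      apply Filter.Tendsto.congr' _ tendsto_const_nhds
      filter_upwards [self_mem_nhdsWithin] with s hs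
      exact (hin s hs.1 hs.2).symm
    exact tendsto_nhds_unique t1 t2
  · exact hin r hpos hrh

lemma ray_zero (hΩ : IsOpen Ω) (hf : AnalyticOnNhd ℝ f Ω) {d : ℝ × ℝ} {h : ℝ} (hh : 0 < h)
    (hmem : ∀ r : ℝ, 0 ≤ r → r ≤ h → r • d ∈ Ω)
    (hz : ∀ r : ℝ, 0 ≤ r → r ≤ h → f (r • d) = 0) :
    ∀ i, ∀ r : ℝ, 0 ≤ r → r < h → (pdd d)^[i] f (r • d) = 0 := by
  intro i
  induction i with
  | zero => exact fun r hr hrh => hz r hr hrh.le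
  | succ i ih =>
    intro r hr hrh
    rw [Function.iterate_succ_apply']
    exact ray_step hΩ (pdd_iter_analytic hf d i) hh hmem ih r hr hrh

noncomputable def mix : {k : ℕ} → (Fin k → ℝ × ℝ) → (ℝ × ℝ → ℂ) → ℝ × ℝ → ℂ
  | 0, _, f => f
  | _ + 1, m, f => mix (Fin.init m) (pdd (m (Fin.last _)) f)

lemma itfd_succ (hΩ : IsOpen Ω) (hf : AnalyticOnNhd ℝ f Ω) (hx : x ∈ Ω) {k : ℕ}
    (m : Fin (k + 1) → ℝ × ℝ) :
    iteratedFDeriv ℝ (k + 1) f x m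
      = iteratedFDeriv ℝ k (pdd (m (Fin.last k)) f) x (Fin.init m) := by
  have hU : UniqueDiffOn ℝ Ω := hΩ.uniqueDiffOn
  have hcd : ContDiffOn ℝ (k + 1 : ℕ) f Ω := hf.contDiffOn hU
  have hcd' : ContDiffOn ℝ (k : ℕ) (fderivWithin ℝ f Ω) Ω := by
    apply hcd.fderivWithin hU
    exact_mod_cast le_rfl
  set w := m (Fin.last k) with hw
  have e1 : iteratedFDeriv ℝ (k + 1) f x m
      = iteratedFDerivWithin ℝ (k + 1) f Ω x m := by
    rw [iteratedFDerivWithin_of_isOpen (k + 1) hΩ hx]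
  have e2 : iteratedFDerivWithin ℝ (k + 1) f Ω x m
      = iteratedFDerivWithin ℝ k (fun y => fderivWithin ℝ f Ω y) Ω x (Fin.init m) w :=
    iteratedFDerivWithin_succ_apply_right hU hx m
  have e3 : iteratedFDerivWithin ℝ k
        ((ContinuousLinearMap.apply ℝ ℂ w) ∘ (fun y => fderivWithin ℝ f Ω y)) Ω x
      = (ContinuousLinearMap.apply ℝ ℂ w).compContinuousMultilinearMap
        (iteratedFDerivWithin ℝ k (fun y => fderivWithin ℝ f Ω y) Ω x) :=
    (ContinuousLinearMap.apply ℝ ℂ w).iteratedFDerivWithin_comp_left (hcd' x hx) hU hx le_rfl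
  have e4 : Set.EqOn ((ContinuousLinearMap.apply ℝ ℂ w) ∘ (fun y => fderivWithin ℝ f Ω y))
      (pdd w f) Ω := by
    intro y hy
    simp only [Function.comp_apply, ContinuousLinearMap.apply_apply, pdd,
      fderivWithin_of_isOpen hΩ hy]
  have e5 : iteratedFDerivWithin ℝ k (pdd w f) Ω x (Fin.init m)
      = iteratedFDeriv ℝ k (pdd w f) x (Fin.init m) := by
    rw [iteratedFDerivWithin_of_isOpen k hΩ hx]
  rw [e1, e2, ← e5, ← iteratedFDerivWithin_congr e4 hx k]
  rw [e3]
  rfl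

lemma bridge (hΩ : IsOpen Ω) : ∀ {k : ℕ} (f : ℝ × ℝ → ℂ), AnalyticOnNhd ℝ f Ω → ∀ x ∈ Ω,
    ∀ m : Fin k → ℝ × ℝ, iteratedFDeriv ℝ k f x m = mix m f x := by
  intro k
  induction k with
  | zero => intro f _ x _ m; rw [iteratedFDeriv_zero_apply]; rfl
  | succ k ih =>
    intro f hf x hx m
    rw [itfd_succ hΩ hf hx m]
    exact ih _ (pdd_analytic hf _) x hx (Fin.init m)

lemma mix_basis (hΩ : IsOpen Ω) :
    ∀ {k : ℕ} (v : Fin k → Fin 2) (f : ℝ × ℝ → ℂ), AnalyticOnNhd ℝ f Ω → ∀ x ∈ Ω,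
    ∃ i j : ℕ, i + j = k ∧
      mix (fun s => (![((1 : ℝ), (0 : ℝ)), ((0 : ℝ), (1 : ℝ))] : Fin 2 → ℝ × ℝ) (v s)) f x
        = (pdd (1, 0))^[i] ((pdd (0, 1))^[j] f) x := by
  intro k
  induction k with
  | zero => exact fun v f _ x _ => ⟨0, 0, rfl, rfl⟩
  | succ k ih =>
    intro v f hf x hx
    have hstep : mix (fun s => ![((1 : ℝ), (0 : ℝ)), ((0 : ℝ), (1 : ℝ))] (v s)) f x
        = mix (fun s : Fin k => ![((1 : ℝ), (0 : ℝ)), ((0 : ℝ), (1 : ℝ))] (Fin.init v s))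
          (pdd (![((1 : ℝ), (0 : ℝ)), ((0 : ℝ), (1 : ℝ))] (v (Fin.last k))) f) x := rfl
    obtain ⟨a, ha⟩ : ∃ a, v (Fin.last k) = a := ⟨_, rfl⟩
    rw [ha] at hstep
    fin_cases a
    · -- last direction is e₁ = (1,0)
      obtain ⟨i, j, hsum, hmix⟩ :=
        ih (Fin.init v) (pdd ((1 : ℝ), (0 : ℝ)) f) (pdd_analytic hf _) x hx
      refine ⟨i + 1, j, by omega, ?_⟩
      rw [hstep]
      simp only [Fin.mk_zero, Fin.isValue, Matrix.cons_val_zero] at hmix ⊢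
      rw [hmix]
      have hswap : Set.EqOn ((pdd ((0 : ℝ), (1 : ℝ)))^[j] (pdd ((1 : ℝ), (0 : ℝ)) f))
          (pdd ((1 : ℝ), (0 : ℝ)) ((pdd ((0 : ℝ), (1 : ℝ)))^[j] f)) Ω := fun y hy =>
        (pdd_swap_iter hΩ hf ((0 : ℝ), (1 : ℝ)) ((1 : ℝ), (0 : ℝ)) j y hy).symm
      rw [pdd_iter_congr hΩ hswap ((1 : ℝ), (0 : ℝ)) i hx,
        ← Function.iterate_succ_apply]
    · -- last direction is e₂ = (0,1)
      obtain ⟨i, j, hsum, hmix⟩ :=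
        ih (Fin.init v) (pdd ((0 : ℝ), (1 : ℝ)) f) (pdd_analytic hf _) x hx
      refine ⟨i, j + 1, by omega, ?_⟩
      rw [hstep]
      simp only [Fin.mk_one, Fin.isValue, Matrix.cons_val_one, Matrix.head_cons, Matrix.cons_val_zero] at hmix ⊢
      rw [hmix, ← Function.iterate_succ_apply]

lemma pascal_merge (Z : ℕ → ℂ) (l : ℕ) :
    ∑ m ∈ Finset.range (l + 2), ((l + 1).choose m : ℂ) * Z m
      = ∑ m ∈ Finset.range (l + 1), (l.choose m : ℂ) * Z m
        + ∑ m ∈ Finset.range (l + 1), (l.choose m : ℂ) * Z (m + 1) := by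
  rw [Finset.sum_range_succ' (fun m => ((l + 1).choose m : ℂ) * Z m) (l + 1)]
  have h1 : ∀ m, ((l + 1).choose (m + 1) : ℂ) = (l.choose m : ℂ) + (l.choose (m + 1) : ℂ) := by
    intro m; rw [Nat.choose_succ_succ]; push_cast; ring
  have h2 : ∑ m ∈ Finset.range (l + 1), ((l + 1).choose (m + 1) : ℂ) * Z (m + 1)
      = ∑ m ∈ Finset.range (l + 1), (l.choose m : ℂ) * Z (m + 1)
        + ∑ m ∈ Finset.range (l + 1), (l.choose (m + 1) : ℂ) * Z (m + 1) := by
    rw [← Finset.sum_add_distrib]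
    exact Finset.sum_congr rfl fun m _ => by rw [h1]; ring
  rw [h2]
  have h5 : ∑ m ∈ Finset.range (l + 1), (l.choose (m + 1) : ℂ) * Z (m + 1)
      = ∑ m ∈ Finset.range l, (l.choose (m + 1) : ℂ) * Z (m + 1) := by
    rw [Finset.sum_range_succ]; simp [Nat.choose_succ_self]
  have h4 : ∑ m ∈ Finset.range (l + 1), (l.choose m : ℂ) * Z m
      = ∑ m ∈ Finset.range l, (l.choose (m + 1) : ℂ) * Z (m + 1) + (l.choose 0 : ℂ) * Z 0 :=
    Finset.sum_range_succ' _ l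
  rw [h5, h4]
  simp only [Nat.choose_zero_right]
  push_cast
  ring

lemma pdd_iter_expand (hΩ : IsOpen Ω) (a b : ℝ) :
    ∀ (l : ℕ) (f : ℝ × ℝ → ℂ), AnalyticOnNhd ℝ f Ω → ∀ x ∈ Ω,
    (pdd (a, b))^[l] f x = ∑ m ∈ Finset.range (l + 1),
      (l.choose m : ℂ) * (a : ℂ) ^ (l - m) * (b : ℂ) ^ m *
        ((pdd ((1 : ℝ), (0 : ℝ)))^[l - m] ((pdd ((0 : ℝ), (1 : ℝ)))^[m] f) x) := by
  intro l
  induction l with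
  | zero => intro f _ x _; simp
  | succ l ih =>
    intro f hf x hx
    rw [Function.iterate_succ_apply]
    have hdir : pdd (a, b) f = fun y => (a : ℂ) * pdd (1, 0) f y + (b : ℂ) * pdd (0, 1) f y :=
      funext fun y => pdd_dir a b y
    rw [hdir, pdd_iter_linear hΩ (a : ℂ) (b : ℂ) (pdd_analytic hf _) (pdd_analytic hf _)
      (a, b) l x hx, ih _ (pdd_analytic hf _) x hx, ih _ (pdd_analytic hf _) x hx]
    have hS1 : ∀ m ∈ Finset.range (l + 1),
        (l.choose m : ℂ) * (a : ℂ) ^ (l - m) * (b : ℂ) ^ m *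
          ((pdd ((1 : ℝ), (0 : ℝ)))^[l - m] ((pdd ((0 : ℝ), (1 : ℝ)))^[m]
            (pdd ((1 : ℝ), (0 : ℝ)) f)) x)
        = (l.choose m : ℂ) * (a : ℂ) ^ (l - m) * (b : ℂ) ^ m *
          ((pdd ((1 : ℝ), (0 : ℝ)))^[(l - m) + 1] ((pdd ((0 : ℝ), (1 : ℝ)))^[m] f) x) := by
      intro m _
      congr 1
      have hswap : Set.EqOn ((pdd ((0 : ℝ), (1 : ℝ)))^[m] (pdd ((1 : ℝ), (0 : ℝ)) f))
          (pdd ((1 : ℝ), (0 : ℝ)) ((pdd ((0 : ℝ), (1 : ℝ)))^[m] f)) Ω := fun y hy =>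
        (pdd_swap_iter hΩ hf ((0 : ℝ), (1 : ℝ)) ((1 : ℝ), (0 : ℝ)) m y hy).symm
      rw [pdd_iter_congr hΩ hswap ((1 : ℝ), (0 : ℝ)) (l - m) hx,
        ← Function.iterate_succ_apply]
    rw [Finset.sum_congr rfl hS1]
    have hZ := pascal_merge (fun m => (a : ℂ) ^ (l + 1 - m) * (b : ℂ) ^ m *
      ((pdd ((1 : ℝ), (0 : ℝ)))^[l + 1 - m] ((pdd ((0 : ℝ), (1 : ℝ)))^[m] f) x)) l
    have heq : ∑ m ∈ Finset.range (l + 1 + 1),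
        ((l + 1).choose m : ℂ) * (a : ℂ) ^ (l + 1 - m) * (b : ℂ) ^ m *
          ((pdd ((1 : ℝ), (0 : ℝ)))^[l + 1 - m] ((pdd ((0 : ℝ), (1 : ℝ)))^[m] f) x)
        = ∑ m ∈ Finset.range (l + 2), ((l + 1).choose m : ℂ) *
          ((a : ℂ) ^ (l + 1 - m) * (b : ℂ) ^ m *
            ((pdd ((1 : ℝ), (0 : ℝ)))^[l + 1 - m] ((pdd ((0 : ℝ), (1 : ℝ)))^[m] f) x)) := by
      exact Finset.sum_congr rfl fun m _ => by ring
    rw [heq, hZ]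
    congr 1
    · rw [Finset.mul_sum]
      refine Finset.sum_congr rfl fun m hm => ?_
      have hml : m ≤ l := Nat.lt_succ_iff.mp (Finset.mem_range.mp hm)
      have h1 : l + 1 - m = (l - m) + 1 := by omega
      rw [h1, pow_succ]
      ring
    · rw [Finset.mul_sum]
      refine Finset.sum_congr rfl fun m hm => ?_
      have hml : m ≤ l := Nat.lt_succ_iff.mp (Finset.mem_range.mp hm)
      have h1 : l + 1 - (m + 1) = l - m := by omega
      rw [h1, Function.iterate_succ_apply, pow_succ]
      ring

noncomputable def wI (m : ℕ) : ℂ := (Complex.I ^ m - (-Complex.I) ^ m) * (-Complex.I / 2)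

lemma wI_zero : wI 0 = 0 := by simp [wI]

lemma wI_one : wI 1 = 1 := by
  simp only [wI, pow_one]
  linear_combination -Complex.I_sq

lemma wI_rec (m : ℕ) : wI (m + 2) = -wI m := by
  simp only [wI, pow_succ]
  linear_combination ((Complex.I ^ m - (-Complex.I) ^ m) * (-Complex.I / 2)) * Complex.I_sq

lemma wI_inner (m : ℕ) (c s : ℂ) :
    -s * wI m + c * wI (m + 1)
      = (-Complex.I / 2) * (Complex.I ^ (m + 1) * (c + s * Complex.I)
        - (-Complex.I) ^ (m + 1) * (c - s * Complex.I)) := by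
  simp only [wI, pow_succ]
  linear_combination (s * Complex.I / 2 * (Complex.I ^ m - (-Complex.I) ^ m)) * Complex.I_sq

lemma alg_sum (k : ℕ) (hk : 1 ≤ k) (t : ℕ → ℂ) (h0 : t 0 = 0)
    (hrec : ∀ j, j + 2 ≤ k → t (j + 2) = -t j) (θ : ℝ) :
    ∑ m ∈ Finset.range k, ((k - 1).choose m : ℂ) * (Real.cos θ : ℂ) ^ (k - 1 - m)
        * (Real.sin θ : ℂ) ^ m
        * (-(Real.sin θ : ℂ) * t m + (Real.cos θ : ℂ) * t (m + 1))
      = t 1 * (Real.cos (k * θ) : ℂ) := by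
  set c : ℂ := (Real.cos θ : ℂ) with hc
  set s : ℂ := (Real.sin θ : ℂ) with hs
  have ht : ∀ m, m ≤ k → t m = t 1 * wI m := by
    intro m
    induction m using Nat.strong_induction_on with
    | _ m ih =>
      match m with
      | 0 => intro _; rw [h0, wI_zero]; ring
      | 1 => intro _; rw [wI_one]; ring
      | (m + 2) =>
        intro hm
        rw [hrec m hm, ih m (by omega) (by omega), wI_rec]
        ring
  -- replace t by t 1 * wI, then use the closed form
  have hsum1 : ∑ m ∈ Finset.range k, ((k - 1).choose m : ℂ) * c ^ (k - 1 - m) * s ^ m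
        * (-s * t m + c * t (m + 1))
      = t 1 * ∑ m ∈ Finset.range k, ((k - 1).choose m : ℂ) * c ^ (k - 1 - m) * s ^ m
        * ((-Complex.I / 2) * (Complex.I ^ (m + 1) * (c + s * Complex.I)
          - (-Complex.I) ^ (m + 1) * (c - s * Complex.I))) := by
    rw [Finset.mul_sum]
    refine Finset.sum_congr rfl fun m hm => ?_
    have hmk : m < k := Finset.mem_range.mp hm
    rw [ht m hmk.le, ht (m + 1) hmk, ← wI_inner m c s]
    ring
  rw [hsum1]
  -- binomial sums
  have hbin1 : ∑ m ∈ Finset.range k, ((k - 1).choose m : ℂ) * c ^ (k - 1 - m)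
      * (s * Complex.I) ^ m = (c + s * Complex.I) ^ (k - 1) := by
    rw [add_comm, add_pow]
    have : k - 1 + 1 = k := by omega
    rw [this]
    exact Finset.sum_congr rfl fun m _ => by ring
  have hbin2 : ∑ m ∈ Finset.range k, ((k - 1).choose m : ℂ) * c ^ (k - 1 - m)
      * (-(s * Complex.I)) ^ m = (c - s * Complex.I) ^ (k - 1) := by
    have h2 : c - s * Complex.I = -(s * Complex.I) + c := by ring
    rw [h2, add_pow]
    have : k - 1 + 1 = k := by omega
    rw [this]
    exact Finset.sum_congr rfl fun m _ => by ring
  have hsum2 : ∑ m ∈ Finset.range k, ((k - 1).choose m : ℂ) * c ^ (k - 1 - m) * s ^ m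
        * ((-Complex.I / 2) * (Complex.I ^ (m + 1) * (c + s * Complex.I)
          - (-Complex.I) ^ (m + 1) * (c - s * Complex.I)))
      = (-Complex.I / 2) * (Complex.I * (c + s * Complex.I) ^ k
          + Complex.I * (c - s * Complex.I) ^ k) := by
    symm
    have hp1 : (c + s * Complex.I) ^ k = (c + s * Complex.I) ^ (k - 1) * (c + s * Complex.I) := by
      conv_lhs => rw [show k = (k - 1) + 1 by omega]
      rw [pow_succ]
    have hp2 : (c - s * Complex.I) ^ k = (c - s * Complex.I) ^ (k - 1) * (c - s * Complex.I) := by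
      conv_lhs => rw [show k = (k - 1) + 1 by omega]
      rw [pow_succ]
    rw [hp1, hp2, ← hbin1, ← hbin2, Finset.sum_mul, Finset.sum_mul, Finset.mul_sum,
      Finset.mul_sum, ← Finset.sum_add_distrib, Finset.mul_sum]
    refine Finset.sum_congr rfl fun m _ => ?_
    have hne : ∀ (z : ℂ) (m : ℕ), (-z) ^ m = (-1 : ℂ) ^ m * z ^ m := by
      intro z m; rw [← neg_one_mul, mul_pow]
    simp only [pow_succ, mul_pow]
    rw [hne (s * Complex.I) m, hne Complex.I m]
    ring
  rw [hsum2]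
  -- identify with the cosine
  have hI : (-Complex.I / 2) * (Complex.I * (c + s * Complex.I) ^ k
        + Complex.I * (c - s * Complex.I) ^ k)
      = ((c + s * Complex.I) ^ k + (c - s * Complex.I) ^ k) / 2 := by
    linear_combination (-(((c + s * Complex.I) ^ k + (c - s * Complex.I) ^ k) / 2)) * Complex.I_sq
  have he1 : c + s * Complex.I = Complex.exp ((θ : ℂ) * Complex.I) := by
    rw [Complex.exp_mul_I, hc, hs, Complex.ofReal_cos, Complex.ofReal_sin]
  have he2 : c - s * Complex.I = Complex.exp (-(θ : ℂ) * Complex.I) := by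
    rw [Complex.exp_mul_I, Complex.cos_neg, Complex.sin_neg, hc, hs, Complex.ofReal_cos,
      Complex.ofReal_sin]
    ring
  have hek1 : (c + s * Complex.I) ^ k = Complex.exp (((k : ℝ) * θ : ℝ) * Complex.I) := by
    rw [he1, ← Complex.exp_nat_mul]
    congr 1
    push_cast
    ring
  have hek2 : (c - s * Complex.I) ^ k = Complex.exp (-(((k : ℝ) * θ : ℝ) : ℂ) * Complex.I) := by
    rw [he2, ← Complex.exp_nat_mul]
    congr 1
    push_cast
    ring
  have hcos : Complex.exp ((((k : ℝ) * θ : ℝ) : ℂ) * Complex.I)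
        + Complex.exp (-(((k : ℝ) * θ : ℝ) : ℂ) * Complex.I)
      = 2 * Complex.cos (((k : ℝ) * θ : ℝ) : ℂ) := by
    rw [Complex.exp_mul_I, Complex.exp_mul_I, Complex.cos_neg, Complex.sin_neg]
    ring
  rw [hI, hek1, hek2, hcos, ← Complex.ofReal_cos]
  ring

lemma pde_step (hΩ : IsOpen Ω) {F G H : ℝ × ℝ → ℂ} (hF : AnalyticOnNhd ℝ F Ω)
    (hG : AnalyticOnNhd ℝ G Ω) (hH : AnalyticOnNhd ℝ H Ω) (lamc : ℂ)
    (heq : ∀ x ∈ Ω, F x + G x + lamc * H x = 0) (d : ℝ × ℝ) :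
    ∀ x ∈ Ω, pdd d F x + pdd d G x + lamc * pdd d H x = 0 := by
  intro x hx
  have hzero : (fun y => F y + G y + lamc * H y) =ᶠ[nhds x] (fun _ => (0 : ℂ)) := by
    filter_upwards [hΩ.mem_nhds hx] with y hy
    exact heq y hy
  have h1 : fderiv ℝ (fun y => F y + G y + lamc * H y) x = 0 := by
    rw [hzero.fderiv_eq]
    exact fderiv_const_apply 0
  have hdF : DifferentiableAt ℝ F x := (hF x hx).differentiableAt
  have hdG : DifferentiableAt ℝ G x := (hG x hx).differentiableAt
  have hdH : DifferentiableAt ℝ H x := (hH x hx).differentiableAt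
  have h2 : fderiv ℝ (fun y => F y + G y + lamc * H y) x
      = fderiv ℝ F x + fderiv ℝ G x + lamc • fderiv ℝ H x := by
    rw [fderiv_fun_add (f := fun y => F y + G y) (hdF.add hdG) (hdH.const_mul lamc), fderiv_fun_add hdF hdG,
      fderiv_const_mul hdH]
  have h3 := congrArg (fun (L : (ℝ × ℝ) →L[ℝ] ℂ) => L d) (h2.symm.trans h1)
  simpa [pdd, smul_eq_mul] using h3

lemma pde_iter (hΩ : IsOpen Ω) {u : ℝ × ℝ → ℂ} (hu : AnalyticOnNhd ℝ u Ω) (lamc : ℂ)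
    (hpde : ∀ x ∈ Ω, pdd ((1 : ℝ), (0 : ℝ)) (pdd ((1 : ℝ), (0 : ℝ)) u) x
      + pdd ((0 : ℝ), (1 : ℝ)) (pdd ((0 : ℝ), (1 : ℝ)) u) x + lamc * u x = 0) :
    ∀ i j, ∀ x ∈ Ω,
      (pdd ((1 : ℝ), (0 : ℝ)))^[i + 2] ((pdd ((0 : ℝ), (1 : ℝ)))^[j] u) x
      + (pdd ((1 : ℝ), (0 : ℝ)))^[i] ((pdd ((0 : ℝ), (1 : ℝ)))^[j + 2] u) x
      + lamc * (pdd ((1 : ℝ), (0 : ℝ)))^[i] ((pdd ((0 : ℝ), (1 : ℝ)))^[j] u) x = 0 := by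
  have e1 : ((1 : ℝ), (0 : ℝ)) = ((1 : ℝ), (0 : ℝ)) := rfl
  -- first: the case i = 0, arbitrary j
  have base : ∀ j, ∀ x ∈ Ω,
      (pdd ((1 : ℝ), (0 : ℝ)))^[2] ((pdd ((0 : ℝ), (1 : ℝ)))^[j] u) x
      + (pdd ((0 : ℝ), (1 : ℝ)))^[j + 2] u x
      + lamc * (pdd ((0 : ℝ), (1 : ℝ)))^[j] u x = 0 := by
    intro j
    induction j with
    | zero => exact hpde
    | succ j ih =>
      have hGan : AnalyticOnNhd ℝ ((pdd ((0 : ℝ), (1 : ℝ)))^[j] u) Ω :=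
        pdd_iter_analytic hu _ j
      have hs := pde_step hΩ (pdd_iter_analytic (pdd_iter_analytic hu _ j) _ 2)
        (pdd_iter_analytic hu _ (j + 2)) (pdd_iter_analytic hu _ j) lamc ih ((0 : ℝ), (1 : ℝ))
      intro x hx
      have h1 : pdd ((0 : ℝ), (1 : ℝ)) ((pdd ((1 : ℝ), (0 : ℝ)))^[2]
            ((pdd ((0 : ℝ), (1 : ℝ)))^[j] u)) x
          = (pdd ((1 : ℝ), (0 : ℝ)))^[2] ((pdd ((0 : ℝ), (1 : ℝ)))^[j + 1] u) x := by
        rw [pdd_swap_iter hΩ hGan ((1 : ℝ), (0 : ℝ)) ((0 : ℝ), (1 : ℝ)) 2 x hx,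
          ← Function.iterate_succ_apply' (pdd ((0 : ℝ), (1 : ℝ))) j u]
      have := hs x hx
      rw [h1] at this
      rw [← Function.iterate_succ_apply' (pdd ((0 : ℝ), (1 : ℝ))) (j + 2) u,
        ← Function.iterate_succ_apply' (pdd ((0 : ℝ), (1 : ℝ))) j u] at this
      exact this
  intro i
  induction i with
  | zero => exact base
  | succ i ih =>
    intro j x hx
    have hs := pde_step hΩ (pdd_iter_analytic (pdd_iter_analytic hu _ j) _ (i + 2))
      (pdd_iter_analytic (pdd_iter_analytic hu _ (j + 2)) _ i)
      (pdd_iter_analytic (pdd_iter_analytic hu _ j) _ i) lamc (ih j) ((1 : ℝ), (0 : ℝ)) x hx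
    rw [← Function.iterate_succ_apply' (pdd ((1 : ℝ), (0 : ℝ))) (i + 2),
      ← Function.iterate_succ_apply' (pdd ((1 : ℝ), (0 : ℝ))) i,
      ← Function.iterate_succ_apply' (pdd ((1 : ℝ), (0 : ℝ))) i] at hs
    exact hs

lemma cos_ne_zero_of_alpha (α : ℝ) (hα : α ∈ Set.Ioo (0 : ℝ) 1) (n k : ℕ) (hk1 : 1 ≤ k)
    (hkn : k < n)
    (hαpq : ∀ p q : ℕ, 1 ≤ p → p ≤ n - 1 → q ≤ p - 1 →
      α ≠ (2 * (q : ℝ) + 1) / (2 * (p : ℝ))) :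
    Real.cos ((k : ℝ) * (α * Real.pi)) ≠ 0 := by
  intro hcos
  rw [Real.cos_eq_zero_iff] at hcos
  obtain ⟨m, hm⟩ := hcos
  have hπ := Real.pi_pos
  have hk0 : (0 : ℝ) < (k : ℝ) := by exact_mod_cast hk1
  have h2 : (k : ℝ) * α * 2 = 2 * (m : ℝ) + 1 := by
    have hcancel : ((k : ℝ) * α * 2) * Real.pi = (2 * (m : ℝ) + 1) * Real.pi := by
      ring_nf
      ring_nf at hm
      linarith
    exact mul_right_cancel₀ (ne_of_gt hπ) hcancel
  have hα' : α = (2 * (m : ℝ) + 1) / (2 * (k : ℝ)) := by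
    rw [eq_div_iff (by positivity)]
    linarith
  have hm0 : 0 ≤ m := by
    have h3 : (0 : ℝ) < 2 * (m : ℝ) + 1 := by nlinarith [hα.1]
    have h4 : (-1 : ℝ) < (m : ℝ) := by linarith
    have h5 : (-1 : ℤ) < m := by exact_mod_cast h4
    omega
  have hmk : m + 1 ≤ (k : ℤ) := by
    have h3 : 2 * (m : ℝ) + 1 < 2 * (k : ℝ) := by nlinarith [hα.2]
    have h4 : (m : ℝ) < (k : ℝ) := by linarith
    have h5 : m < (k : ℤ) := by exact_mod_cast h4
    omega
  set q := m.toNat with hq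
  have hmq : (m : ℝ) = (q : ℝ) := by
    rw [hq]
    exact_mod_cast (Int.toNat_of_nonneg hm0).symm
  have hqk : q ≤ k - 1 := by omega
  exact hαpq k q hk1 (by omega) hqk (by rw [hα', hmq])


/-- A nodal line `Γ_h^−` and a singular line `Γ_h^+` intersecting at the origin at angle
`θ₀ = απ`, with `α ≠ (2q+1)/(2p)`: the eigenfunction vanishes at `0` up to order `n`. -/
theorem stmt8
    (Ω : Set (ℝ × ℝ)) (hΩ : IsOpen Ω)
    (lam : ℝ) (hlam : 0 < lam)
    (u : ℝ × ℝ → ℂ)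
    (hu_an : AnalyticOnNhd ℝ u Ω)
    (hu_eq : ∀ x ∈ Ω, pd1 (pd1 u) x + pd2 (pd2 u) x + (lam : ℂ) * u x = 0)
    (α : ℝ) (hα : α ∈ Set.Ioo (0 : ℝ) 1)
    (θ₀ : ℝ) (hθ₀ : θ₀ = α * Real.pi)
    (h : ℝ) (hh : 0 < h)
    (hdisk : ∀ x : ℝ × ℝ, x.1 ^ 2 + x.2 ^ 2 ≤ h ^ 2 → x ∈ Ω)
    (n : ℕ) (hn : 2 ≤ n)
    (hnodal_m : ∀ r : ℝ, 0 ≤ r → r ≤ h → u (r, 0) = 0)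
    (hsing_p : ∀ r : ℝ, 0 ≤ r → r ≤ h →
      fderiv ℝ u (r * Real.cos θ₀, r * Real.sin θ₀) (-Real.sin θ₀, Real.cos θ₀) = 0)
    (hαpq : ∀ p q : ℕ, 1 ≤ p → p ≤ n - 1 → q ≤ p - 1 →
      α ≠ (2 * (q : ℝ) + 1) / (2 * (p : ℝ))) :
    ∀ k : ℕ, k < n → iteratedFDeriv ℝ k u (0, 0) = 0 := by
  have h00 : ((0 : ℝ), (0 : ℝ)) ∈ Ω := hdisk _ (by norm_num; positivity)
  -- nodal ray
  have hmem1 : ∀ r : ℝ, 0 ≤ r → r ≤ h → r • (((1 : ℝ), (0 : ℝ)) : ℝ × ℝ) ∈ Ω := by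
    intro r hr hrh
    apply hdisk
    simp only [Prod.smul_mk, smul_eq_mul, mul_one, mul_zero]
    nlinarith
  have hz1 : ∀ r : ℝ, 0 ≤ r → r ≤ h → u (r • (((1 : ℝ), (0 : ℝ)) : ℝ × ℝ)) = 0 := by
    intro r hr hrh
    have hp : r • (((1 : ℝ), (0 : ℝ)) : ℝ × ℝ) = (r, (0 : ℝ)) := by
      simp [Prod.smul_mk]
    rw [hp]
    exact hnodal_m r hr hrh
  have NOD : ∀ i, (pdd ((1 : ℝ), (0 : ℝ)))^[i] u ((0 : ℝ), (0 : ℝ)) = 0 := by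
    intro i
    have := ray_zero hΩ hu_an hh hmem1 hz1 i 0 le_rfl hh
    simp only [zero_smul] at this; exact this
  -- singular ray
  have hν_an : AnalyticOnNhd ℝ (pdd (-Real.sin θ₀, Real.cos θ₀) u) Ω := pdd_analytic hu_an _
  have hmemτ : ∀ r : ℝ, 0 ≤ r → r ≤ h → r • ((Real.cos θ₀, Real.sin θ₀) : ℝ × ℝ) ∈ Ω := by
    intro r hr hrh
    apply hdisk
    simp only [Prod.smul_mk, smul_eq_mul]
    nlinarith [Real.sin_sq_add_cos_sq θ₀, mul_le_mul hrh hrh hr (hr.trans hrh)]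
  have hzν : ∀ r : ℝ, 0 ≤ r → r ≤ h →
      pdd (-Real.sin θ₀, Real.cos θ₀) u (r • ((Real.cos θ₀, Real.sin θ₀) : ℝ × ℝ)) = 0 := by
    intro r hr hrh
    have hp : r • ((Real.cos θ₀, Real.sin θ₀) : ℝ × ℝ)
        = (r * Real.cos θ₀, r * Real.sin θ₀) := by simp [Prod.smul_mk]
    rw [hp]
    exact hsing_p r hr hrh
  have SIN : ∀ i, (pdd (Real.cos θ₀, Real.sin θ₀))^[i]
      (pdd (-Real.sin θ₀, Real.cos θ₀) u) ((0 : ℝ), (0 : ℝ)) = 0 := by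
    intro i
    have := ray_zero hΩ hν_an hh hmemτ hzν i 0 le_rfl hh
    simp only [zero_smul] at this; exact this
  -- PDE
  have PDE := pde_iter hΩ hu_an (lam : ℂ) hu_eq
  -- key claim
  have KEY : ∀ k', k' < n → ∀ i j, i + j = k' →
      (pdd ((1 : ℝ), (0 : ℝ)))^[i] ((pdd ((0 : ℝ), (1 : ℝ)))^[j] u) ((0 : ℝ), (0 : ℝ)) = 0 := by
    intro k'
    induction k' using Nat.strong_induction_on with
    | _ k' IH =>
      intro hk'n i j hij
      rcases Nat.eq_zero_or_pos k' with hk0 | hk1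
      · obtain rfl : i = 0 := by omega
        obtain rfl : j = 0 := by omega
        exact NOD 0
      · set t : ℕ → ℂ := fun m =>
          (pdd ((1 : ℝ), (0 : ℝ)))^[k' - m] ((pdd ((0 : ℝ), (1 : ℝ)))^[m] u) ((0 : ℝ), (0 : ℝ))
          with ht_def
        have h0 : t 0 = 0 := by
          simp only [ht_def, Nat.sub_zero, Function.iterate_zero, id_eq]
          exact NOD k'
        have hrec : ∀ j', j' + 2 ≤ k' → t (j' + 2) = -t j' := by
          intro j' hj'
          have hped := PDE (k' - j' - 2) j' _ h00
          have hIH : (pdd ((1 : ℝ), (0 : ℝ)))^[k' - j' - 2]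
              ((pdd ((0 : ℝ), (1 : ℝ)))^[j'] u) ((0 : ℝ), (0 : ℝ)) = 0 :=
            IH (k' - 2) (by omega) (by omega) (k' - j' - 2) j' (by omega)
          rw [hIH, mul_zero, add_zero] at hped
          have e1 : k' - j' - 2 + 2 = k' - j' := by omega
          rw [e1] at hped
          have e2 : k' - (j' + 2) = k' - j' - 2 := by omega
          simp only [ht_def, e2]
          linear_combination hped
        -- inner values of the expansion
        have hinner : ∀ m, m + 1 ≤ k' →
            (pdd ((1 : ℝ), (0 : ℝ)))^[k' - 1 - m] ((pdd ((0 : ℝ), (1 : ℝ)))^[m]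
              (pdd (-Real.sin θ₀, Real.cos θ₀) u)) ((0 : ℝ), (0 : ℝ))
            = -(Real.sin θ₀ : ℂ) * t m + (Real.cos θ₀ : ℂ) * t (m + 1) := by
          intro m hm
          have hν : pdd (-Real.sin θ₀, Real.cos θ₀) u
              = fun y => (-(Real.sin θ₀ : ℂ)) * pdd ((1 : ℝ), (0 : ℝ)) u y
                + ((Real.cos θ₀ : ℂ)) * pdd ((0 : ℝ), (1 : ℝ)) u y := by
            funext y
            have hd := pdd_dir (f := u) (-Real.sin θ₀) (Real.cos θ₀) y
            rw [Complex.ofReal_neg] at hd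
            exact hd
          rw [hν]
          have hl2 : Set.EqOn ((pdd ((0 : ℝ), (1 : ℝ)))^[m]
              (fun y => (-(Real.sin θ₀ : ℂ)) * pdd ((1 : ℝ), (0 : ℝ)) u y
                + ((Real.cos θ₀ : ℂ)) * pdd ((0 : ℝ), (1 : ℝ)) u y))
              (fun y => (-(Real.sin θ₀ : ℂ)) * (pdd ((0 : ℝ), (1 : ℝ)))^[m]
                  (pdd ((1 : ℝ), (0 : ℝ)) u) y
                + ((Real.cos θ₀ : ℂ)) * (pdd ((0 : ℝ), (1 : ℝ)))^[m]
                  (pdd ((0 : ℝ), (1 : ℝ)) u) y) Ω := fun y hy =>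
            pdd_iter_linear hΩ _ _ (pdd_analytic hu_an _) (pdd_analytic hu_an _)
              ((0 : ℝ), (1 : ℝ)) m y hy
          rw [pdd_iter_congr hΩ hl2 ((1 : ℝ), (0 : ℝ)) (k' - 1 - m) h00]
          rw [pdd_iter_linear hΩ _ _ (pdd_iter_analytic (pdd_analytic hu_an _) _ m)
            (pdd_iter_analytic (pdd_analytic hu_an _) _ m) ((1 : ℝ), (0 : ℝ)) (k' - 1 - m)
            _ h00]
          have hswap : Set.EqOn ((pdd ((0 : ℝ), (1 : ℝ)))^[m] (pdd ((1 : ℝ), (0 : ℝ)) u))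
              (pdd ((1 : ℝ), (0 : ℝ)) ((pdd ((0 : ℝ), (1 : ℝ)))^[m] u)) Ω := fun y hy =>
            (pdd_swap_iter hΩ hu_an ((0 : ℝ), (1 : ℝ)) ((1 : ℝ), (0 : ℝ)) m y hy).symm
          rw [pdd_iter_congr hΩ hswap ((1 : ℝ), (0 : ℝ)) (k' - 1 - m) h00,
            ← Function.iterate_succ_apply,
            ← Function.iterate_succ_apply (pdd ((0 : ℝ), (1 : ℝ))) m u]
          have e1 : k' - 1 - m + 1 = k' - m := by omega
          have e2 : k' - 1 - m = k' - (m + 1) := by omega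
          simp only [Nat.succ_eq_add_one, e1, e2, ht_def]
          rw [show k' - (m + 1) + 1 = k' - m by omega]
        -- the expansion of the singular condition
        have hexp := pdd_iter_expand hΩ (Real.cos θ₀) (Real.sin θ₀) (k' - 1)
          (pdd (-Real.sin θ₀, Real.cos θ₀) u) hν_an _ h00
        rw [SIN (k' - 1)] at hexp
        have hkk : k' - 1 + 1 = k' := by omega
        rw [hkk] at hexp
        have hsum : (0 : ℂ) = ∑ m ∈ Finset.range k', ((k' - 1).choose m : ℂ)
            * (Real.cos θ₀ : ℂ) ^ (k' - 1 - m) * (Real.sin θ₀ : ℂ) ^ m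
            * (-(Real.sin θ₀ : ℂ) * t m + (Real.cos θ₀ : ℂ) * t (m + 1)) := by
          rw [hexp]
          refine Finset.sum_congr rfl fun m hmm => ?_
          have hmk : m + 1 ≤ k' := Finset.mem_range.mp hmm
          rw [hinner m hmk]
        have halg := alg_sum k' hk1 t h0 hrec θ₀
        rw [← hsum] at halg
        have hcosne : Real.cos ((k' : ℝ) * θ₀) ≠ 0 := by
          rw [hθ₀]
          exact cos_ne_zero_of_alpha α hα n k' hk1 hk'n hαpq
        have ht1 : t 1 = 0 := by
          rcases mul_eq_zero.mp halg.symm with h' | h'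
          · exact h'
          · exact absurd (Complex.ofReal_eq_zero.mp h') hcosne
        have htw : ∀ m, m ≤ k' → t m = t 1 * wI m := by
          intro m
          induction m using Nat.strong_induction_on with
          | _ m ihm =>
            match m with
            | 0 => intro _; rw [h0, wI_zero]; ring
            | 1 => intro _; rw [wI_one]; ring
            | (m + 2) =>
              intro hmk
              rw [hrec m hmk, ihm m (by omega) (by omega), wI_rec]
              ring
        have hCij : i = k' - j := by omega
        have : t j = 0 := by rw [htw j (by omega), ht1]; ring
        rw [hCij]
        exact this
  -- conclude via the basis
  intro k hkn
  have hvals : ∀ v : Fin k → Fin 2,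
      iteratedFDeriv ℝ k u (0, 0) (fun s => (Module.Basis.finTwoProd ℝ) (v s)) = 0 := by
    intro v
    have hbv : (fun s => (Module.Basis.finTwoProd ℝ) (v s))
        = (fun s => (![((1 : ℝ), (0 : ℝ)), ((0 : ℝ), (1 : ℝ))] : Fin 2 → ℝ × ℝ) (v s)) := by
      funext s
      have hba : ∀ a : Fin 2, (Module.Basis.finTwoProd ℝ) a
          = (![((1 : ℝ), (0 : ℝ)), ((0 : ℝ), (1 : ℝ))] : Fin 2 → ℝ × ℝ) a := by
        intro a
        fin_cases a <;> simp
      exact hba (v s)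
    rw [hbv, bridge hΩ u hu_an ((0 : ℝ), (0 : ℝ)) h00]
    obtain ⟨i, j, hij, hmx⟩ := mix_basis hΩ v u hu_an _ h00
    rw [hmx]
    exact KEY k hkn i j hij
  have hml : (iteratedFDeriv ℝ k u (0, 0)).toMultilinearMap
      = (0 : ContinuousMultilinearMap ℝ (fun _ : Fin k => ℝ × ℝ) ℂ).toMultilinearMap :=
    Module.Basis.ext_multilinear (fun _ => Module.Basis.finTwoProd ℝ) fun v => by simpa using hvals v
  ext m
  exact DFunLike.congr_fun hml m
end

section
/- Let Ω, λ, u, h, Γ_h^−, Γ_h^+, ν⁻, ν⁺ be as in the context, where now θ₀ = απ with α ∈ (0,2) irrational. Suppose Γ_h^− and Γ_h^+ are generalized singular lines of u with constant parameters C₁, C₂ ∈ ℂ respectively, i.e., ∇u(x)·ν⁻ + C₁·u(x) = 0 for all x ∈ Γ_h^− and ∇u(x)·ν⁺ + C₂·u(x) = 0 for all x ∈ Γ_h^+. Then: if u(0) = 0, every partial derivative of u of every order vanishes at 0 (infinite vanishing order); if u(0) ≠ 0, the vanishing order of u at 0 is 0. -/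
open Complex

namespace Stmt9Aux

noncomputable def Dv (v : ℝ × ℝ) (f : ℝ × ℝ → ℂ) : ℝ × ℝ → ℂ := fun x => fderiv ℝ f x v

noncomputable def DL : List (ℝ × ℝ) → (ℝ × ℝ → ℂ) → ℝ × ℝ → ℂ
  | [], f => f
  | v :: l, f => Dv v (DL l f)

lemma an_Dv {B : Set (ℝ × ℝ)} {f : ℝ × ℝ → ℂ} (hf : AnalyticOnNhd ℝ f B) (v : ℝ × ℝ) :
    AnalyticOnNhd ℝ (Dv v f) B := by
  intro x hx
  have h1 : AnalyticAt ℝ (fderiv ℝ f) x := (hf x hx).fderiv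
  exact ((ContinuousLinearMap.apply ℝ ℂ v).analyticAt _).comp h1

lemma an_DL {B : Set (ℝ × ℝ)} {f : ℝ × ℝ → ℂ} (hf : AnalyticOnNhd ℝ f B)
    (l : List (ℝ × ℝ)) : AnalyticOnNhd ℝ (DL l f) B := by
  induction l with
  | nil => exact hf
  | cons v l ih => exact an_Dv ih v

lemma dl_append (l₁ l₂ : List (ℝ × ℝ)) (f : ℝ × ℝ → ℂ) :
    DL (l₁ ++ l₂) f = DL l₁ (DL l₂ f) := by
  induction l₁ with
  | nil => rfl
  | cons v l ih =>
    show Dv v (DL (l ++ l₂) f) = Dv v (DL l (DL l₂ f))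
    rw [ih]

lemma dv_congr {B : Set (ℝ × ℝ)} (hB : IsOpen B) {f g : ℝ × ℝ → ℂ}
    (hfg : Set.EqOn f g B) {x : ℝ × ℝ} (hx : x ∈ B) (v : ℝ × ℝ) :
    Dv v f x = Dv v g x := by
  have h : f =ᶠ[nhds x] g := Filter.eventuallyEq_of_mem (hB.mem_nhds hx) hfg
  simp only [Dv, h.fderiv_eq]

lemma dl_congr {B : Set (ℝ × ℝ)} (hB : IsOpen B) {f g : ℝ × ℝ → ℂ}
    (hfg : Set.EqOn f g B) (l : List (ℝ × ℝ)) :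
    Set.EqOn (DL l f) (DL l g) B := by
  induction l with
  | nil => exact hfg
  | cons v l ih => exact fun x hx => dv_congr hB ih hx v

lemma dl_zero (l : List (ℝ × ℝ)) (x : ℝ × ℝ) : DL l (fun _ => (0 : ℂ)) x = 0 := by
  induction l generalizing x with
  | nil => rfl
  | cons v l ih =>
    have : DL l (fun _ => (0 : ℂ)) = fun _ => (0 : ℂ) := funext fun y => ih y
    simp only [DL, this, Dv, fderiv_const]
    simp

lemma dv_add {f g : ℝ × ℝ → ℂ} {x : ℝ × ℝ} (hf : DifferentiableAt ℝ f x)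
    (hg : DifferentiableAt ℝ g x) (v : ℝ × ℝ) :
    Dv v (fun y => f y + g y) x = Dv v f x + Dv v g x := by
  simp only [Dv, fderiv_fun_add hf hg]
  simp

lemma dv_smul {f : ℝ × ℝ → ℂ} {x : ℝ × ℝ} (hf : DifferentiableAt ℝ f x) (c : ℂ) (v : ℝ × ℝ) :
    Dv v (fun y => c • f y) x = c • Dv v f x := by
  simp only [Dv, fderiv_fun_const_smul hf]
  simp

lemma dv_comm {B : Set (ℝ × ℝ)} (hB : IsOpen B) {f : ℝ × ℝ → ℂ}
    (hf : AnalyticOnNhd ℝ f B) {x : ℝ × ℝ} (hx : x ∈ B) (v w : ℝ × ℝ) :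
    Dv v (Dv w f) x = Dv w (Dv v f) x := by
  have hF : AnalyticAt ℝ (fderiv ℝ f) x := (hf x hx).fderiv
  have hFd : DifferentiableAt ℝ (fderiv ℝ f) x := hF.differentiableAt
  have key : ∀ a b : ℝ × ℝ, Dv a (Dv b f) x = fderiv ℝ (fderiv ℝ f) x a b := by
    intro a b
    rw [show Dv a (Dv b f) x = fderiv ℝ (fun y => (fderiv ℝ f y) b) x a from rfl]
    rw [fderiv_clm_apply hFd (differentiableAt_const b)]
    simp
  have hev : ∀ᶠ y in nhds x, HasFDerivAt f (fderiv ℝ f y) y := by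
    filter_upwards [hB.mem_nhds hx] with y hy using ((hf y hy).differentiableAt).hasFDerivAt
  have hsym := second_derivative_symmetric_of_eventually hev hFd.hasFDerivAt v w
  rw [key v w, key w v, hsym]

lemma dl_add {B : Set (ℝ × ℝ)} (hB : IsOpen B) {f g : ℝ × ℝ → ℂ}
    (hf : AnalyticOnNhd ℝ f B) (hg : AnalyticOnNhd ℝ g B) (l : List (ℝ × ℝ)) :
    ∀ x ∈ B, DL l (fun y => f y + g y) x = DL l f x + DL l g x := by
  induction l with
  | nil => intro x _; rfl
  | cons v l ih =>
    intro x hx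
    have h1 : Dv v (DL l (fun y => f y + g y)) x
        = Dv v (fun y => DL l f y + DL l g y) x :=
      dv_congr hB (fun y hy => ih y hy) hx v
    show Dv v (DL l (fun y => f y + g y)) x = _
    rw [h1, dv_add ((an_DL hf l x hx).differentiableAt) ((an_DL hg l x hx).differentiableAt)]
    rfl

lemma dl_smul {B : Set (ℝ × ℝ)} (hB : IsOpen B) {f : ℝ × ℝ → ℂ}
    (hf : AnalyticOnNhd ℝ f B) (c : ℂ) (l : List (ℝ × ℝ)) :
    ∀ x ∈ B, DL l (fun y => c • f y) x = c • DL l f x := by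
  induction l with
  | nil => intro x _; rfl
  | cons v l ih =>
    intro x hx
    have h1 : Dv v (DL l (fun y => c • f y)) x
        = Dv v (fun y => c • DL l f y) x :=
      dv_congr hB (fun y hy => ih y hy) hx v
    show Dv v (DL l (fun y => c • f y)) x = _
    rw [h1, dv_smul ((an_DL hf l x hx).differentiableAt) c]
    rfl

lemma dl_comm_rep {B : Set (ℝ × ℝ)} (hB : IsOpen B) {f : ℝ × ℝ → ℂ}
    (hf : AnalyticOnNhd ℝ f B) (j : ℕ) (v w : ℝ × ℝ) :
    ∀ x ∈ B, Dv w (DL (List.replicate j v) f) x = DL (List.replicate j v) (Dv w f) x := by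
  induction j with
  | zero => intro x _; rfl
  | succ j ih =>
    intro x hx
    show Dv w (Dv v (DL (List.replicate j v) f)) x = Dv v (DL (List.replicate j v) (Dv w f)) x
    rw [dv_comm hB (an_DL hf _) hx w v]
    exact dv_congr hB (fun y hy => ih y hy) hx v

def E1 : ℝ × ℝ := (1, 0)
def E2 : ℝ × ℝ := (0, 1)

noncomputable def basis : Fin 2 → ℝ × ℝ := fun j => if j = 0 then E1 else E2

lemma fin2_count (bs : List (Fin 2)) : bs.count 0 + bs.count 1 = bs.length := by
  induction bs with
  | nil => simp
  | cons a bs ih =>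
    rcases Fin.exists_fin_two.mp ⟨a, rfl⟩ with h | h <;>
      · subst h
        simp [List.count_cons]
        omega

lemma dl_sort {B : Set (ℝ × ℝ)} (hB : IsOpen B) {f : ℝ × ℝ → ℂ}
    (hf : AnalyticOnNhd ℝ f B) :
    ∀ (bs : List (Fin 2)), ∀ x ∈ B, DL (bs.map basis) f x
      = DL (List.replicate (bs.count 0) E1) (DL (List.replicate (bs.count 1) E2) f) x := by
  intro bs
  induction bs with
  | nil => intro x _; rfl
  | cons a bs ih =>
    intro x hx
    rcases Fin.exists_fin_two.mp ⟨a, rfl⟩ with h | h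
    · subst h
      show Dv E1 (DL (bs.map basis) f) x = _
      rw [dv_congr hB (fun y hy => ih y hy) hx E1]
      simp only [List.count_cons_self, List.count_cons_of_ne (by decide : (0 : Fin 2) ≠ 1)]
      rfl
    · subst h
      show Dv E2 (DL (bs.map basis) f) x = _
      rw [dv_congr hB (fun y hy => ih y hy) hx E2]
      have hcomm := dl_comm_rep hB (an_DL hf (List.replicate (bs.count 1) E2))
        (bs.count 0) E1 E2 x hx
      simp only [List.count_cons_self, List.count_cons_of_ne (by decide : (1 : Fin 2) ≠ 0)]
      exact hcomm

lemma itfd_eq_dl {B : Set (ℝ × ℝ)} (hB : IsOpen B) {f : ℝ × ℝ → ℂ}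
    (hf : AnalyticOnNhd ℝ f B) :
    ∀ (n : ℕ) (x : ℝ × ℝ), x ∈ B → ∀ v : Fin n → ℝ × ℝ,
      iteratedFDeriv ℝ n f x v = DL (List.ofFn v) f x := by
  intro n
  induction n with
  | zero =>
    intro x hx v
    simp only [iteratedFDeriv_zero_apply, List.ofFn_zero]
    rfl
  | succ n ih =>
    intro x hx v
    rw [iteratedFDeriv_succ_apply_left]
    have hΦ : AnalyticOnNhd ℝ (iteratedFDeriv ℝ n f) B := hf.iteratedFDeriv n
    have hΦd : DifferentiableAt ℝ (iteratedFDeriv ℝ n f) x := (hΦ x hx).differentiableAt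
    set m : Fin n → ℝ × ℝ := Fin.tail v with hm
    have step1 : (fderiv ℝ (iteratedFDeriv ℝ n f) x (v 0)) m
        = fderiv ℝ (fun y => iteratedFDeriv ℝ n f y m) x (v 0) := by
      have hcomp : (fun y => iteratedFDeriv ℝ n f y m)
          = (ContinuousMultilinearMap.apply ℝ (fun _ : Fin n => ℝ × ℝ) ℂ m)
            ∘ (iteratedFDeriv ℝ n f) := rfl
      rw [hcomp, fderiv_comp x ((ContinuousMultilinearMap.apply ℝ
        (fun _ : Fin n => ℝ × ℝ) ℂ m).differentiableAt) hΦd,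
        ContinuousLinearMap.fderiv]
      rfl
    have step2 : fderiv ℝ (fun y => iteratedFDeriv ℝ n f y m) x
        = fderiv ℝ (DL (List.ofFn m) f) x := by
      apply Filter.EventuallyEq.fderiv_eq
      exact Filter.eventuallyEq_of_mem (hB.mem_nhds hx) (fun y hy => ih y hy m)
    rw [step1, step2]
    rw [List.ofFn_succ]
    rfl

def Bset (h : ℝ) : Set (ℝ × ℝ) := {x : ℝ × ℝ | x.1 ^ 2 + x.2 ^ 2 < h ^ 2}

lemma bset_open (h : ℝ) : IsOpen (Bset h) := by
  have : Bset h = (fun x : ℝ × ℝ => x.1 ^ 2 + x.2 ^ 2) ⁻¹' (Set.Iio (h ^ 2)) := rfl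
  rw [this]
  exact (by fun_prop : Continuous (fun x : ℝ × ℝ => x.1 ^ 2 + x.2 ^ 2)).isOpen_preimage _ isOpen_Iio

lemma bset_zero {h : ℝ} (hh : 0 < h) : (0 : ℝ × ℝ) ∈ Bset h := by
  simp only [Bset, Set.mem_setOf_eq, Prod.fst_zero, Prod.snd_zero]
  norm_num
  positivity

lemma bset_mem {h : ℝ} (hh : 0 < h) {e : ℝ × ℝ} (he : e.1 ^ 2 + e.2 ^ 2 = 1)
    {r : ℝ} (hr : r ∈ Set.Ioo (-h) h) : r • e ∈ Bset h := by
  simp only [Bset, Set.mem_setOf_eq, Prod.smul_fst, Prod.smul_snd, smul_eq_mul]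
  have h1 : (r * e.1) ^ 2 + (r * e.2) ^ 2 = r ^ 2 * (e.1 ^ 2 + e.2 ^ 2) := by ring
  rw [h1, he, mul_one]
  exact sq_lt_sq' (by linarith [hr.1]) hr.2

lemma line_vanish {h : ℝ} (hh : 0 < h) {f : ℝ × ℝ → ℂ}
    (hf : AnalyticOnNhd ℝ f (Bset h)) {e : ℝ × ℝ} (he : e.1 ^ 2 + e.2 ^ 2 = 1)
    (hz : ∀ r : ℝ, 0 ≤ r → r ≤ h → f (r • e) = 0) :
    ∀ n : ℕ, DL (List.replicate n e) f 0 = 0 := by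
  have hmem : ∀ r ∈ Set.Ioo (-h) h, r • e ∈ Bset h := fun r hr => bset_mem hh he hr
  have hγ : AnalyticOnNhd ℝ (fun r : ℝ => r • e) (Set.Ioo (-h) h) := by
    intro r _
    have : (fun r : ℝ => r • e) = (ContinuousLinearMap.toSpanSingleton ℝ e) := by
      funext t; simp [ContinuousLinearMap.toSpanSingleton_apply]
    rw [this]
    exact (ContinuousLinearMap.toSpanSingleton ℝ e).analyticAt r
  have key : ∀ n : ℕ, ∀ r ∈ Set.Ioo (-h) h, DL (List.replicate n e) f (r • e) = 0 := by
    intro n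
    induction n with
    | zero =>
      have hg : AnalyticOnNhd ℝ (fun r : ℝ => f (r • e)) (Set.Ioo (-h) h) :=
        hf.comp hγ hmem
      have h2 : h / 2 ∈ Set.Ioo (-h) h := by constructor <;> linarith
      have hev : (fun r : ℝ => f (r • e)) =ᶠ[nhds (h / 2)] 0 := by
        filter_upwards [isOpen_Ioo.mem_nhds (show h / 2 ∈ Set.Ioo 0 h by
          constructor <;> linarith)] with r hr
        exact hz r (le_of_lt hr.1) (le_of_lt hr.2)
      have := hg.eqOn_zero_of_preconnected_of_eventuallyEq_zero isPreconnected_Ioo h2 hev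
      intro r hr
      exact this hr
    | succ n ih =>
      intro r hr
      have hD : HasDerivAt (fun t : ℝ => DL (List.replicate n e) f (t • e))
          (fderiv ℝ (DL (List.replicate n e) f) (r • e) e) r := by
        have h1 : HasFDerivAt (DL (List.replicate n e) f)
            (fderiv ℝ (DL (List.replicate n e) f) (r • e)) (r • e) :=
          ((an_DL hf (List.replicate n e)) _ (hmem r hr)).differentiableAt.hasFDerivAt
        have h2 : HasDerivAt (fun t : ℝ => t • e) e r := by
          simpa using (hasDerivAt_id r).smul_const e
        exact h1.comp_hasDerivAt r h2
      have hev : (fun t : ℝ => DL (List.replicate n e) f (t • e)) =ᶠ[nhds r]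
          (fun _ => (0 : ℂ)) := by
        filter_upwards [isOpen_Ioo.mem_nhds hr] with t ht
        exact ih t ht
      have h0 : HasDerivAt (fun t : ℝ => DL (List.replicate n e) f (t • e)) 0 r :=
        (hasDerivAt_const r (0 : ℂ)).congr_of_eventuallyEq hev
      have huniq := h0.unique hD
      show Dv e (DL (List.replicate n e) f) (r • e) = 0
      simp only [Dv]
      rw [← huniq]
  have h0 : (0 : ℝ) ∈ Set.Ioo (-h) h := by constructor <;> linarith
  intro n
  have := key n 0 h0
  rwa [zero_smul] at this

lemma an_const_smul {B : Set (ℝ × ℝ)} {f : ℝ × ℝ → ℂ} (hf : AnalyticOnNhd ℝ f B) (c : ℂ) :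
    AnalyticOnNhd ℝ (fun x => c • f x) B := by
  have h1 : AnalyticOnNhd ℝ (fun _ : ℝ × ℝ => c) B := analyticOnNhd_const
  exact h1.smul hf

lemma pow_count (l : List (Fin 2)) (z : ℂ) :
    z ^ l.count 1 = (l.map fun j => if j = 1 then z else 1).prod := by
  induction l with
  | nil => simp
  | cons a bs ih =>
    rcases Fin.exists_fin_two.mp ⟨a, rfl⟩ with hh | hh
    · subst hh
      rw [List.count_cons_of_ne (by decide : (0 : Fin 2) ≠ 1)]
      simp only [List.map_cons, List.prod_cons, if_neg (by decide : ¬ (0 : Fin 2) = 1), one_mul]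
      exact ih
    · subst hh
      rw [List.count_cons_self]
      simp only [List.map_cons, List.prod_cons, if_pos rfl, pow_succ]
      rw [ih]; rw [if_pos trivial, mul_comm]

lemma ofFn_snoc {n : ℕ} (f : Fin n → ℝ × ℝ) (a : ℝ × ℝ) :
    List.ofFn (Fin.snoc f a) = List.ofFn f ++ [a] := by
  rw [List.ofFn_succ']
  simp [Fin.snoc_castSucc, Fin.snoc_last, List.concat_eq_append, Function.comp]

end Stmt9Aux

open Stmt9Aux

/-- Two generalized singular lines (constant parameters `C₁, C₂`) intersecting at the origin
at an irrational angle `θ₀ = απ`, `α ∈ (0,2)` irrational: if `u 0 = 0` the vanishing order is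
infinite; if `u 0 ≠ 0` the vanishing order is `0`. -/
theorem stmt9
    (Ω : Set (ℝ × ℝ)) (hΩ : IsOpen Ω)
    (lam : ℝ) (hlam : 0 < lam)
    (u : ℝ × ℝ → ℂ)
    (hu_an : AnalyticOnNhd ℝ u Ω)
    (hu_eq : ∀ x ∈ Ω, pd1 (pd1 u) x + pd2 (pd2 u) x + (lam : ℂ) * u x = 0)
    (α : ℝ) (hα : α ∈ Set.Ioo (0 : ℝ) 2) (hirr : Irrational α)
    (θ₀ : ℝ) (hθ₀ : θ₀ = α * Real.pi)
    (h : ℝ) (hh : 0 < h)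
    (hdisk : ∀ x : ℝ × ℝ, x.1 ^ 2 + x.2 ^ 2 ≤ h ^ 2 → x ∈ Ω)
    (C₁ C₂ : ℂ)
    (hbc₁ : ∀ r : ℝ, 0 ≤ r → r ≤ h →
      fderiv ℝ u (r, 0) (0, -1) + C₁ * u (r, 0) = 0)
    (hbc₂ : ∀ r : ℝ, 0 ≤ r → r ≤ h →
      fderiv ℝ u (r * Real.cos θ₀, r * Real.sin θ₀) (-Real.sin θ₀, Real.cos θ₀)
        + C₂ * u (r * Real.cos θ₀, r * Real.sin θ₀) = 0) :
    (u (0, 0) = 0 → ∀ k : ℕ, iteratedFDeriv ℝ k u (0, 0) = 0) ∧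
    (u (0, 0) ≠ 0 → iteratedFDeriv ℝ 0 u (0, 0) ≠ 0) := by
  classical
  constructor
  · intro hu0
    have hB : IsOpen (Bset h) := bset_open h
    have hB0 : (0 : ℝ × ℝ) ∈ Bset h := bset_zero hh
    have hBΩ : Bset h ⊆ Ω := fun x hx => hdisk x (le_of_lt hx)
    have huB : AnalyticOnNhd ℝ u (Bset h) := fun x hx => hu_an x (hBΩ hx)
    have anDL : ∀ l, AnalyticOnNhd ℝ (DL l u) (Bset h) := fun l => an_DL huB l
    set q : ℕ → ℕ → ℂ := fun j k =>
      DL (List.replicate j E1) (DL (List.replicate k E2) u) 0 with hqdef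
    -- sorting into q-form
    have hsort : ∀ bs : List (Fin 2), DL (bs.map basis) u 0
        = q (bs.count 0) (bs.count 1) := by
      intro bs
      rw [hqdef]
      exact dl_sort hB huB bs 0 hB0
    -- PDE relations
    have hPDE : ∀ j k : ℕ, q (j + 2) k + q j (k + 2) + (lam : ℂ) • q j k = 0 := by
      intro j k
      have hwan2 : AnalyticOnNhd ℝ (fun x => DL [E2, E2] u x + (lam : ℂ) • u x) (Bset h) :=
        (anDL [E2, E2]).add (an_const_smul huB _)
      have hw0 : Set.EqOn (fun x => DL [E1, E1] u x + (DL [E2, E2] u x + (lam : ℂ) • u x))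
          (fun _ => (0 : ℂ)) (Bset h) := by
        intro x hx
        have h1 := hu_eq x (hBΩ hx)
        show DL [E1, E1] u x + (DL [E2, E2] u x + (lam : ℂ) • u x) = 0
        rw [← add_assoc]
        calc DL [E1, E1] u x + DL [E2, E2] u x + (lam : ℂ) • u x
            = pd1 (pd1 u) x + pd2 (pd2 u) x + (lam : ℂ) * u x := by rw [smul_eq_mul]; rfl
          _ = 0 := h1
      set L := List.replicate j E1 ++ List.replicate k E2 with hL
      have hzL : DL L (fun x => DL [E1, E1] u x + (DL [E2, E2] u x + (lam : ℂ) • u x)) 0 = 0 := by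
        rw [dl_congr hB hw0 L hB0]
        exact dl_zero L 0
      have s1 := dl_add hB (anDL [E1, E1]) hwan2 L 0 hB0
      have s2 := dl_add (g := fun x => (lam : ℂ) • u x) hB (anDL [E2, E2]) (an_const_smul huB ((lam : ℂ))) L 0 hB0
      have s3 := dl_smul hB huB (lam : ℂ) L 0 hB0
      rw [s1, s2, s3] at hzL
      have t1 : DL L (DL [E1, E1] u) 0 = q (j + 2) k := by
        have h1 : DL L (DL [E1, E1] u) 0 = DL (L ++ [E1, E1]) u 0 := (congrFun (dl_append L [E1, E1] u) 0).symm
        have h2 : L ++ [E1, E1]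
            = (List.replicate j (0 : Fin 2) ++ List.replicate k 1 ++ [0, 0]).map basis := by
          simp only [List.map_append, List.map_replicate, List.map_cons, List.map_nil, hL]
          norm_num [basis]
        have h3 : (List.replicate j (0 : Fin 2) ++ List.replicate k 1 ++ [0, 0]).count 0
            = j + 2 := by
          simp [List.count_append, List.count_replicate]
        have h4 : (List.replicate j (0 : Fin 2) ++ List.replicate k 1 ++ [0, 0]).count 1 = k := by
          simp [List.count_append, List.count_replicate]
        rw [h1, h2, hsort, h3, h4]
      have t2 : DL L (DL [E2, E2] u) 0 = q j (k + 2) := by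
        have h1 : DL L (DL [E2, E2] u) 0 = DL (L ++ [E2, E2]) u 0 := (congrFun (dl_append L [E2, E2] u) 0).symm
        have h2 : L ++ [E2, E2]
            = (List.replicate j (0 : Fin 2) ++ List.replicate k 1 ++ [1, 1]).map basis := by
          simp only [List.map_append, List.map_replicate, List.map_cons, List.map_nil, hL]
          norm_num [basis]
        have h3 : (List.replicate j (0 : Fin 2) ++ List.replicate k 1 ++ [1, 1]).count 0 = j := by
          simp [List.count_append, List.count_replicate]
        have h4 : (List.replicate j (0 : Fin 2) ++ List.replicate k 1 ++ [1, 1]).count 1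
            = k + 2 := by
          simp [List.count_append, List.count_replicate]
        rw [h1, h2, hsort, h3, h4]
      have t3 : DL L u 0 = q j k :=
        congrFun (dl_append (List.replicate j E1) (List.replicate k E2) u) 0
      rw [t1, t2, t3] at hzL
      rw [add_assoc]
      exact hzL
    -- boundary condition on Γ⁻
    have hE1bc : ∀ t : ℕ, q t 1 = C₁ • q t 0 := by
      have hf₁an : AnalyticOnNhd ℝ (fun x => Dv ((0 : ℝ), (-1 : ℝ)) u x + C₁ • u x) (Bset h) :=
        (an_Dv huB _).add (an_const_smul huB _)
      have hz : ∀ r : ℝ, 0 ≤ r → r ≤ h →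
          (fun x => Dv ((0 : ℝ), (-1 : ℝ)) u x + C₁ • u x) (r • E1) = 0 := by
        intro r h0 h1
        have hre : r • E1 = ((r : ℝ), (0 : ℝ)) := by
          simp [E1, Prod.smul_def]
        rw [hre]
        simpa [Dv, smul_eq_mul] using hbc₁ r h0 h1
      have hE1sq : (E1.1) ^ 2 + (E1.2) ^ 2 = 1 := by norm_num [E1]
      have hlv := line_vanish hh hf₁an hE1sq hz
      intro t
      have h0' := hlv t
      rw [dl_add hB (an_Dv huB _) (an_const_smul huB _) _ 0 hB0,
        dl_smul hB huB C₁ _ 0 hB0] at h0'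
      have hneg : Dv ((0 : ℝ), (-1 : ℝ)) u = fun x => (-1 : ℂ) • Dv E2 u x := by
        funext x
        show fderiv ℝ u x ((0 : ℝ), (-1 : ℝ)) = (-1 : ℂ) • fderiv ℝ u x ((0 : ℝ), (1 : ℝ))
        have hv : ((0 : ℝ), (-1 : ℝ)) = -((0 : ℝ), (1 : ℝ)) := by
          simp [Prod.ext_iff]
        rw [hv, map_neg]
        simp
      rw [hneg, dl_smul hB (an_Dv huB E2) (-1 : ℂ) _ 0 hB0] at h0'
      have hq1 : DL (List.replicate t E1) (Dv E2 u) 0 = q t 1 := rfl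
      have hq0 : DL (List.replicate t E1) u 0 = q t 0 := rfl
      rw [hq1, hq0] at h0'
      rw [neg_one_smul] at h0'
      exact neg_add_eq_zero.mp h0' 
    -- boundary condition on Γ⁺
    have hE2bc : ∀ t : ℕ,
        DL (List.replicate t (Real.cos θ₀, Real.sin θ₀))
          (Dv (-Real.sin θ₀, Real.cos θ₀) u) 0
        + C₂ • DL (List.replicate t (Real.cos θ₀, Real.sin θ₀)) u 0 = 0 := by
      have hf₂an : AnalyticOnNhd ℝ
          (fun x => Dv (-Real.sin θ₀, Real.cos θ₀) u x + C₂ • u x) (Bset h) :=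
        (an_Dv huB _).add (an_const_smul huB _)
      have hz : ∀ r : ℝ, 0 ≤ r → r ≤ h →
          (fun x => Dv (-Real.sin θ₀, Real.cos θ₀) u x + C₂ • u x)
            (r • ((Real.cos θ₀, Real.sin θ₀) : ℝ × ℝ)) = 0 := by
        intro r h0 h1
        have hre : r • ((Real.cos θ₀, Real.sin θ₀) : ℝ × ℝ)
            = (r * Real.cos θ₀, r * Real.sin θ₀) := by
          simp [Prod.smul_def]
        rw [hre]
        simpa [Dv, smul_eq_mul] using hbc₂ r h0 h1
      have hesq : ((Real.cos θ₀, Real.sin θ₀) : ℝ × ℝ).1 ^ 2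
          + ((Real.cos θ₀, Real.sin θ₀) : ℝ × ℝ).2 ^ 2 = 1 := by
        simpa using Real.cos_sq_add_sin_sq θ₀
      have hlv := line_vanish hh hf₂an hesq hz
      intro t
      have h0' := hlv t
      rwa [dl_add hB (an_Dv huB _) (an_const_smul huB _) _ 0 hB0,
        dl_smul hB huB C₂ _ 0 hB0] at h0'
    -- multilinear expansion
    have hexpand : ∀ (n : ℕ) (v : Fin n → ℝ × ℝ),
        iteratedFDeriv ℝ n u 0 v
          = ∑ p : Fin n → Fin 2,
              (∏ i, (if p i = 0 then (v i).1 else (v i).2)) •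
                q ((List.ofFn p).count 0) ((List.ofFn p).count 1) := by
      intro n v
      have hv : v = fun i => ∑ j : Fin 2, (if j = 0 then (v i).1 else (v i).2) • basis j := by
        funext i
        simp [Fin.sum_univ_two, basis, E1, E2, Prod.ext_iff]
      conv_lhs => rw [hv]
      rw [(iteratedFDeriv ℝ n u 0).map_sum
        (g := fun i j => (if j = 0 then (v i).1 else (v i).2) • basis j)]
      refine Finset.sum_congr rfl fun p _ => ?_
      rw [(iteratedFDeriv ℝ n u 0).map_smul_univ
        (fun i => if p i = 0 then (v i).1 else (v i).2) (fun i => basis (p i))]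
      congr 1
      rw [itfd_eq_dl hB huB n 0 hB0 (fun i => basis (p i)), ← hsort (List.ofFn p)]
      congr 1
      rw [List.map_ofFn]
      rfl
    -- the main induction
    have main : ∀ n : ℕ, ∀ j k : ℕ, j + k = n → q j k = 0 := by
      intro n
      induction n using Nat.strong_induction_on with
      | _ n IH =>
      match n, IH with
      | 0, _ =>
        intro j k hjk
        obtain ⟨rfl, rfl⟩ : j = 0 ∧ k = 0 := by omega
        show u 0 = 0
        exact hu0
      | (m + 1), IH =>
        have hB0' : q m 1 = 0 := by
          rw [hE1bc m, IH m (by omega) m 0 rfl, smul_zero]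
        have stepB : ∀ k j : ℕ, j + k = m + 1 → q j k = ((Complex.I ^ k).re) • q (m + 1) 0 := by
          intro k
          induction k using Nat.twoStepInduction with
          | zero =>
            intro j hj
            obtain rfl : j = m + 1 := by omega
            simp
          | one =>
            intro j hj
            obtain rfl : j = m := by omega
            simp [hB0', Complex.I_re]
          | more k ihk _ =>
            intro j hj
            have h1 : q j k = 0 := IH (j + k) (by omega) j k rfl
            have h2 : q (j + 2) k = ((Complex.I ^ k).re) • q (m + 1) 0 :=
              ihk (j + 2) (by omega)
            have h3 := hPDE j k
            rw [h1, smul_zero, add_zero] at h3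
            have h4 : q j (k + 2) = -q (j + 2) k := by linear_combination h3
            have h5 : (Complex.I ^ (k + 2)).re = -(Complex.I ^ k).re := by
              rw [pow_add, Complex.I_sq]
              simp
            rw [h4, h2, h5, neg_smul]
        -- T2 : pure e-derivatives of order m vanish
        have hT2 : DL (List.replicate m ((Real.cos θ₀, Real.sin θ₀) : ℝ × ℝ)) u 0 = 0 := by
          have h1 := itfd_eq_dl hB huB m 0 hB0 (fun _ => ((Real.cos θ₀, Real.sin θ₀) : ℝ × ℝ))
          rw [List.ofFn_const] at h1
          rw [← h1, hexpand m (fun _ => ((Real.cos θ₀, Real.sin θ₀) : ℝ × ℝ))]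
          apply Finset.sum_eq_zero
          intro p _
          rw [IH ((List.ofFn p).count 0 + (List.ofFn p).count 1)
            (by rw [fin2_count, List.length_ofFn]; omega) _ _ rfl, smul_zero]
        -- T1 : order-(m+1) term
        set vv : Fin (m + 1) → ℝ × ℝ :=
          Fin.snoc (fun _ : Fin m => ((Real.cos θ₀, Real.sin θ₀) : ℝ × ℝ))
            ((-Real.sin θ₀, Real.cos θ₀) : ℝ × ℝ) with hvv
        have hT1a : DL (List.replicate m ((Real.cos θ₀, Real.sin θ₀) : ℝ × ℝ))
            (Dv (-Real.sin θ₀, Real.cos θ₀) u) 0 = iteratedFDeriv ℝ (m + 1) u 0 vv := by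
          have h1 := itfd_eq_dl hB huB (m + 1) 0 hB0 vv
          have h2 : List.ofFn vv = List.replicate m ((Real.cos θ₀, Real.sin θ₀) : ℝ × ℝ)
              ++ [((-Real.sin θ₀, Real.cos θ₀) : ℝ × ℝ)] := by
            rw [hvv, ofFn_snoc, List.ofFn_const]
          rw [h1, h2]
          exact (congrFun (dl_append (List.replicate m ((Real.cos θ₀, Real.sin θ₀) : ℝ × ℝ))
            [((-Real.sin θ₀, Real.cos θ₀) : ℝ × ℝ)] u) 0).symm
        have hT1b : iteratedFDeriv ℝ (m + 1) u 0 vv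
            = (∑ p : Fin (m + 1) → Fin 2,
                (∏ i, (if p i = 0 then (vv i).1 else (vv i).2))
                  * (Complex.I ^ ((List.ofFn p).count 1)).re) • q (m + 1) 0 := by
          rw [hexpand (m + 1) vv, Finset.sum_smul]
          refine Finset.sum_congr rfl fun p _ => ?_
          rw [stepB ((List.ofFn p).count 1) ((List.ofFn p).count 0)
            (by rw [fin2_count, List.length_ofFn]), smul_smul]
        -- compute the scalar
        have hscal : (∑ p : Fin (m + 1) → Fin 2,
              (∏ i, (if p i = 0 then (vv i).1 else (vv i).2))
                * (Complex.I ^ ((List.ofFn p).count 1)).re)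
            = -Real.sin ((m + 1) * θ₀) := by
          have hterm : ∀ p : Fin (m + 1) → Fin 2,
              ((∏ i, (if p i = 0 then (vv i).1 else (vv i).2))
                * (Complex.I ^ ((List.ofFn p).count 1)).re : ℝ)
              = (∏ i, (((if p i = 0 then (vv i).1 else (vv i).2) : ℝ) : ℂ)
                  * (if p i = 1 then Complex.I else 1)).re := by
            intro p
            have hIp : (Complex.I : ℂ) ^ ((List.ofFn p).count 1)
                = ∏ i, (if p i = 1 then Complex.I else 1) := by
              rw [pow_count (List.ofFn p) Complex.I, List.map_ofFn, List.prod_ofFn]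
              rfl
            rw [hIp, Finset.prod_mul_distrib, Complex.mul_re, ← Complex.ofReal_prod,
              Complex.ofReal_re, Complex.ofReal_im]
            ring
          rw [Finset.sum_congr rfl fun p _ => hterm p]
          rw [← Complex.re_sum]
          have hps : (∑ p : Fin (m + 1) → Fin 2,
              ∏ i, (((if p i = 0 then (vv i).1 else (vv i).2) : ℝ) : ℂ)
                * (if p i = 1 then Complex.I else 1))
              = ∏ i : Fin (m + 1), ∑ j : Fin 2,
                  (((if j = 0 then (vv i).1 else (vv i).2) : ℝ) : ℂ)
                    * (if j = 1 then Complex.I else 1) := by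
            rw [Finset.prod_univ_sum]
            rw [← Fintype.piFinset_univ]
          rw [hps]
          have hfactor : ∀ i : Fin (m + 1),
              (∑ j : Fin 2, (((if j = 0 then (vv i).1 else (vv i).2) : ℝ) : ℂ)
                * (if j = 1 then Complex.I else 1))
              = ((vv i).1 : ℂ) + ((vv i).2 : ℂ) * Complex.I := by
            intro i
            rw [Fin.sum_univ_two]
            norm_num
          rw [Finset.prod_congr rfl fun i _ => hfactor i]
          have hzc : ∀ x : ℝ × ℝ, ((x.1 : ℂ) + (x.2 : ℂ) * Complex.I) = (x.1 : ℂ) + x.2 * Complex.I :=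
            fun _ => rfl
          set zc : ℂ := (Real.cos θ₀ : ℂ) + (Real.sin θ₀ : ℂ) * Complex.I with hzc'
          have hprod : (∏ i : Fin (m + 1), (((vv i).1 : ℂ) + ((vv i).2 : ℂ) * Complex.I))
              = Complex.I * zc ^ (m + 1) := by
            rw [Fin.prod_univ_castSucc]
            have hcs : ∀ i : Fin m, vv i.castSucc = ((Real.cos θ₀, Real.sin θ₀) : ℝ × ℝ) := by
              intro i; rw [hvv]; exact Fin.snoc_castSucc _ _ i
            have hlast : vv (Fin.last m) = ((-Real.sin θ₀, Real.cos θ₀) : ℝ × ℝ) := by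
              rw [hvv]; exact Fin.snoc_last _ _
            rw [Finset.prod_congr rfl fun i _ => by rw [hcs i]]
            rw [hlast, Finset.prod_const, Finset.card_univ, Fintype.card_fin]
            show (zc) ^ m * (((-Real.sin θ₀ : ℝ) : ℂ) + ((Real.cos θ₀ : ℝ) : ℂ) * Complex.I)
              = Complex.I * zc ^ (m + 1)
            have hnu : ((-Real.sin θ₀ : ℝ) : ℂ) + ((Real.cos θ₀ : ℝ) : ℂ) * Complex.I
                = Complex.I * zc := by
              rw [hzc']
              push_cast
              ring_nf
              rw [Complex.I_sq]
              ring
            rw [hnu, pow_succ]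
            ring
          rw [hprod]
          have hexp : zc = Complex.exp ((θ₀ : ℂ) * Complex.I) := by
            rw [hzc', Complex.ofReal_cos, Complex.ofReal_sin]
            exact Complex.cos_add_sin_I _
          have hpow : zc ^ (m + 1) = Complex.exp ((((m + 1 : ℕ) * θ₀ : ℝ) : ℂ) * Complex.I) := by
            rw [hexp, ← Complex.exp_nat_mul]
            congr 1
            push_cast
            ring
          rw [hpow, Complex.mul_re]
          simp only [Complex.I_re, Complex.I_im, Complex.exp_ofReal_mul_I_im,
            Complex.exp_ofReal_mul_I_re]
          push_cast
          ring
        -- conclude A = 0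
        have hfin := hE2bc m
        rw [hT2, smul_zero, add_zero, hT1a, hT1b, hscal] at hfin
        have hsin : Real.sin ((m + 1) * θ₀) ≠ 0 := by
          rw [hθ₀]
          intro hs
          rw [Real.sin_eq_zero_iff] at hs
          obtain ⟨z, hz⟩ := hs
          have hπ := Real.pi_ne_zero
          have hzz : (z : ℝ) = (m + 1) * α := by
            have h1 : (z : ℝ) * Real.pi = ((m + 1) * α) * Real.pi := by rw [hz]; ring
            exact mul_right_cancel₀ hπ h1
          apply hirr
          refine ⟨(z : ℚ) / ((m : ℚ) + 1), ?_⟩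
          have hm1 : ((m : ℝ) + 1) ≠ 0 := by positivity
          push_cast
          rw [div_eq_iff hm1, hzz]
          ring
        have hAzero : q (m + 1) 0 = 0 := by
          rcases smul_eq_zero.mp hfin with h' | h'
          · exact absurd (neg_eq_zero.mp h') hsin
          · exact h'
        intro j k hjk
        rw [stepB k j hjk, hAzero, smul_zero]
    -- conclude
    intro k
    show iteratedFDeriv ℝ k u 0 = 0
    apply ContinuousMultilinearMap.ext
    intro v
    rw [hexpand k v]
    rw [ContinuousMultilinearMap.zero_apply]
    apply Finset.sum_eq_zero
    intro p _
    rw [main ((List.ofFn p).count 0 + (List.ofFn p).count 1) _ _ rfl, smul_zero]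
  · intro hne hzero
    apply hne
    have h1 : u (0, 0) = iteratedFDeriv ℝ 0 u (0, 0) (fun _ => 0) :=
      (iteratedFDeriv_zero_apply _).symm
    rw [h1, hzero]
    rfl
end

section
/- Let Ω, λ, u, h, Γ_h^−, Γ_h^+, ν⁻ be as in the context, where now θ₀ = απ with α ∈ (0,2) irrational. Suppose Γ_h^− is a generalized singular line of u with constant parameter C₁ ∈ ℂ, i.e., ∇u(x)·ν⁻ + C₁·u(x) = 0 for all x ∈ Γ_h^−, and Γ_h^+ is a nodal line of u, i.e., u(x) = 0 for all x ∈ Γ_h^+. Then u has infinite vanishing order at 0: every partial derivative of u of every order vanishes at 0. -/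
open Filter Set
open Filter Set

noncomputable def Dop (v : ℝ × ℝ) (f : ℝ × ℝ → ℂ) : ℝ × ℝ → ℂ := fun x => fderiv ℝ f x v


lemma Dop_analytic {Ω : Set (ℝ × ℝ)} {f : ℝ × ℝ → ℂ} (hf : AnalyticOnNhd ℝ f Ω) (v : ℝ × ℝ) :
    AnalyticOnNhd ℝ (Dop v f) Ω := by
  intro x hx
  exact ((ContinuousLinearMap.apply ℝ ℂ v).analyticAt (fderiv ℝ f x)).comp (hf.fderiv x hx)

lemma Dop_zero (v : ℝ × ℝ) : Dop v (fun _ => (0:ℂ)) = fun _ => (0:ℂ)  := by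
  funext x; simp [Dop]

lemma Dop_congrOn {Ω : Set (ℝ × ℝ)} (hΩ : IsOpen Ω) {f g : ℝ × ℝ → ℂ} (hfg : Set.EqOn f g Ω)
    (v : ℝ × ℝ) : Set.EqOn (Dop v f) (Dop v g) Ω := by
  intro x hx
  have h : f =ᶠ[nhds x] g := Filter.eventually_of_mem (hΩ.mem_nhds hx) hfg
  simp only [Dop, h.fderiv_eq]

lemma Dop_lin {f g : ℝ × ℝ → ℂ} {x : ℝ × ℝ} (hf : DifferentiableAt ℝ f x)
    (hg : DifferentiableAt ℝ g x) (α β : ℂ) (v : ℝ × ℝ) :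
    Dop v (fun y => α • f y + β • g y) x = α • Dop v f x + β • Dop v g x := by
  simp only [Dop]
  rw [fderiv_fun_add (f := fun y => α • f y) (g := fun y => β • g y) ((hf.const_smul α)) ((hg.const_smul β)), fderiv_fun_const_smul hf α,
    fderiv_fun_const_smul hg β]
  simp

lemma Dop_dir {f : ℝ × ℝ → ℂ} {x : ℝ × ℝ} (a b : ℝ) (v w : ℝ × ℝ) :
    Dop (a • v + b • w) f x = a • Dop v f x + b • Dop w f x := by
  simp [Dop]

lemma Dop_comm {Ω : Set (ℝ × ℝ)} (hΩ : IsOpen Ω) {f : ℝ × ℝ → ℂ}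
    (hf : AnalyticOnNhd ℝ f Ω) (v w : ℝ × ℝ) :
    Set.EqOn (Dop v (Dop w f)) (Dop w (Dop v f)) Ω := by
  intro x hx
  have hsym : IsSymmSndFDerivAt ℝ f x := ((hf x hx).contDiffAt).isSymmSndFDerivAt le_top
  have hD : DifferentiableAt ℝ (fderiv ℝ f) x := ((hf.fderiv) x hx).differentiableAt
  have e1 : ∀ z : ℝ × ℝ, Dop v (Dop w f) x = fderiv ℝ (fderiv ℝ f) x v w := by
    intro z
    show fderiv ℝ (fun y => (fderiv ℝ f y) w) x v = _
    rw [fderiv_clm_apply hD (differentiableAt_const w)]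
    simp
  have e2 : Dop w (Dop v f) x = fderiv ℝ (fderiv ℝ f) x w v := by
    show fderiv ℝ (fun y => (fderiv ℝ f y) v) x w = _
    rw [fderiv_clm_apply hD (differentiableAt_const v)]
    simp
  rw [e1 0, e2, hsym v w]


lemma iter_analytic {Ω : Set (ℝ × ℝ)} {f : ℝ × ℝ → ℂ} (hf : AnalyticOnNhd ℝ f Ω) (v : ℝ × ℝ) :
    ∀ n : ℕ, AnalyticOnNhd ℝ ((Dop v)^[n] f) Ω := by
  intro n
  induction n generalizing f with
  | zero => exact hf
  | succ n IH => rw [Function.iterate_succ_apply]; exact IH (Dop_analytic hf v)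

lemma iter_congrOn {Ω : Set (ℝ × ℝ)} (hΩ : IsOpen Ω) {f g : ℝ × ℝ → ℂ} (hfg : Set.EqOn f g Ω)
    (v : ℝ × ℝ) (n : ℕ) : Set.EqOn ((Dop v)^[n] f) ((Dop v)^[n] g) Ω := by
  induction n generalizing f g with
  | zero => exact hfg
  | succ n IH =>
    rw [Function.iterate_succ_apply, Function.iterate_succ_apply]
    exact IH (Dop_congrOn hΩ hfg v)

lemma iter_comm {Ω : Set (ℝ × ℝ)} (hΩ : IsOpen Ω) {f : ℝ × ℝ → ℂ}
    (hf : AnalyticOnNhd ℝ f Ω) (v w : ℝ × ℝ) (n : ℕ) :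
    Set.EqOn ((Dop v)^[n] (Dop w f)) (Dop w ((Dop v)^[n] f)) Ω := by
  induction n generalizing f with
  | zero => exact fun x _ => rfl
  | succ n IH =>
    rw [Function.iterate_succ_apply, Function.iterate_succ_apply]
    intro x hx
    have h1 : ((Dop v)^[n] (Dop v (Dop w f))) x = ((Dop v)^[n] (Dop w (Dop v f))) x :=
      iter_congrOn hΩ (Dop_comm hΩ hf v w) v n hx
    rw [h1]
    exact IH (Dop_analytic hf v) hx

lemma iter_lin {Ω : Set (ℝ × ℝ)} (hΩ : IsOpen Ω) {f g : ℝ × ℝ → ℂ}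
    (hf : AnalyticOnNhd ℝ f Ω) (hg : AnalyticOnNhd ℝ g Ω) (α β : ℂ) (v : ℝ × ℝ) (n : ℕ) :
    Set.EqOn ((Dop v)^[n] (fun y => α • f y + β • g y))
      (fun y => α • (Dop v)^[n] f y + β • (Dop v)^[n] g y) Ω := by
  induction n generalizing f g with
  | zero => exact fun x _ => rfl
  | succ n IH =>
    rw [Function.iterate_succ_apply]
    intro x hx
    have h1 : Set.EqOn (Dop v (fun y => α • f y + β • g y))
        (fun y => α • Dop v f y + β • Dop v g y) Ω := by
      intro z hz
      exact Dop_lin ((hf z hz).differentiableAt) ((hg z hz).differentiableAt) α β v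
    rw [iter_congrOn hΩ h1 v n hx]
    exact IH (Dop_analytic hf v) (Dop_analytic hg v) hx


lemma ED {f g : ℝ → ℂ} {x : ℝ} (h : f =ᶠ[nhds x] g) (n : ℕ) :
    iteratedDeriv n f x = iteratedDeriv n g x := by
  rw [iteratedDeriv_eq_iteratedFDeriv, iteratedDeriv_eq_iteratedFDeriv,
    ← iteratedFDerivWithin_univ, ← iteratedFDerivWithin_univ]
  congr 1
  exact Filter.EventuallyEq.iteratedFDerivWithin_eq
    (by simpa [nhdsWithin_univ] using h) (h.eq_of_nhds) n

lemma line_deriv {Ω : Set (ℝ × ℝ)} (hΩ : IsOpen Ω) (h0 : ((0:ℝ),(0:ℝ)) ∈ Ω)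
    {f : ℝ × ℝ → ℂ} (hf : AnalyticOnNhd ℝ f Ω) (y : ℝ × ℝ) (n : ℕ) :
    iteratedDeriv n (fun t : ℝ => f (t • y)) 0 = (Dop y)^[n] f (0, 0) := by
  induction n generalizing f with
  | zero =>
    simp only [iteratedDeriv_zero, Function.iterate_zero, id]
    norm_num [Prod.smul_def]
    rfl
  | succ n IH =>
    rw [iteratedDeriv_succ', Function.iterate_succ_apply]
    have hev : deriv (fun t : ℝ => f (t • y)) =ᶠ[nhds (0:ℝ)]
        (fun t : ℝ => (Dop y f) (t • y)) := by
      have hU : IsOpen ((fun t : ℝ => t • y) ⁻¹' Ω) :=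
        hΩ.preimage (by continuity)
      have h0' : (0:ℝ) ∈ (fun t : ℝ => t • y) ⁻¹' Ω := by
        simpa [Prod.smul_def] using h0
      filter_upwards [hU.mem_nhds h0'] with t ht
      have hd : HasDerivAt (fun s : ℝ => f (s • y)) ((fderiv ℝ f (t • y)) y) t := by
        have h2 : HasDerivAt (fun s : ℝ => s • y) ((1:ℝ) • y) t :=
          (hasDerivAt_id t).smul_const y
        have h3 := ((hf _ ht).differentiableAt.hasFDerivAt.comp_hasDerivAt t h2)
        rw [one_smul] at h3
        exact h3
      exact hd.deriv
    rw [ED hev n]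
    exact IH (Dop_analytic hf y)

lemma ODD {g : ℝ → ℂ} (hg : AnalyticAt ℝ g 0) {h : ℝ} (hh : 0 < h)
    (hz : ∀ r : ℝ, 0 ≤ r → r ≤ h → g r = 0) (n : ℕ) : iteratedDeriv n g 0 = 0 := by
  have hev : ∀ᶠ z in nhds (0:ℝ), g z = 0 := by
    rcases hg.eventually_eq_zero_or_eventually_ne_zero with H | H
    · exact H
    · exfalso
      have h1 : ∀ᶠ z in nhdsWithin (0:ℝ) (Set.Ioi 0), g z = 0 := by
        filter_upwards [Ioc_mem_nhdsGT_of_mem ⟨le_refl (0:ℝ), hh⟩] with t ht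
        exact hz t ht.1.le ht.2
      have h2 : ∀ᶠ z in nhdsWithin (0:ℝ) (Set.Ioi 0), g z ≠ 0 :=
        H.filter_mono (nhdsWithin_mono _ (fun t (ht : t ∈ Set.Ioi 0) => ne_of_gt ht))
      obtain ⟨t, ht1, ht2⟩ := (h1.and h2).exists
      exact ht2 ht1
  have : iteratedDeriv n g 0 = iteratedDeriv n (fun _ : ℝ => (0:ℂ)) 0 := by
    rw [iteratedDeriv_eq_iteratedFDeriv, iteratedDeriv_eq_iteratedFDeriv,
      ← iteratedFDerivWithin_univ, ← iteratedFDerivWithin_univ]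
    congr 1
    have hev' : g =ᶠ[nhdsWithin (0:ℝ) Set.univ] (fun _ : ℝ => (0:ℂ)) := by
      rw [nhdsWithin_univ]; exact hev
    exact Filter.EventuallyEq.iteratedFDerivWithin_eq hev' (hev.self_of_nhds) n
  rw [this]
  simp [iteratedDeriv_eq_iteratedFDeriv, iteratedFDeriv_zero_fun]

lemma diag_link {Ω : Set (ℝ × ℝ)} (hΩ : IsOpen Ω) {u : ℝ × ℝ → ℂ}
    (hu : AnalyticOnNhd ℝ u Ω) {ρ : ℝ} (hρ : 0 < ρ)
    (hball : Metric.ball (0 : ℝ × ℝ) ρ ⊆ Ω) (y : ℝ × ℝ) (n : ℕ) :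
    iteratedFDeriv ℝ n u 0 (fun _ => y) = iteratedDeriv n (fun t : ℝ => u (t • y)) 0 := by
  set B : Set (ℝ × ℝ) := Metric.ball (0 : ℝ × ℝ) ρ with hB
  set L : ℝ →L[ℝ] ℝ × ℝ := (ContinuousLinearMap.id ℝ ℝ).smulRight y with hL
  have hLy : ∀ t : ℝ, L t = t • y := fun t => rfl
  have huB : AnalyticOnNhd ℝ u B := fun x hx => hu x (hball hx)
  have hf : ContDiffOn ℝ (⊤ : WithTop ℕ∞) u B := huB.contDiffOn Metric.isOpen_ball.uniqueDiffOn
  have h's : UniqueDiffOn ℝ (L ⁻¹' B) := (Metric.isOpen_ball.preimage L.continuous).uniqueDiffOn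
  have hx0 : L 0 ∈ B := by rw [hLy, zero_smul]; exact Metric.mem_ball_self hρ
  have key := L.iteratedFDerivWithin_comp_right hf Metric.isOpen_ball.uniqueDiffOn h's hx0
    (le_top : (n : WithTop ℕ∞) ≤ ⊤)
  have e1 : iteratedFDerivWithin ℝ n (u ∘ L) (L ⁻¹' B) 0 (fun _ => (1:ℝ)) =
      iteratedFDerivWithin ℝ n u B (L 0) (fun _ => L 1) := by
    rw [key]; rfl
  have e2 : iteratedFDerivWithin ℝ n (u ∘ L) (L ⁻¹' B) 0 = iteratedFDeriv ℝ n (u ∘ L) 0 :=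
    iteratedFDerivWithin_of_isOpen n (Metric.isOpen_ball.preimage L.continuous) hx0
  have e3 : iteratedFDerivWithin ℝ n u B (L 0) = iteratedFDeriv ℝ n u (L 0) :=
    iteratedFDerivWithin_of_isOpen n Metric.isOpen_ball hx0
  have e4 : iteratedDeriv n (fun t : ℝ => u (t • y)) 0 =
      iteratedFDeriv ℝ n (u ∘ L) 0 (fun _ => (1:ℝ)) := by
    rw [iteratedDeriv_eq_iteratedFDeriv]; rfl
  rw [e4, ← e2, e1, e3]
  have : L 0 = 0 := by simp [hLy]
  rw [this]
  congr 1
  funext i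
  show y = L 1
  simp [hLy]

lemma iter_zero (v : ℝ × ℝ) (n : ℕ) : (Dop v)^[n] (fun _ => (0:ℂ)) = fun _ => (0:ℂ) := by
  induction n with
  | zero => rfl
  | succ n IH => rw [Function.iterate_succ_apply, Dop_zero]; exact IH

lemma cos_rec (θ : ℝ) (k : ℕ) :
    Real.cos (((k:ℝ)+2)*θ) = 2*Real.cos θ * Real.cos (((k:ℝ)+1)*θ) - Real.cos ((k:ℝ)*θ) := by
  have h1 := Real.cos_add (((k:ℝ)+1)*θ) θ
  have h2 := Real.cos_sub (((k:ℝ)+1)*θ) θ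
  have e1 : ((k:ℝ)+1)*θ + θ = ((k:ℝ)+2)*θ := by ring
  have e2 : ((k:ℝ)+1)*θ - θ = (k:ℝ)*θ := by ring
  rw [e1] at h1; rw [e2] at h2
  linarith

lemma sin_ne_of_irrational {α : ℝ} (hirr : Irrational α) : Real.sin (α * Real.pi) ≠ 0 := by
  intro H
  rw [Real.sin_eq_zero_iff] at H
  obtain ⟨n, hn⟩ := H
  exact (hirr.ne_int n) (mul_right_cancel₀ Real.pi_ne_zero hn).symm

lemma cos_ne_of_irrational {α : ℝ} (hirr : Irrational α) (n : ℕ) (hn : 1 ≤ n) :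
    Real.cos ((n:ℝ) * (α * Real.pi)) ≠ 0 := by
  intro H
  rw [Real.cos_eq_zero_iff] at H
  obtain ⟨k, hk⟩ := H
  have hπ := Real.pi_ne_zero
  have h1 : (n:ℝ) * α = (2*(k:ℝ)+1)/2 := by
    have h2 : ((n:ℝ) * α) * Real.pi = ((2*(k:ℝ)+1)/2) * Real.pi := by
      rw [mul_comm ((n:ℝ)*α) Real.pi] at *
      field_simp at hk ⊢
      linarith [hk]
    exact mul_right_cancel₀ hπ h2
  have hn0 : (n:ℝ) ≠ 0 := by positivity
  apply hirr
  refine ⟨(2*(k:ℚ)+1)/(2*(n:ℚ)), ?_⟩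
  have : α = (2*(k:ℝ)+1)/(2*(n:ℝ)) := by
    field_simp at h1 ⊢
    linarith [h1]
  rw [this]
  push_cast
  ring



/-- A generalized singular line `Γ_h^−` (constant parameter `C₁`) and a nodal line `Γ_h^+`
intersecting at the origin at an irrational angle `θ₀ = απ`, `α ∈ (0,2)` irrational:
`u` has infinite vanishing order at `0`. -/
theorem stmt10
    (Ω : Set (ℝ × ℝ)) (hΩ : IsOpen Ω)
    (lam : ℝ) (hlam : 0 < lam)
    (u : ℝ × ℝ → ℂ)
    (hu_an : AnalyticOnNhd ℝ u Ω)
    (hu_eq : ∀ x ∈ Ω, pd1 (pd1 u) x + pd2 (pd2 u) x + (lam : ℂ) * u x = 0)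
    (α : ℝ) (hα : α ∈ Set.Ioo (0 : ℝ) 2) (hirr : Irrational α)
    (θ₀ : ℝ) (hθ₀ : θ₀ = α * Real.pi)
    (h : ℝ) (hh : 0 < h)
    (hdisk : ∀ x : ℝ × ℝ, x.1 ^ 2 + x.2 ^ 2 ≤ h ^ 2 → x ∈ Ω)
    (C₁ : ℂ)
    (hbc₁ : ∀ r : ℝ, 0 ≤ r → r ≤ h →
      fderiv ℝ u (r, 0) (0, -1) + C₁ * u (r, 0) = 0)
    (hnodal_p : ∀ r : ℝ, 0 ≤ r → r ≤ h → u (r * Real.cos θ₀, r * Real.sin θ₀) = 0) :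
    ∀ k : ℕ, iteratedFDeriv ℝ k u (0, 0) = 0 := by
  -- ### basic setup
  have h0 : ((0:ℝ),(0:ℝ)) ∈ Ω := hdisk (0,0) (by norm_num; positivity)
  have hball : Metric.ball (0 : ℝ × ℝ) (h/2) ⊆ Ω := by
    intro x hx
    apply hdisk
    have h1 : ‖x‖ < h/2 := by simpa [Metric.mem_ball, dist_zero_right] using hx
    have h2 : |x.1| ≤ ‖x‖ := by simpa [Real.norm_eq_abs] using norm_fst_le x
    have h3 : |x.2| ≤ ‖x‖ := by simpa [Real.norm_eq_abs] using norm_snd_le x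
    nlinarith [sq_abs x.1, sq_abs x.2, abs_nonneg x.1, abs_nonneg x.2, norm_nonneg x]
  set e₁ : ℝ × ℝ := (1, 0) with he1
  set c : ℝ := Real.cos θ₀ with hcdef
  set s : ℝ := Real.sin θ₀ with hsdef
  set w : ℝ × ℝ := (c, s) with hwdef
  have hs : s ≠ 0 := by rw [hsdef, hθ₀]; exact sin_ne_of_irrational hirr
  have hsC : (s:ℂ) ≠ 0 := Complex.ofReal_ne_zero.2 hs
  have hcs : c^2 + s^2 = 1 := by rw [hcdef, hsdef]; exact Real.cos_sq_add_sin_sq θ₀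
  set m : ℕ → ℕ → ℂ := fun i j => (Dop e₁)^[i] ((Dop w)^[j] u) ((0:ℝ),(0:ℝ)) with hmdef
  -- ### nodal line conditions
  have hnodal : ∀ n, m 0 n = 0 := by
    intro n
    have hL := ((ContinuousLinearMap.id ℝ ℝ).smulRight w).analyticAt (0:ℝ)
    have hu0 : AnalyticAt ℝ u (((ContinuousLinearMap.id ℝ ℝ).smulRight w) 0) := by
      have he : ((ContinuousLinearMap.id ℝ ℝ).smulRight w) 0 = ((0:ℝ),(0:ℝ)) := by
        simp; rfl
      rw [he]; exact hu_an _ h0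
    have hA : AnalyticAt ℝ (fun t : ℝ => u (t • w)) 0 := by
      have h2 := hu0.comp hL
      have he : (u ∘ ⇑((ContinuousLinearMap.id ℝ ℝ).smulRight w)) = fun t : ℝ => u (t • w) := by
        funext t; simp
      rwa [he] at h2
    have hz : ∀ r : ℝ, 0 ≤ r → r ≤ h → (fun t : ℝ => u (t • w)) r = 0 := by
      intro r h1 h2
      show u (r • w) = 0
      have he : r • w = (r * c, r * s) := by simp [hwdef, Prod.smul_def, smul_eq_mul]
      rw [he]; exact hnodal_p r h1 h2
    have hO := ODD hA hh hz n
    rw [line_deriv hΩ h0 hu_an w n] at hO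
    simp only [hmdef, Function.iterate_zero_apply]
    exact hO
  -- ### Robin conditions
  have hdir : ((1:ℝ)/s) • w + (-(c/s)) • e₁ = ((0:ℝ),(1:ℝ)) := by
    rw [hwdef, he1, Prod.smul_mk, Prod.smul_mk, Prod.mk_add_mk, Prod.mk.injEq]
    constructor
    · simp only [smul_eq_mul]; field_simp; ring
    · simp only [smul_eq_mul]; field_simp; ring
  have hdec : ∀ (g : ℝ×ℝ→ℂ) (x : ℝ×ℝ), Dop ((0:ℝ),(1:ℝ)) g x
      = (((1/s : ℝ)):ℂ) * Dop w g x + ((-(c/s) : ℝ):ℂ) * Dop e₁ g x := by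
    intro g x
    rw [← hdir, Dop_dir, Complex.real_smul, Complex.real_smul]
  have hrob : ∀ n, m n 1 = (c:ℂ) * m (n+1) 0 + (s:ℂ) * C₁ * m n 0 := by
    set A : ℝ × ℝ → ℂ := fun x => C₁ * u x - Dop ((0:ℝ),(1:ℝ)) u x with hAdef
    have hA_an : AnalyticOnNhd ℝ A Ω := fun x hx =>
      ((analyticAt_const).mul (hu_an x hx)).sub (Dop_analytic hu_an _ x hx)
    have hA_zero : ∀ r : ℝ, 0 ≤ r → r ≤ h → (fun t : ℝ => A (t • e₁)) r = 0 := by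
      intro r h1 h2
      show A (r • e₁) = 0
      have hb := hbc₁ r h1 h2
      have hsm : r • e₁ = ((r:ℝ), (0:ℝ)) := by
        rw [he1, Prod.smul_mk]; simp
      have hneg : fderiv ℝ u (r, 0) ((0:ℝ), (-1:ℝ)) = - Dop ((0:ℝ),(1:ℝ)) u (r, 0) := by
        have he : ((0:ℝ), (-1:ℝ)) = -((0:ℝ), (1:ℝ)) := by simp
        rw [he, map_neg]; rfl
      rw [hneg] at hb
      rw [hsm]
      show C₁ * u (r, 0) - Dop ((0:ℝ),(1:ℝ)) u (r, 0) = 0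
      linear_combination hb
    have hPA : ∀ n, (Dop e₁)^[n] A ((0:ℝ),(0:ℝ)) = 0 := by
      intro n
      have hL := ((ContinuousLinearMap.id ℝ ℝ).smulRight e₁).analyticAt (0:ℝ)
      have hA0 : AnalyticAt ℝ A (((ContinuousLinearMap.id ℝ ℝ).smulRight e₁) 0) := by
        have he : ((ContinuousLinearMap.id ℝ ℝ).smulRight e₁) 0 = ((0:ℝ),(0:ℝ)) := by simp; rfl
        rw [he]; exact hA_an _ h0
      have hAat : AnalyticAt ℝ (fun t : ℝ => A (t • e₁)) 0 := by
        have h2 := hA0.comp hL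
        have he : (A ∘ ⇑((ContinuousLinearMap.id ℝ ℝ).smulRight e₁)) = fun t : ℝ => A (t • e₁) := by
          funext t; simp
        rwa [he] at h2
      have hO := ODD hAat hh hA_zero n
      rwa [line_deriv hΩ h0 hA_an e₁ n] at hO
    have hQu_an := Dop_analytic hu_an w
    have hPu_an := Dop_analytic hu_an e₁
    set σ : ℂ := (((1/s : ℝ)):ℂ) with hσdef
    set τ : ℂ := ((-(c/s) : ℝ):ℂ) with hτdef
    have hA_eq : A = fun y => C₁ • u y + (-1:ℂ) • (fun x => σ • Dop w u x + τ • Dop e₁ u x) y := by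
      funext z
      simp only [hAdef, smul_eq_mul]
      rw [hdec u z]
      ring
    intro n
    have hB2_an : AnalyticOnNhd ℝ (fun x => σ • Dop w u x + τ • Dop e₁ u x) Ω := fun x hx =>
      ((analyticAt_const.mul (hQu_an x hx)).add (analyticAt_const.mul (hPu_an x hx)))
    have h1 := iter_lin hΩ hu_an hB2_an C₁ (-1:ℂ) e₁ n h0
    have h2 := iter_lin hΩ hQu_an hPu_an σ τ e₁ n h0
    have hPAn := hPA n
    rw [hA_eq] at hPAn
    rw [h1] at hPAn
    beta_reduce at hPAn
    rw [h2] at hPAn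
    beta_reduce at hPAn
    have e1 : (Dop e₁)^[n] u ((0:ℝ),(0:ℝ)) = m n 0 := by
      simp only [hmdef, Function.iterate_zero_apply]
    have e2 : (Dop e₁)^[n] (Dop w u) ((0:ℝ),(0:ℝ)) = m n 1 := by
      simp only [hmdef, Function.iterate_one]
    have e3 : (Dop e₁)^[n] (Dop e₁ u) ((0:ℝ),(0:ℝ)) = m (n+1) 0 := by
      simp only [hmdef, Function.iterate_zero_apply, Function.iterate_succ_apply]
    rw [e1, e2, e3] at hPAn
    have hσ : σ = 1/(s:ℂ) := by rw [hσdef]; push_cast; ring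
    have hτ : τ = -((c:ℂ)/(s:ℂ)) := by rw [hτdef]; push_cast; ring
    rw [hσ, hτ] at hPAn
    simp only [smul_eq_mul] at hPAn
    field_simp [hsC] at hPAn
    linear_combination -hPAn
  -- ### PDE conditions
  have hpde : ∀ i j, m (i+2) j + m i (j+2)
      = 2*(c:ℂ)*m (i+1) (j+1) - (lam:ℂ)*(s:ℂ)^2 * m i j := by
    set E : ℝ×ℝ→ℂ := fun x => pd1 (pd1 u) x + pd2 (pd2 u) x + (lam:ℂ) * u x with hEdef
    have hE0 : ∀ i j, (Dop e₁)^[i] ((Dop w)^[j] E) ((0:ℝ),(0:ℝ)) = 0 := by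
      intro i j
      have hEzero : Set.EqOn E (fun _ => (0:ℂ)) Ω := fun x hx => hu_eq x hx
      have h1 : Set.EqOn ((Dop w)^[j] E) (fun _ => (0:ℂ)) Ω := by
        have h2 := iter_congrOn hΩ hEzero w j
        rwa [iter_zero] at h2
      have h3 : Set.EqOn ((Dop e₁)^[i] ((Dop w)^[j] E)) (fun _ => (0:ℂ)) Ω := by
        have h4 := iter_congrOn hΩ h1 e₁ i
        rwa [iter_zero] at h4
      exact h3 h0
    have hQu_an := Dop_analytic hu_an w
    have hPu_an := Dop_analytic hu_an e₁
    have hQQ_an := Dop_analytic hQu_an w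
    have hPQ_an := Dop_analytic hQu_an e₁
    have hPP_an := Dop_analytic hPu_an e₁
    set σ : ℂ := (((1/s : ℝ)):ℂ) with hσdef
    set τ : ℂ := ((-(c/s) : ℝ):ℂ) with hτdef
    have hmid : ∀ x ∈ Ω, Dop ((0:ℝ),(1:ℝ)) (Dop ((0:ℝ),(1:ℝ)) u) x
        = σ^2 * Dop w (Dop w u) x + (2*σ*τ) * Dop e₁ (Dop w u) x
          + τ^2 * Dop e₁ (Dop e₁ u) x := by
      intro x hx
      rw [hdec (Dop ((0:ℝ),(1:ℝ)) u) x]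
      have hin : Dop ((0:ℝ),(1:ℝ)) u = fun z => σ • Dop w u z + τ • Dop e₁ u z := by
        funext z; rw [hdec u z]; simp [smul_eq_mul]
      rw [hin]
      rw [Dop_lin ((hQu_an x hx).differentiableAt) ((hPu_an x hx).differentiableAt) σ τ w]
      rw [Dop_lin ((hQu_an x hx).differentiableAt) ((hPu_an x hx).differentiableAt) σ τ e₁]
      rw [Dop_comm hΩ hu_an w e₁ hx]
      simp only [smul_eq_mul]
      ring
    set G2 : ℝ×ℝ→ℂ := fun z => (2*σ*τ) • Dop e₁ (Dop w u) z + ((lam:ℂ)) • u z with hG2def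
    set G1 : ℝ×ℝ→ℂ := fun z => (σ^2) • Dop w (Dop w u) z + (1:ℂ) • G2 z with hG1def
    set G0 : ℝ×ℝ→ℂ := fun z => (1+τ^2) • Dop e₁ (Dop e₁ u) z + (1:ℂ) • G1 z with hG0def
    have hG2_an : AnalyticOnNhd ℝ G2 Ω := fun x hx =>
      (analyticAt_const.mul (hPQ_an x hx)).add (analyticAt_const.mul (hu_an x hx))
    have hG1_an : AnalyticOnNhd ℝ G1 Ω := fun x hx =>
      (analyticAt_const.mul (hQQ_an x hx)).add (analyticAt_const.mul (hG2_an x hx))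
    have hEdec : Set.EqOn E G0 Ω := by
      intro x hx
      have hpd1 : pd1 (pd1 u) = Dop e₁ (Dop e₁ u) := rfl
      have hpd2 : pd2 (pd2 u) = Dop ((0:ℝ),(1:ℝ)) (Dop ((0:ℝ),(1:ℝ)) u) := rfl
      simp only [hEdef, hG0def, hG1def, hG2def, hpd1, hpd2]
      rw [hmid x hx]
      simp only [smul_eq_mul]
      ring
    intro i j
    have VADD : ∀ (F G : ℝ×ℝ→ℂ), AnalyticOnNhd ℝ F Ω → AnalyticOnNhd ℝ G Ω → ∀ (α β : ℂ),
        (Dop e₁)^[i] ((Dop w)^[j] (fun z => α • F z + β • G z)) ((0:ℝ),(0:ℝ))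
          = α * (Dop e₁)^[i] ((Dop w)^[j] F) ((0:ℝ),(0:ℝ))
            + β * (Dop e₁)^[i] ((Dop w)^[j] G) ((0:ℝ),(0:ℝ)) := by
      intro F G hF hG α β
      have s1 := iter_lin hΩ hF hG α β w j
      have s2 := iter_congrOn hΩ s1 e₁ i h0
      rw [s2]
      have s3 := iter_lin hΩ (iter_analytic hF w j) (iter_analytic hG w j) α β e₁ i h0
      rw [s3]
      beta_reduce
      simp only [smul_eq_mul]
    have hval := hE0 i j
    have h1 : (Dop e₁)^[i] ((Dop w)^[j] E) ((0:ℝ),(0:ℝ))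
        = (Dop e₁)^[i] ((Dop w)^[j] G0) ((0:ℝ),(0:ℝ)) :=
      iter_congrOn hΩ (iter_congrOn hΩ hEdec w j) e₁ i h0
    rw [h1] at hval
    rw [hG0def] at hval
    rw [VADD _ _ hPP_an hG1_an (1+τ^2) 1] at hval
    rw [hG1def] at hval
    rw [VADD _ _ hQQ_an hG2_an (σ^2) 1] at hval
    rw [hG2def] at hval
    rw [VADD _ _ hPQ_an hu_an (2*σ*τ) (lam:ℂ)] at hval
    -- now convert the four values into m's
    have VPP : (Dop e₁)^[i] ((Dop w)^[j] (Dop e₁ (Dop e₁ u))) ((0:ℝ),(0:ℝ)) = m (i+2) j := by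
      have c1 : Set.EqOn ((Dop w)^[j] (Dop e₁ u)) (Dop e₁ ((Dop w)^[j] u)) Ω :=
        iter_comm hΩ hu_an w e₁ j
      have c2 : Set.EqOn ((Dop w)^[j] (Dop e₁ (Dop e₁ u))) (Dop e₁ ((Dop w)^[j] (Dop e₁ u))) Ω :=
        iter_comm hΩ hPu_an w e₁ j
      have c3 : Set.EqOn (Dop e₁ ((Dop w)^[j] (Dop e₁ u))) (Dop e₁ (Dop e₁ ((Dop w)^[j] u))) Ω :=
        Dop_congrOn hΩ c1 e₁
      have c4 : Set.EqOn ((Dop w)^[j] (Dop e₁ (Dop e₁ u))) (Dop e₁ (Dop e₁ ((Dop w)^[j] u))) Ω :=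
        fun x hx => (c2 hx).trans (c3 hx)
      have c5 := iter_congrOn hΩ c4 e₁ i h0
      rw [c5]
      simp only [hmdef]
      rw [Function.iterate_succ_apply (Dop e₁) (i+1) ((Dop w)^[j] u),
        Function.iterate_succ_apply (Dop e₁) i (Dop e₁ ((Dop w)^[j] u))]
    have VQQ : (Dop e₁)^[i] ((Dop w)^[j] (Dop w (Dop w u))) ((0:ℝ),(0:ℝ)) = m i (j+2) := by
      simp only [hmdef]
      rw [Function.iterate_succ_apply (Dop w) (j+1) u,
        Function.iterate_succ_apply (Dop w) j (Dop w u)]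
    have VPQ : (Dop e₁)^[i] ((Dop w)^[j] (Dop e₁ (Dop w u))) ((0:ℝ),(0:ℝ)) = m (i+1) (j+1) := by
      have c1 : Set.EqOn ((Dop w)^[j] (Dop e₁ (Dop w u))) (Dop e₁ ((Dop w)^[j] (Dop w u))) Ω :=
        iter_comm hΩ hQu_an w e₁ j
      have c5 := iter_congrOn hΩ c1 e₁ i h0
      rw [c5]
      simp only [hmdef]
      rw [Function.iterate_succ_apply (Dop w) j u,
        Function.iterate_succ_apply (Dop e₁) i ((Dop w)^[j] (Dop w u))]
    have VU : (Dop e₁)^[i] ((Dop w)^[j] u) ((0:ℝ),(0:ℝ)) = m i j := by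
      simp only [hmdef]
    rw [VPP, VQQ, VPQ, VU] at hval
    have hσ' : σ = 1/(s:ℂ) := by rw [hσdef]; push_cast; ring
    have hτ' : τ = -((c:ℂ)/(s:ℂ)) := by rw [hτdef]; push_cast; ring
    have hcsC : (c:ℂ)^2 + (s:ℂ)^2 = 1 := by exact_mod_cast hcs
    rw [hσ', hτ'] at hval
    field_simp [hsC] at hval
    have hs4 : ((s:ℂ)^4) ≠ 0 := pow_ne_zero _ hsC
    have key : (s:ℂ)^4 * ((m (i+2) j + m i (j+2))
        - (2*(c:ℂ)*m (i+1) (j+1) - (lam:ℂ)*(s:ℂ)^2 * m i j)) = 0 := by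
      linear_combination (s:ℂ)^4 * hval - ((s:ℂ)^4 * m (i+2) j) * hcsC
    exact sub_eq_zero.mp ((mul_eq_zero.mp key).resolve_left hs4)
  -- ### main induction
  have hcosC : ∀ N : ℕ, 1 ≤ N → (Real.cos ((N:ℝ)*θ₀) : ℂ) ≠ 0 := by
    intro N hN
    refine Complex.ofReal_ne_zero.2 ?_
    rw [hθ₀]
    exact cos_ne_of_irrational hirr N hN
  have hmain : ∀ N, ∀ i j, i + j = N → m i j = 0 := by
    intro N
    induction N using Nat.strong_induction_on with
    | _ N IH =>
    intro i j hij
    rcases Nat.eq_zero_or_pos N with hN0 | hNpos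
    · have hi : i = 0 := by omega
      have hj : j = 0 := by omega
      subst hi; subst hj
      exact hnodal 0
    · have hd1 : 1 ≤ N → m (N-1) 1 = (c:ℂ) * m N 0 := by
        intro h1
        have hr := hrob (N-1)
        have hz : m (N-1) 0 = 0 := IH (N-1) (by omega) (N-1) 0 (by omega)
        rw [hz] at hr
        rw [show N - 1 + 1 = N by omega] at hr
        simpa using hr
      have hrec : ∀ k, k + 2 ≤ N → m (N-(k+2)) (k+2)
          = 2*(c:ℂ) * m (N-(k+1)) (k+1) - m (N-k) k := by
        intro k hk
        have hp := hpde (N-(k+2)) k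
        have hz : m (N-(k+2)) k = 0 := IH (N-2) (by omega) (N-(k+2)) k (by omega)
        rw [hz] at hp
        rw [show N-(k+2)+2 = N-k by omega, show N-(k+2)+1 = N-(k+1) by omega] at hp
        linear_combination hp
      have hcos : ∀ k, k ≤ N → m (N-k) k = (Real.cos ((k:ℝ)*θ₀) : ℂ) * m N 0 := by
        intro k
        induction k using Nat.strong_induction_on with
        | _ k IHk =>
        intro hkN
        match k, IHk, hkN with
        | 0, _, _ => norm_num
        | 1, _, h1 =>
          rw [hd1 h1]
          have hc1 : Real.cos (((1:ℕ):ℝ) * θ₀) = c := by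
            norm_num [← hcdef]
          rw [hc1]
        | (k+2), IHk, hk2 =>
          rw [hrec k hk2, IHk (k+1) (by omega) (by omega), IHk k (by omega) (by omega)]
          have hcr := cos_rec θ₀ k
          rw [← hcdef] at hcr
          have hc2 : ((k+2:ℕ):ℝ) = (k:ℝ)+2 := by push_cast; ring
          have hc3 : ((k+1:ℕ):ℝ) = (k:ℝ)+1 := by push_cast; ring
          rw [hc2, hc3, hcr]
          push_cast
          ring
      have hdN := hcos N le_rfl
      rw [Nat.sub_self] at hdN
      rw [hnodal N] at hdN
      have hm0 : m N 0 = 0 := by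
        rcases mul_eq_zero.mp hdN.symm with h' | h'
        · exact absurd h' (hcosC N hNpos)
        · exact h'
      have hmij : m i j = m (N-j) j := by rw [show N - j = i by omega]
      rw [hmij, hcos j (by omega), hm0, mul_zero]
  -- ### all directions
  have hall : ∀ n (i j : ℕ) (y : ℝ × ℝ),
      (Dop y)^[n] ((Dop e₁)^[i] ((Dop w)^[j] u)) ((0:ℝ),(0:ℝ)) = 0 := by
    intro n
    induction n with
    | zero =>
      intro i j y
      exact hmain (i+j) i j rfl
    | succ n IHn =>
      intro i j y
      rw [Function.iterate_succ_apply]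
      have hg_an : AnalyticOnNhd ℝ ((Dop e₁)^[i] ((Dop w)^[j] u)) Ω :=
        iter_analytic (iter_analytic hu_an w j) e₁ i
      set a : ℝ := y.1 - (c/s) * y.2 with hadef
      set b : ℝ := y.2 / s with hbdef
      have hy : y = a • e₁ + b • w := by
        rw [he1, hwdef, Prod.smul_mk, Prod.smul_mk, Prod.mk_add_mk, Prod.ext_iff]
        constructor
        · show y.1 = a • (1:ℝ) + b • c
          simp only [smul_eq_mul, hadef, hbdef]
          field_simp
          ring
        · show y.2 = a • (0:ℝ) + b • s
          simp only [smul_eq_mul, hadef, hbdef]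
          field_simp
          ring
      have hDg : Dop y ((Dop e₁)^[i] ((Dop w)^[j] u)) = fun x =>
          ((a:ℝ):ℂ) • Dop e₁ ((Dop e₁)^[i] ((Dop w)^[j] u)) x
            + ((b:ℝ):ℂ) • Dop w ((Dop e₁)^[i] ((Dop w)^[j] u)) x := by
        funext x
        conv_lhs => rw [hy]
        rw [Dop_dir]
        rw [Complex.real_smul, Complex.real_smul]
        simp [smul_eq_mul]
      rw [hDg]
      have h1 := iter_lin hΩ (Dop_analytic hg_an e₁) (Dop_analytic hg_an w)
        ((a:ℝ):ℂ) ((b:ℝ):ℂ) y n h0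
      rw [h1]
      beta_reduce
      have e1g : Dop e₁ ((Dop e₁)^[i] ((Dop w)^[j] u)) = (Dop e₁)^[i+1] ((Dop w)^[j] u) :=
        (Function.iterate_succ_apply' (Dop e₁) i _).symm
      have ewg : Set.EqOn (Dop w ((Dop e₁)^[i] ((Dop w)^[j] u)))
          ((Dop e₁)^[i] ((Dop w)^[j+1] u)) Ω := by
        intro x hx
        have h2 := (iter_comm hΩ (iter_analytic hu_an w j) e₁ w i hx).symm
        rw [h2]
        have h3 : Dop w ((Dop w)^[j] u) = (Dop w)^[j+1] u :=
          (Function.iterate_succ_apply' (Dop w) j u).symm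
        rw [h3]
      rw [e1g]
      have h4 := iter_congrOn hΩ ewg y n h0
      rw [h4]
      rw [IHn (i+1) j y, IHn i (j+1) y]
      simp
  -- ### endgame
  have hdiag : ∀ (n : ℕ) (y : ℝ × ℝ), iteratedFDeriv ℝ n u 0 (fun _ => y) = 0 := by
    intro n y
    rw [diag_link hΩ hu_an (by positivity : (0:ℝ) < h/2) hball y n,
      line_deriv hΩ h0 hu_an y n]
    exact hall n 0 0 y
  have h0' : (0 : ℝ × ℝ) ∈ Ω := h0
  obtain ⟨p, hp⟩ := hu_an _ h0'
  obtain ⟨r, hr⟩ := hp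
  have hu0 : ∀ᶠ x in nhds (0 : ℝ × ℝ), u x = 0 := by
    have hball' : EMetric.ball (0 : ℝ × ℝ) r ∈ nhds (0 : ℝ × ℝ) :=
      EMetric.ball_mem_nhds _ hr.r_pos
    filter_upwards [hball'] with x hx
    have hsum := hr.hasSum_iteratedFDeriv hx
    have hzero : (fun n : ℕ => ((n.factorial : ℝ))⁻¹ • iteratedFDeriv ℝ n u 0 (fun _ => x))
        = fun _ => (0:ℂ) := by
      funext n; rw [hdiag n x, smul_zero]
    rw [hzero] at hsum
    have h00 := hsum.unique hasSum_zero
    simpa using h00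
  intro k
  have hk : iteratedFDeriv ℝ k u 0 = iteratedFDeriv ℝ k (fun _ => (0:ℂ)) 0 := by
    rw [← iteratedFDerivWithin_univ, ← iteratedFDerivWithin_univ]
    exact Filter.EventuallyEq.iteratedFDerivWithin_eq
      (by rw [nhdsWithin_univ]; exact hu0) (hu0.self_of_nhds) k
  show iteratedFDeriv ℝ k u 0 = 0
  rw [hk, iteratedFDeriv_zero_fun]
  rfl
end

section
/- Let Ω, λ, u, h, Γ_h^−, Γ_h^+, ν⁻ be as in the context, where now θ₀ = απ with α ∈ (0,2) irrational. Suppose Γ_h^− is a singular line of u, i.e., ∇u(x)·ν⁻ = 0 for all x ∈ Γ_h^−, and Γ_h^+ is a nodal line of u, i.e., u(x) = 0 for all x ∈ Γ_h^+. Then u has infinite vanishing order at 0: every partial derivative of u of every order vanishes at 0. -/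
namespace Stmt12Aux

open Filter Finset

noncomputable def pdv (v : ℝ × ℝ) (w : ℝ × ℝ → ℂ) : ℝ × ℝ → ℂ := fun x => fderiv ℝ w x v

variable {Ω : Set (ℝ × ℝ)}

lemma an_pdv {w : ℝ × ℝ → ℂ} (hw : AnalyticOnNhd ℝ w Ω) (v : ℝ × ℝ) :
    AnalyticOnNhd ℝ (pdv v w) Ω :=
  (ContinuousLinearMap.apply ℝ ℂ v).comp_analyticOnNhd hw.fderiv

lemma pdv_congr (hΩ : IsOpen Ω) {f g : ℝ × ℝ → ℂ} (hfg : ∀ y ∈ Ω, f y = g y)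
    {x : ℝ × ℝ} (hx : x ∈ Ω) (v : ℝ × ℝ) : pdv v f x = pdv v g x := by
  have h : f =ᶠ[nhds x] g := Filter.eventuallyEq_of_mem (hΩ.mem_nhds hx) hfg
  simp only [pdv, h.fderiv_eq]

lemma pdv_comm (hΩ : IsOpen Ω) {w : ℝ × ℝ → ℂ} (hw : AnalyticOnNhd ℝ w Ω)
    {x : ℝ × ℝ} (hx : x ∈ Ω) (v v' : ℝ × ℝ) :
    pdv v (pdv v' w) x = pdv v' (pdv v w) x := by
  have hsym : IsSymmSndFDerivAt ℝ w x :=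
    ((hw x hx).contDiffAt (n := 2)).isSymmSndFDerivAt (by norm_num)
  have key : ∀ a b : ℝ × ℝ, pdv a (pdv b w) x = fderiv ℝ (fderiv ℝ w) x a b := by
    intro a b
    have hdiff : DifferentiableAt ℝ (fderiv ℝ w) x := ((hw.fderiv) x hx).differentiableAt
    have h1 : pdv b w = (ContinuousLinearMap.apply ℝ ℂ b) ∘ (fderiv ℝ w) := rfl
    have h2 : fderiv ℝ ((ContinuousLinearMap.apply ℝ ℂ b) ∘ (fderiv ℝ w)) x
        = (ContinuousLinearMap.apply ℝ ℂ b).comp (fderiv ℝ (fderiv ℝ w) x) := by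
      rw [fderiv_comp x (ContinuousLinearMap.differentiableAt _) hdiff,
        ContinuousLinearMap.fderiv]
    show fderiv ℝ (pdv b w) x a = _
    rw [h1, h2]; rfl
  rw [key, key, hsym.eq]

lemma an_iter {w : ℝ × ℝ → ℂ} (hw : AnalyticOnNhd ℝ w Ω) (v : ℝ × ℝ) (n : ℕ) :
    AnalyticOnNhd ℝ ((pdv v)^[n] w) Ω := by
  induction n with
  | zero => exact hw
  | succ n ih => rw [Function.iterate_succ_apply']; exact an_pdv ih v

lemma iter_congr (hΩ : IsOpen Ω) {f g : ℝ × ℝ → ℂ} (hfg : ∀ y ∈ Ω, f y = g y) (v : ℝ × ℝ)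
    (n : ℕ) : ∀ x ∈ Ω, (pdv v)^[n] f x = (pdv v)^[n] g x := by
  induction n with
  | zero => exact hfg
  | succ n ih =>
    intro x hx
    rw [Function.iterate_succ_apply', Function.iterate_succ_apply']
    exact pdv_congr hΩ ih hx v

lemma comm_iter (hΩ : IsOpen Ω) {w : ℝ × ℝ → ℂ} (hw : AnalyticOnNhd ℝ w Ω)
    (v v' : ℝ × ℝ) (n : ℕ) : ∀ x ∈ Ω, pdv v' ((pdv v)^[n] w) x = (pdv v)^[n] (pdv v' w) x := by
  induction n generalizing w with
  | zero => intro x _; rfl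
  | succ n ih =>
    intro x hx
    rw [Function.iterate_succ_apply, Function.iterate_succ_apply]
    have h1 := ih (an_pdv hw v) x hx
    rw [h1]
    exact iter_congr hΩ (fun y hy => pdv_comm hΩ hw hy v' v) v n x hx






noncomputable def M (a b : ℕ) (w : ℝ × ℝ → ℂ) : ℝ × ℝ → ℂ :=
  (pdv (1, 0))^[a] ((pdv (0, 1))^[b] w)

lemma pdv_lin (hΩ : IsOpen Ω) {f g : ℝ × ℝ → ℂ} (hf : AnalyticOnNhd ℝ f Ω)
    (hg : AnalyticOnNhd ℝ g Ω) (c d : ℂ) (v : ℝ × ℝ) :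
    ∀ x ∈ Ω, pdv v (fun y => c * f y + d * g y) x = c * pdv v f x + d * pdv v g x := by
  intro x hx
  have hdf : DifferentiableAt ℝ f x := (hf x hx).differentiableAt
  have hdg : DifferentiableAt ℝ g x := (hg x hx).differentiableAt
  have h1 : (fun y => c * f y + d * g y) = (fun y => c • f y + d • g y) := by
    simp [smul_eq_mul]
  show fderiv ℝ (fun y => c * f y + d * g y) x v = _
  rw [h1, fderiv_fun_add (f := fun y => c • f y) (g := fun y => d • g y) (hdf.const_smul c) (hdg.const_smul d), fderiv_fun_const_smul hdf,
    fderiv_fun_const_smul hdg]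
  simp [smul_eq_mul]
  rfl

lemma an_lin {f g : ℝ × ℝ → ℂ} (hf : AnalyticOnNhd ℝ f Ω) (hg : AnalyticOnNhd ℝ g Ω)
    (c d : ℂ) : AnalyticOnNhd ℝ (fun y => c * f y + d * g y) Ω :=
  ((analyticOnNhd_const).mul hf).add ((analyticOnNhd_const).mul hg)

lemma iter_lin (hΩ : IsOpen Ω) {f g : ℝ × ℝ → ℂ} (hf : AnalyticOnNhd ℝ f Ω)
    (hg : AnalyticOnNhd ℝ g Ω) (c d : ℂ) (v : ℝ × ℝ) (n : ℕ) :
    ∀ x ∈ Ω, (pdv v)^[n] (fun y => c * f y + d * g y) x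
      = c * (pdv v)^[n] f x + d * (pdv v)^[n] g x := by
  induction n generalizing f g with
  | zero => intro x _; rfl
  | succ n ih =>
    intro x hx
    rw [Function.iterate_succ_apply', Function.iterate_succ_apply',
      Function.iterate_succ_apply']
    have h1 : ∀ y ∈ Ω, (pdv v)^[n] (fun y => c * f y + d * g y) y
        = c * (pdv v)^[n] f y + d * (pdv v)^[n] g y := ih hf hg
    rw [pdv_congr hΩ h1 hx v]
    exact pdv_lin hΩ (an_iter hf v n) (an_iter hg v n) c d v x hx

lemma iter_congr2 (hΩ : IsOpen Ω) {f g : ℝ × ℝ → ℂ} (hfg : ∀ y ∈ Ω, f y = g y)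
    (a b : ℕ) : ∀ x ∈ Ω, M a b f x = M a b g x := by
  intro x hx
  exact iter_congr hΩ (fun y hy => iter_congr hΩ hfg (0,1) b y hy) (1,0) a x hx

lemma an_M {w : ℝ × ℝ → ℂ} (hw : AnalyticOnNhd ℝ w Ω) (a b : ℕ) :
    AnalyticOnNhd ℝ (M a b w) Ω := an_iter (an_iter hw _ b) _ a

lemma M_lin (hΩ : IsOpen Ω) {f g : ℝ × ℝ → ℂ} (hf : AnalyticOnNhd ℝ f Ω)
    (hg : AnalyticOnNhd ℝ g Ω) (c d : ℂ) (a b : ℕ) :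
    ∀ x ∈ Ω, M a b (fun y => c * f y + d * g y) x = c * M a b f x + d * M a b g x := by
  intro x hx
  have h1 : ∀ y ∈ Ω, (pdv (0,1))^[b] (fun y => c * f y + d * g y) y
      = c * (pdv (0,1))^[b] f y + d * (pdv (0,1))^[b] g y := iter_lin hΩ hf hg c d _ b
  unfold M
  rw [iter_congr hΩ h1 (1,0) a x hx]
  exact iter_lin hΩ (an_iter hf _ b) (an_iter hg _ b) c d _ a x hx

lemma pdv_zerofun (v : ℝ × ℝ) : pdv v (fun _ => (0 : ℂ)) = fun _ => (0 : ℂ) := by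
  funext x
  simp [pdv, fderiv_const]

lemma M_zero (a b : ℕ) (x : ℝ × ℝ) : M a b (fun _ => (0 : ℂ)) x = 0 := by
  unfold M
  rw [Function.iterate_fixed (pdv_zerofun (0,1)) b,
    Function.iterate_fixed (pdv_zerofun (1,0)) a]

lemma M_pdv (hΩ : IsOpen Ω) {w : ℝ × ℝ → ℂ} (hw : AnalyticOnNhd ℝ w Ω) (v : ℝ × ℝ)
    (a b : ℕ) : ∀ x ∈ Ω, M a b (pdv v w) x
      = (v.1 : ℂ) * M (a+1) b w x + (v.2 : ℂ) * M a (b+1) w x := by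
  intro x hx
  have hsplit : ∀ y ∈ Ω, pdv v w y
      = (v.1 : ℂ) * pdv (1,0) w y + (v.2 : ℂ) * pdv (0,1) w y := by
    intro y hy
    have hv : v = v.1 • ((1:ℝ), (0:ℝ)) + v.2 • ((0:ℝ), (1:ℝ)) := by
      simp [Prod.ext_iff]
    show fderiv ℝ w y v = _
    rw [hv, map_add, map_smul, map_smul]
    simp [Complex.real_smul]
    rfl
  rw [iter_congr2 hΩ hsplit a b x hx,
    M_lin hΩ (an_pdv hw (1,0)) (an_pdv hw (0,1)) _ _ a b x hx]
  have h2 : ∀ y ∈ Ω, (pdv (0,1))^[b] (pdv (1,0) w) y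
      = pdv (1,0) ((pdv (0,1))^[b] w) y := fun y hy => (comm_iter hΩ hw _ _ b y hy).symm
  have e1 : M a b (pdv (1,0) w) x = M (a+1) b w x := by
    unfold M
    rw [iter_congr hΩ h2 (1,0) a x hx, ← Function.iterate_succ_apply]
  have e2 : M a b (pdv (0,1) w) x = M a (b+1) w x := by
    unfold M
    rw [← Function.iterate_succ_apply]
  rw [e1, e2]


lemma peel (hΩ : IsOpen Ω) {w : ℝ × ℝ → ℂ} (hw : AnalyticOnNhd ℝ w Ω)
    {x : ℝ × ℝ} (hx : x ∈ Ω) {n : ℕ} (m : Fin (n + 1) → ℝ × ℝ) :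
    iteratedFDeriv ℝ (n + 1) w x m
      = iteratedFDeriv ℝ n (pdv (m (Fin.last n)) w) x (Fin.init m) := by
  rw [iteratedFDeriv_succ_apply_right]
  have hcd : ContDiffOn ℝ n (fderiv ℝ w) Ω := (hw.fderiv).contDiffOn hΩ.uniqueDiffOn
  have key : iteratedFDeriv ℝ n (pdv (m (Fin.last n)) w) x
      = (ContinuousLinearMap.apply ℝ ℂ (m (Fin.last n))).compContinuousMultilinearMap
          (iteratedFDeriv ℝ n (fderiv ℝ w) x) := by
    rw [← iteratedFDerivWithin_of_isOpen n hΩ hx, ← iteratedFDerivWithin_of_isOpen n hΩ hx]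
    exact ContinuousLinearMap.iteratedFDerivWithin_comp_left
      (ContinuousLinearMap.apply ℝ ℂ (m (Fin.last n))) (hcd x hx) hΩ.uniqueDiffOn hx le_rfl
  rw [key]
  rfl

def cntT {n : ℕ} (f : Fin n → Bool) : ℕ := ∑ i, (if f i then 1 else 0)
def cntF {n : ℕ} (f : Fin n → Bool) : ℕ := ∑ i, (if f i then 0 else 1)

lemma cnt_add {n : ℕ} (f : Fin n → Bool) : cntF f + cntT f = n := by
  unfold cntF cntT
  rw [← Finset.sum_add_distrib]
  have : ∀ i, ((if f i then 0 else 1) + (if f i then 1 else 0) : ℕ) = 1 := by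
    intro i; by_cases hb : f i <;> simp [hb]
  simp [this]

def snocEquiv (n : ℕ) : ((Fin n → Bool) × Bool) ≃ (Fin (n + 1) → Bool) where
  toFun p := Fin.snoc p.1 p.2
  invFun g := (Fin.init g, g (Fin.last n))
  left_inv p := by simp
  right_inv g := by simp

lemma cntT_snoc {n : ℕ} (f : Fin n → Bool) (b : Bool) :
    cntT (Fin.snoc f b : Fin (n+1) → Bool) = cntT f + (if b then 1 else 0) := by
  unfold cntT
  rw [Fin.sum_univ_castSucc]
  simp

lemma cntF_snoc {n : ℕ} (f : Fin n → Bool) (b : Bool) :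
    cntF (Fin.snoc f b : Fin (n+1) → Bool) = cntF f + (if b then 0 else 1) := by
  unfold cntF
  rw [Fin.sum_univ_castSucc]
  simp

lemma prod_snoc {n : ℕ} (f : Fin n → Bool) (b : Bool) (A B : ℂ) :
    (∏ i, (if (Fin.snoc f b : Fin (n+1) → Bool) i then A else B))
      = (∏ i, (if f i then A else B)) * (if b then A else B) := by
  rw [Fin.prod_univ_castSucc]
  simp

lemma expand (hΩ : IsOpen Ω) : ∀ (n : ℕ) {w : ℝ × ℝ → ℂ}, AnalyticOnNhd ℝ w Ω →
    ∀ {x : ℝ × ℝ}, x ∈ Ω → ∀ (v : ℝ × ℝ),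
    iteratedFDeriv ℝ n w x (fun _ => v)
      = ∑ f : Fin n → Bool,
          (∏ i, (if f i then (v.2 : ℂ) else (v.1 : ℂ))) * M (cntF f) (cntT f) w x := by
  intro n
  induction n with
  | zero =>
    intro w hw x hx v
    rw [iteratedFDeriv_zero_apply]
    rw [Finset.sum_eq_single (fun i => i.elim0)]
    · simp [M, cntF, cntT]
    · intro g _ hg; exact absurd (funext fun i => i.elim0) hg
    · intro hmem; exact absurd (Finset.mem_univ _) hmem
  | succ n ih =>
    intro w hw x hx v
    have hlast : (fun _ : Fin (n+1) => v) (Fin.last n) = v := rfl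
    have hinit : Fin.init (fun _ : Fin (n+1) => v) = fun _ : Fin n => v := rfl
    rw [peel hΩ hw hx]; rw [hinit, ih (an_pdv hw v) hx v]
    have hterm : ∀ f : Fin n → Bool,
        (∏ i, (if f i then (v.2 : ℂ) else (v.1 : ℂ))) * M (cntF f) (cntT f) (pdv v w) x
        = (∏ i, (if f i then (v.2 : ℂ) else (v.1 : ℂ)))
            * ((v.1 : ℂ) * M (cntF f + 1) (cntT f) w x
               + (v.2 : ℂ) * M (cntF f) (cntT f + 1) w x) := by
      intro f
      rw [M_pdv hΩ hw v _ _ x hx]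
    rw [Finset.sum_congr rfl (fun f _ => hterm f)]
    rw [← Equiv.sum_comp (snocEquiv n)
      (fun g => (∏ i, (if g i then (v.2 : ℂ) else (v.1 : ℂ))) * M (cntF g) (cntT g) w x)]
    rw [Fintype.sum_prod_type]
    apply Finset.sum_congr rfl
    intro f _
    rw [Fintype.sum_bool]
    have hs : ∀ b : Bool, (snocEquiv n) (f, b) = (Fin.snoc f b : Fin (n+1) → Bool) :=
      fun b => rfl
    rw [hs, hs, prod_snoc, prod_snoc, cntT_snoc, cntF_snoc, cntT_snoc, cntF_snoc]
    simp only [if_true, if_false, Bool.false_eq_true, add_zero]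
    ring



lemma line_deriv (hΩ : IsOpen Ω) {w : ℝ × ℝ → ℂ} (hw : AnalyticOnNhd ℝ w Ω)
    (h0 : (0 : ℝ × ℝ) ∈ Ω) (v : ℝ × ℝ) (n : ℕ) :
    iteratedFDeriv ℝ n (fun t : ℝ => w (t • v)) 0 (fun _ => (1 : ℝ))
      = iteratedFDeriv ℝ n w 0 (fun _ => v) := by
  set ℓ : ℝ →L[ℝ] ℝ × ℝ := ContinuousLinearMap.toSpanSingleton ℝ v with hℓ
  have hfun : (fun t : ℝ => w (t • v)) = w ∘ ℓ := by
    funext t; simp [hℓ, ContinuousLinearMap.toSpanSingleton_apply]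
  have hpre : IsOpen (ℓ ⁻¹' Ω) := hΩ.preimage ℓ.continuous
  have hl0 : ℓ (0 : ℝ) = 0 := map_zero ℓ
  have h0' : (0 : ℝ) ∈ ℓ ⁻¹' Ω := by
    simp only [Set.mem_preimage, hl0]; exact h0
  have hl1 : ℓ (1 : ℝ) = v := by
    simp [hℓ, ContinuousLinearMap.toSpanSingleton_apply]
  have hmem : ℓ (0 : ℝ) ∈ Ω := by rw [hl0]; exact h0
  have key := ContinuousLinearMap.iteratedFDerivWithin_comp_right ℓ
    (hw.contDiffOn hΩ.uniqueDiffOn : ContDiffOn ℝ n w Ω) hΩ.uniqueDiffOn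
    hpre.uniqueDiffOn hmem le_rfl
  have happ : iteratedFDerivWithin ℝ n (w ∘ ℓ) (ℓ ⁻¹' Ω) 0 (fun _ => (1:ℝ))
      = iteratedFDerivWithin ℝ n w Ω (ℓ 0) (fun _ => ℓ 1) := by rw [key]; rfl
  calc iteratedFDeriv ℝ n (fun t : ℝ => w (t • v)) 0 (fun _ => (1:ℝ))
      = iteratedFDerivWithin ℝ n (w ∘ ℓ) (ℓ ⁻¹' Ω) 0 (fun _ => (1:ℝ)) := by
        rw [hfun, iteratedFDerivWithin_of_isOpen n hpre h0']
    _ = iteratedFDerivWithin ℝ n w Ω (ℓ 0) (fun _ => ℓ 1) := happ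
    _ = iteratedFDeriv ℝ n w 0 (fun _ => v) := by
        rw [hl1, hl0, iteratedFDerivWithin_of_isOpen n hΩ h0]

lemma ray_vanish (hΩ : IsOpen Ω) {w : ℝ × ℝ → ℂ} (hw : AnalyticOnNhd ℝ w Ω)
    (h0 : (0 : ℝ × ℝ) ∈ Ω) (v : ℝ × ℝ) {h : ℝ} (hh : 0 < h)
    (hz : ∀ r : ℝ, 0 ≤ r → r ≤ h → w (r • v) = 0) (n : ℕ) :
    iteratedFDeriv ℝ n w 0 (fun _ => v) = 0 := by
  set g : ℝ → ℂ := fun t => w (t • v) with hg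
  have hga : AnalyticAt ℝ g 0 := by
    have hl : AnalyticAt ℝ (ContinuousLinearMap.toSpanSingleton ℝ v) 0 :=
      (ContinuousLinearMap.toSpanSingleton ℝ v).analyticAt 0
    have hw0 : AnalyticAt ℝ w (ContinuousLinearMap.toSpanSingleton ℝ v 0) := by
      rw [map_zero]; exact hw 0 h0
    have hcomp := hw0.comp hl
    have hfun : g = w ∘ (ContinuousLinearMap.toSpanSingleton ℝ v) := by
      funext t; simp [hg, ContinuousLinearMap.toSpanSingleton_apply]
    rw [hfun]; exact hcomp
  have hfreq : ∃ᶠ t in nhdsWithin 0 {(0:ℝ)}ᶜ, g t = 0 := by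
    have h1 : Filter.Tendsto (fun k : ℕ => h / (k + 1)) Filter.atTop (nhds (0:ℝ)) := by
      have := tendsto_one_div_add_atTop_nhds_zero_nat.const_mul h
      rw [mul_zero] at this
      apply this.congr
      intro k; rw [mul_one_div]
    have hseq : Filter.Tendsto (fun k : ℕ => h / (k + 1)) Filter.atTop
        (nhdsWithin 0 {(0:ℝ)}ᶜ) := by
      apply tendsto_nhdsWithin_of_tendsto_nhds_of_eventually_within _ h1
      filter_upwards with k
      have hpos : 0 < h / ((k:ℝ) + 1) := by positivity
      exact Set.mem_compl_singleton_iff.mpr (ne_of_gt hpos)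
    apply hseq.frequently
    apply Filter.Frequently.of_forall
    intro k
    apply hz
    · positivity
    · exact div_le_self hh.le (le_add_of_nonneg_left (Nat.cast_nonneg k))
  have hev : ∀ᶠ t in nhds (0:ℝ), g t = 0 := hga.frequently_zero_iff_eventually_zero.mp hfreq
  have hiter : iteratedFDeriv ℝ n g 0 = 0 := by
    have heq : g =ᶠ[nhds (0:ℝ)] (fun _ : ℝ => (0:ℂ)) := hev
    have h2 : iteratedFDeriv ℝ n g 0 = iteratedFDeriv ℝ n (fun _ : ℝ => (0:ℂ)) 0 := by
      rw [← iteratedFDerivWithin_univ, ← iteratedFDerivWithin_univ]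
      exact Filter.EventuallyEq.iteratedFDerivWithin_eq (f := fun _ : ℝ => (0:ℂ))
        (f₁ := g) (s := Set.univ) (by rw [nhdsWithin_univ]; exact heq) heq.self_of_nhds n
    rw [h2, iteratedFDeriv_zero_fun]
    rfl
  rw [← line_deriv hΩ hw h0 v n]
  show iteratedFDeriv ℝ n g 0 (fun _ => (1:ℝ)) = 0
  rw [hiter]
  simp



lemma prod_if {n : ℕ} (f : Fin n → Bool) (x y : ℂ) :
    (∏ i, (if f i then x else y)) = x ^ cntT f * y ^ cntF f := by
  unfold cntT cntF
  induction n with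
  | zero => simp
  | succ n ih =>
    rw [Fin.prod_univ_castSucc, Fin.sum_univ_castSucc, Fin.sum_univ_castSucc,
      ih (fun i => f (Fin.castSucc i)), pow_add, pow_add]
    by_cases hb : f (Fin.last n) <;> simp [hb] <;> ring

lemma sum_prod_bool (n : ℕ) (A B : ℂ) :
    (∑ f : Fin n → Bool, ∏ i, (if f i then A else B)) = (A + B) ^ n := by
  have key := Finset.prod_univ_sum (fun _ : Fin n => (Finset.univ : Finset Bool))
    (fun _ b => if b then A else B)
  rw [Fintype.piFinset_univ] at key
  rw [← key]
  have h1 : ∀ i : Fin n, (∑ b ∈ (Finset.univ : Finset Bool), (if b then A else B)) = A + B := by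
    intro i; simp
  rw [Finset.prod_congr rfl (fun i _ => h1 i), Finset.prod_const]
  simp

lemma deMoivre (θ : ℝ) (N : ℕ) :
    ((Complex.I * (Real.sin θ : ℂ) + (Real.cos θ : ℂ)) ^ N)
      + ((-Complex.I * (Real.sin θ : ℂ) + (Real.cos θ : ℂ)) ^ N)
      = 2 * ((Real.cos (N * θ) : ℝ) : ℂ) := by
  have h1 : (Complex.I * (Real.sin θ : ℂ) + (Real.cos θ : ℂ))
      = Complex.exp ((θ : ℂ) * Complex.I) := by
    rw [Complex.exp_mul_I, ← Complex.ofReal_cos, ← Complex.ofReal_sin]; ring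
  have h2 : (-Complex.I * (Real.sin θ : ℂ) + (Real.cos θ : ℂ))
      = Complex.exp (-(θ : ℂ) * Complex.I) := by
    rw [Complex.exp_mul_I, Complex.cos_neg, Complex.sin_neg,
      ← Complex.ofReal_cos, ← Complex.ofReal_sin]; ring
  rw [h1, h2, ← Complex.exp_nat_mul, ← Complex.exp_nat_mul]
  have h3 : (N : ℂ) * ((θ : ℂ) * Complex.I) = ((N * θ : ℝ) : ℂ) * Complex.I := by
    push_cast; ring
  have h4 : (N : ℂ) * (-(θ : ℂ) * Complex.I) = (-((N * θ : ℝ) : ℂ)) * Complex.I := by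
    push_cast; ring
  rw [h3, h4, Complex.exp_mul_I, Complex.exp_mul_I, Complex.cos_neg, Complex.sin_neg,
    ← Complex.ofReal_cos]
  ring

lemma cos_ne_zero_of_irrational {α : ℝ} (hirr : Irrational α) (N : ℕ) (hN : 0 < N) :
    Real.cos (N * (α * Real.pi)) ≠ 0 := by
  intro hcos
  rw [Real.cos_eq_zero_iff] at hcos
  obtain ⟨k, hk⟩ := hcos
  have hπ : Real.pi ≠ 0 := Real.pi_ne_zero
  have hNα : (N : ℝ) * α = (2 * k + 1) / 2 := by
    have h5 : ((N : ℝ) * α) * Real.pi = ((2 * (k : ℝ) + 1) / 2) * Real.pi := by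
      linear_combination hk
    exact mul_right_cancel₀ hπ h5
  have hNne : (N : ℝ) ≠ 0 := Nat.cast_ne_zero.mpr hN.ne'
  have hα : α = (2 * (k : ℝ) + 1) / (2 * N) := by
    field_simp at hNα ⊢
    linarith [hNα]
  apply hirr
  refine ⟨(2 * k + 1) / (2 * N), ?_⟩
  rw [hα]
  push_cast
  ring

end Stmt12Aux


open Stmt12Aux

/-- A singular line `Γ_h^−` and a nodal line `Γ_h^+` intersecting at the origin at an
irrational angle `θ₀ = απ`, `α ∈ (0,2)` irrational: `u` has infinite vanishing order
at `0`. -/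
theorem stmt12
    (Ω : Set (ℝ × ℝ)) (hΩ : IsOpen Ω)
    (lam : ℝ) (hlam : 0 < lam)
    (u : ℝ × ℝ → ℂ)
    (hu_an : AnalyticOnNhd ℝ u Ω)
    (hu_eq : ∀ x ∈ Ω, pd1 (pd1 u) x + pd2 (pd2 u) x + (lam : ℂ) * u x = 0)
    (α : ℝ) (hα : α ∈ Set.Ioo (0 : ℝ) 2) (hirr : Irrational α)
    (θ₀ : ℝ) (hθ₀ : θ₀ = α * Real.pi)
    (h : ℝ) (hh : 0 < h)
    (hdisk : ∀ x : ℝ × ℝ, x.1 ^ 2 + x.2 ^ 2 ≤ h ^ 2 → x ∈ Ω)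
    (hsing_m : ∀ r : ℝ, 0 ≤ r → r ≤ h → fderiv ℝ u (r, 0) (0, -1) = 0)
    (hnodal_p : ∀ r : ℝ, 0 ≤ r → r ≤ h → u (r * Real.cos θ₀, r * Real.sin θ₀) = 0) :
    ∀ k : ℕ, iteratedFDeriv ℝ k u (0, 0) = 0 := by
  classical
  have h0 : (0 : ℝ × ℝ) ∈ Ω := by
    apply hdisk
    simp
    positivity
  -- PDE relations on mixed partials at 0
  have hpde : ∀ a b : ℕ,
      M (a+2) b u (0 : ℝ × ℝ) + M a (b+2) u 0 + (lam : ℂ) * M a b u 0 = 0 := by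
    intro a b
    set G : ℝ × ℝ → ℂ := fun y => pd1 (pd1 u) y + pd2 (pd2 u) y with hG
    have hg1 : AnalyticOnNhd ℝ (pd1 (pd1 u)) Ω := an_pdv (an_pdv hu_an (1,0)) (1,0)
    have hg2 : AnalyticOnNhd ℝ (pd2 (pd2 u)) Ω := an_pdv (an_pdv hu_an (0,1)) (0,1)
    have hGa : AnalyticOnNhd ℝ G Ω := hg1.add hg2
    have hF0 : M a b (fun y => G y + (lam : ℂ) * u y) (0 : ℝ × ℝ) = 0 := by
      have hzero : ∀ y ∈ Ω, (fun y => G y + (lam : ℂ) * u y) y = (fun _ => (0 : ℂ)) y := by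
        intro y hy
        simpa [hG] using hu_eq y hy
      rw [iter_congr2 hΩ hzero a b _ h0, M_zero]
    have hsplit1 : ∀ y ∈ Ω, (fun y => G y + (lam : ℂ) * u y) y
        = (fun y => (1 : ℂ) * G y + (lam : ℂ) * u y) y := by intro y _; simp
    rw [iter_congr2 hΩ hsplit1 a b _ h0,
      M_lin hΩ hGa hu_an 1 (lam : ℂ) a b _ h0] at hF0
    have hsplit2 : ∀ y ∈ Ω, G y = (1:ℂ) * pd1 (pd1 u) y + (1:ℂ) * pd2 (pd2 u) y := by
      intro y _; simp [hG]
    rw [iter_congr2 hΩ hsplit2 a b _ h0, M_lin hΩ hg1 hg2 1 1 a b _ h0] at hF0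
    have e1 : M a b (pd1 (pd1 u)) (0 : ℝ × ℝ) = M (a+2) b u 0 := by
      have hc1 : ∀ y ∈ Ω, (pdv (0,1))^[b] (pdv (1,0) (pdv (1,0) u)) y
          = pdv (1,0) ((pdv (0,1))^[b] (pdv (1,0) u)) y :=
        fun y hy => (comm_iter hΩ (an_pdv hu_an (1,0)) _ _ b y hy).symm
      have hc2 : ∀ y ∈ Ω, (pdv (0,1))^[b] (pdv (1,0) u) y
          = pdv (1,0) ((pdv (0,1))^[b] u) y :=
        fun y hy => (comm_iter hΩ hu_an _ _ b y hy).symm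
      have hc3 : ∀ y ∈ Ω, pdv (1,0) ((pdv (0,1))^[b] (pdv (1,0) u)) y
          = pdv (1,0) (pdv (1,0) ((pdv (0,1))^[b] u)) y :=
        fun y hy => pdv_congr hΩ hc2 hy (1,0)
      have hchain : ∀ y ∈ Ω, (pdv (0,1))^[b] (pdv (1,0) (pdv (1,0) u)) y
          = pdv (1,0) (pdv (1,0) ((pdv (0,1))^[b] u)) y :=
        fun y hy => (hc1 y hy).trans (hc3 y hy)
      show (pdv (1,0))^[a] ((pdv (0,1))^[b] (pdv (1,0) (pdv (1,0) u))) (0 : ℝ × ℝ) = _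
      rw [iter_congr hΩ hchain (1,0) a _ h0,
        show pdv (1,0) (pdv (1,0) ((pdv (0,1))^[b] u))
          = (pdv (1,0))^[2] ((pdv (0,1))^[b] u) from rfl,
        ← Function.iterate_add_apply]
      rfl
    have e2 : M a b (pd2 (pd2 u)) (0 : ℝ × ℝ) = M a (b+2) u 0 := by
      show (pdv (1,0))^[a] ((pdv (0,1))^[b] (pdv (0,1) (pdv (0,1) u))) (0 : ℝ × ℝ) = _
      rw [show (pdv (0,1))^[b] (pdv (0,1) (pdv (0,1) u))
          = (pdv (0,1))^[b] ((pdv (0,1))^[2] u) from rfl,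
        ← Function.iterate_add_apply]
      rfl
    rw [e1, e2] at hF0
    linear_combination hF0
  -- singular line: M n 1 u 0 = 0
  have hsing : ∀ n : ℕ, M n 1 u (0 : ℝ × ℝ) = 0 := by
    intro n
    have hw : AnalyticOnNhd ℝ (pdv (0,1) u) Ω := an_pdv hu_an (0,1)
    have hzline : ∀ r : ℝ, 0 ≤ r → r ≤ h → (pdv (0,1) u) (r • ((1:ℝ),(0:ℝ))) = 0 := by
      intro r h0r hrh
      have hr : r • ((1:ℝ),(0:ℝ)) = ((r:ℝ), (0:ℝ)) := by
        simp [Prod.smul_def]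
      rw [hr]
      have hfd := hsing_m r h0r hrh
      show fderiv ℝ u (r, 0) (0, 1) = 0
      have hneg : ((0:ℝ),(1:ℝ)) = -((0:ℝ),(-1:ℝ)) := by norm_num
      rw [hneg, map_neg, hfd, neg_zero]
    have hvan := ray_vanish hΩ hw h0 ((1:ℝ),(0:ℝ)) hh hzline n
    have hexp := expand hΩ n hw h0 ((1:ℝ),(0:ℝ))
    rw [hvan] at hexp
    rw [Finset.sum_eq_single (fun _ => false)] at hexp
    · have hprod : (∏ i : Fin n,
          (if (fun _ => false : Fin n → Bool) i then ((((1:ℝ),(0:ℝ)).2 : ℝ) : ℂ)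
            else ((((1:ℝ),(0:ℝ)).1 : ℝ) : ℂ))) = 1 := by simp
      have hcF : cntF (fun _ => false : Fin n → Bool) = n := by simp [cntF]
      have hcT : cntT (fun _ => false : Fin n → Bool) = 0 := by simp [cntT]
      rw [hprod, hcF, hcT, one_mul] at hexp
      have : M n 0 (pdv (0,1) u) (0 : ℝ × ℝ) = M n 1 u 0 := rfl
      rw [this] at hexp
      exact hexp.symm
    · intro g _ hg
      have hex : ∃ i, g i = true := by
        by_contra hc
        push_neg at hc
        exact hg (funext fun i => by simpa using hc i)
      obtain ⟨i, hi⟩ := hex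
      rw [Finset.prod_eq_zero (Finset.mem_univ i) (by simp [hi]), zero_mul]
    · intro habs
      exact absurd (Finset.mem_univ _) habs
  -- nodal line constraints
  have hnodal : ∀ n : ℕ, (∑ f : Fin n → Bool,
      (∏ i, (if f i then ((Real.sin θ₀ : ℝ) : ℂ) else ((Real.cos θ₀ : ℝ) : ℂ)))
        * M (cntF f) (cntT f) u (0 : ℝ × ℝ)) = 0 := by
    intro n
    have hzline : ∀ r : ℝ, 0 ≤ r → r ≤ h →
        u (r • ((Real.cos θ₀ : ℝ), (Real.sin θ₀ : ℝ))) = 0 := by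
      intro r h0r hrh
      have hr : r • ((Real.cos θ₀ : ℝ), (Real.sin θ₀ : ℝ))
          = (r * Real.cos θ₀, r * Real.sin θ₀) := by simp [Prod.smul_def]
      rw [hr]
      exact hnodal_p r h0r hrh
    have hvan := ray_vanish hΩ hu_an h0 _ hh hzline n
    have hexp := expand hΩ n hu_an h0 ((Real.cos θ₀ : ℝ), (Real.sin θ₀ : ℝ))
    rw [hvan] at hexp
    exact hexp.symm
  -- main level induction
  have main : ∀ N : ℕ, ∀ a b : ℕ, a + b = N → M a b u (0 : ℝ × ℝ) = 0 := by
    intro N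
    induction N using Nat.strong_induction_on with
    | _ N IH =>
    have hCF : ∀ b a : ℕ, a + b = N → M a b u (0 : ℝ × ℝ)
        = M N 0 u 0 * (Complex.I ^ b + (-Complex.I) ^ b) / 2 := by
      intro b
      induction b using Nat.strong_induction_on with
      | _ b IHb =>
      intro a hab
      rcases b with _ | b
      · have ha : a = N := by omega
        subst ha
        norm_num
      · rcases b with _ | b
        · rw [hsing a]
          simp
        · have hrec := hpde a b
          have hlow : M a b u (0 : ℝ × ℝ) = 0 := IH (a + b) (by omega) a b rfl
          rw [hlow, mul_zero, add_zero] at hrec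
          have hprev : M (a+2) b u (0 : ℝ × ℝ)
              = M N 0 u 0 * (Complex.I ^ b + (-Complex.I) ^ b) / 2 :=
            IHb b (by omega) (a+2) (by omega)
          have hkey : M a (b+2) u (0 : ℝ × ℝ) = - M (a+2) b u 0 := by
            linear_combination hrec
          rw [hkey, hprev]
          have hI : Complex.I ^ (b+2) = - Complex.I ^ b := by
            rw [pow_add, Complex.I_sq]; ring
          have hI' : (-Complex.I) ^ (b+2) = - (-Complex.I) ^ b := by
            rw [pow_add]
            have : (-Complex.I) ^ 2 = -1 := by
              rw [neg_pow, Complex.I_sq]; norm_num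
            rw [this]; ring
          rw [hI, hI']
          ring
    have hnod := hnodal N
    have hsub : ∀ f : Fin N → Bool,
        (∏ i, (if f i then ((Real.sin θ₀ : ℝ) : ℂ) else ((Real.cos θ₀ : ℝ) : ℂ)))
          * M (cntF f) (cntT f) u (0 : ℝ × ℝ)
        = M N 0 u 0 / 2 *
            ((∏ i, (if f i then Complex.I * ((Real.sin θ₀ : ℝ) : ℂ)
                else ((Real.cos θ₀ : ℝ) : ℂ)))
             + (∏ i, (if f i then -Complex.I * ((Real.sin θ₀ : ℝ) : ℂ)
                else ((Real.cos θ₀ : ℝ) : ℂ)))) := by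
      intro f
      rw [hCF (cntT f) (cntF f) (cnt_add f), prod_if, prod_if, prod_if, mul_pow, mul_pow]
      ring
    rw [Finset.sum_congr rfl (fun f _ => hsub f), ← Finset.mul_sum,
      Finset.sum_add_distrib, sum_prod_bool, sum_prod_bool, deMoivre θ₀ N] at hnod
    have hc0 : M N 0 u (0 : ℝ × ℝ) = 0 := by
      rcases Nat.eq_zero_or_pos N with hN0 | hNpos
      · subst hN0
        rw [Nat.cast_zero, zero_mul, Real.cos_zero] at hnod
        simpa using hnod
      · have hcos : Real.cos ((N : ℝ) * θ₀) ≠ 0 := by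
          rw [hθ₀]
          exact cos_ne_zero_of_irrational hirr N hNpos
        have hcosC : ((Real.cos ((N : ℝ) * θ₀) : ℝ) : ℂ) ≠ 0 :=
          Complex.ofReal_ne_zero.mpr hcos
        have h2 : (2 : ℂ) ≠ 0 := two_ne_zero
        rcases mul_eq_zero.mp hnod with h1 | h1
        · rcases mul_eq_zero.mp (by
            have : M N 0 u (0 : ℝ × ℝ) * (1/2 : ℂ) = 0 := by
              rw [div_eq_mul_one_div] at h1; exact h1
            exact this) with h3 | h3
          · exact h3
          · norm_num at h3
        · exfalso
          rcases mul_eq_zero.mp h1 with h3 | h3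
          · norm_num at h3
          · exact hcosC h3
    intro a b hab
    rw [hCF b a hab, hc0, zero_mul, zero_div]
  -- conclusion: diagonal derivatives vanish, hence u = 0 near 0
  have hball : ∀ y : ℝ × ℝ, ∀ n : ℕ, iteratedFDeriv ℝ n u 0 (fun _ => y) = 0 := by
    intro y n
    rw [expand hΩ n hu_an h0 y]
    apply Finset.sum_eq_zero
    intro f _
    rw [main (cntF f + cntT f) (cntF f) (cntT f) rfl, mul_zero]
  obtain ⟨p, hp⟩ := hu_an 0 h0
  obtain ⟨r, hr⟩ := hp
  have hzero : ∀ᶠ y in nhds (0 : ℝ × ℝ), u y = 0 := by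
    have hmem : EMetric.ball (0 : ℝ × ℝ) r ∈ nhds (0 : ℝ × ℝ) :=
      EMetric.ball_mem_nhds _ hr.r_pos
    filter_upwards [hmem] with y hy
    have hs := hr.hasSum_iteratedFDeriv hy
    simp only [hball y, smul_zero] at hs
    have := hs.unique hasSum_zero
    simpa using this
  intro k
  have heq : u =ᶠ[nhds ((0,0) : ℝ × ℝ)] (fun _ : ℝ × ℝ => (0 : ℂ)) := hzero
  have h2 : iteratedFDeriv ℝ k u (0,0) = iteratedFDeriv ℝ k (fun _ : ℝ × ℝ => (0:ℂ)) (0,0) := by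
    rw [← iteratedFDerivWithin_univ, ← iteratedFDerivWithin_univ]
    exact Filter.EventuallyEq.iteratedFDerivWithin_eq (f := fun _ : ℝ × ℝ => (0:ℂ))
      (f₁ := u) (s := Set.univ) (by rw [nhdsWithin_univ]; exact heq) heq.self_of_nhds k
  rw [h2, iteratedFDeriv_zero_fun]
  rfl
end

section
/- Let Ω, λ, u, α, θ₀, h, Γ_h^−, Γ_h^+, ν⁻, ν⁺ be as in the context. Let η₁ : Γ_h^− → ℂ and η₂ : Γ_h^+ → ℂ be continuously differentiable (C¹) functions, and suppose ∇u(x)·ν⁻ + η₁(x)·u(x) = 0 for all x ∈ Γ_h^− and ∇u(x)·ν⁺ + η₂(x)·u(x) = 0 for all x ∈ Γ_h^+. If u(0) = 0 and α ≠ 1/2, then u vanishes at 0 up to order 3, i.e., u(0) = 0, ∇u(0) = 0, and all second-order partial derivatives of u vanish at 0. -/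
lemma clm_eq_zero_of_basis {F : Type*} [NormedAddCommGroup F] [NormedSpace ℝ F]
    (L : ℝ × ℝ →L[ℝ] F) (h1 : L (1, 0) = 0) (h2 : L (0, 1) = 0) : L = 0 := by
  apply ContinuousLinearMap.ext; intro x
  have hx : x = x.1 • ((1 : ℝ), (0 : ℝ)) + x.2 • ((0 : ℝ), (1 : ℝ)) := by
    ext <;> simp
  rw [ContinuousLinearMap.zero_apply, hx, map_add, map_smul, map_smul, h1, h2,
    smul_zero, smul_zero, add_zero]

lemma mul_hasDerivWithinAt_zero {s : Set ℝ} {φ g : ℝ → ℂ}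
    (hφ : ContinuousWithinAt φ s 0) (hg : HasDerivWithinAt g 0 s 0) (hg0 : g 0 = 0) :
    HasDerivWithinAt (fun r => φ r * g r) 0 s 0 := by
  rw [hasDerivWithinAt_iff_isLittleO] at hg ⊢
  simp only [hg0, sub_zero, smul_zero] at hg ⊢
  have hb : φ =O[nhdsWithin 0 s] (fun _ : ℝ => (1 : ℝ)) := hφ.isBigO_one ℝ
  have := hb.mul_isLittleO hg
  simpa using this

/-- Two generalized singular lines with `C¹` parameters `η₁, η₂` intersecting at the origin
at angle `θ₀ = απ`, with `u 0 = 0` and `α ≠ 1/2`: the eigenfunction vanishes at `0` up to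
order `3` (i.e. all partial derivatives of order `< 3` vanish at `0`). -/
theorem stmt13
    (Ω : Set (ℝ × ℝ)) (hΩ : IsOpen Ω)
    (lam : ℝ) (hlam : 0 < lam)
    (u : ℝ × ℝ → ℂ)
    (hu_an : AnalyticOnNhd ℝ u Ω)
    (hu_eq : ∀ x ∈ Ω, pd1 (pd1 u) x + pd2 (pd2 u) x + (lam : ℂ) * u x = 0)
    (α : ℝ) (hα : α ∈ Set.Ioo (0 : ℝ) 1)
    (θ₀ : ℝ) (hθ₀ : θ₀ = α * Real.pi)
    (h : ℝ) (hh : 0 < h)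
    (hdisk : ∀ x : ℝ × ℝ, x.1 ^ 2 + x.2 ^ 2 ≤ h ^ 2 → x ∈ Ω)
    (η₁ η₂ : ℝ × ℝ → ℂ)
    (hη₁ : ContDiffOn ℝ 1 η₁ {p : ℝ × ℝ | ∃ r : ℝ, 0 ≤ r ∧ r ≤ h ∧ p = (r, 0)})
    (hη₂ : ContDiffOn ℝ 1 η₂
      {p : ℝ × ℝ | ∃ r : ℝ, 0 ≤ r ∧ r ≤ h ∧ p = (r * Real.cos θ₀, r * Real.sin θ₀)})
    (hbc₁ : ∀ r : ℝ, 0 ≤ r → r ≤ h →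
      fderiv ℝ u (r, 0) (0, -1) + η₁ (r, 0) * u (r, 0) = 0)
    (hbc₂ : ∀ r : ℝ, 0 ≤ r → r ≤ h →
      fderiv ℝ u (r * Real.cos θ₀, r * Real.sin θ₀) (-Real.sin θ₀, Real.cos θ₀)
        + η₂ (r * Real.cos θ₀, r * Real.sin θ₀) * u (r * Real.cos θ₀, r * Real.sin θ₀) = 0)
    (hu0 : u (0, 0) = 0)
    (hα2 : α ≠ 1 / 2) :
    ∀ k : ℕ, k < 3 → iteratedFDeriv ℝ k u (0, 0) = 0 := by
  have hπ := Real.pi_pos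
  have hθpos : 0 < θ₀ := by rw [hθ₀]; exact mul_pos hα.1 hπ
  have hθlt : θ₀ < Real.pi := by
    rw [hθ₀]; nlinarith [hα.2]
  have hsin : Real.sin θ₀ ≠ 0 := ne_of_gt (Real.sin_pos_of_pos_of_lt_pi hθpos hθlt)
  have hcos : Real.cos θ₀ ≠ 0 := by
    intro hc
    rcases Real.cos_eq_zero_iff.mp hc with ⟨n, hn⟩
    rw [hθ₀] at hn
    have h2α : 2 * α = 2 * (n : ℝ) + 1 := by
      have : α * Real.pi * 2 = (2 * (n : ℝ) + 1) * Real.pi := by rw [hn]; ring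
      nlinarith [hπ]
    have hn1 : (-1 : ℤ) < n := by
      have : (-1 : ℝ) < (n : ℝ) := by nlinarith [hα.1]
      exact_mod_cast this
    have hn2 : n < 1 := by
      have : (n : ℝ) < 1 := by nlinarith [hα.2]
      exact_mod_cast this
    have hn0 : n = 0 := by omega
    rw [hn0] at h2α
    apply hα2
    push_cast at h2α
    linarith
  have h0Ω : ((0 : ℝ), (0 : ℝ)) ∈ Ω := by
    apply hdisk
    simp only [ne_eq, OfNat.ofNat_ne_zero, not_false_eq_true, zero_pow, add_zero]
    positivity
  have hC2 : ContDiffAt ℝ 2 u (0, 0) := (hu_an _ h0Ω).contDiffAt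
  have hdu : DifferentiableAt ℝ u (0, 0) := hC2.differentiableAt (by norm_num)
  have hdf : DifferentiableAt ℝ (fderiv ℝ u) (0, 0) :=
    (hC2.fderiv_right (m := 1) le_rfl).differentiableAt (by norm_num)
  set D : (ℝ × ℝ) →L[ℝ] (ℝ × ℝ) →L[ℝ] ℂ := fderiv ℝ (fderiv ℝ u) (0, 0) with hDdef
  have hD : HasFDerivAt (fderiv ℝ u) D (0, 0) := hdf.hasFDerivAt
  have hev : ∀ᶠ y in nhds ((0 : ℝ), (0 : ℝ)), HasFDerivAt u (fderiv ℝ u y) y := by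
    filter_upwards [hΩ.mem_nhds h0Ω] with y hy
    exact ((hu_an y hy).differentiableAt).hasFDerivAt
  have hsymm : ∀ v w, D v w = D w v := fun v w =>
    second_derivative_symmetric_of_eventually hev hD v w
  -- first-order vanishing
  have hbm : fderiv ℝ u (0, 0) (0, -1) = 0 := by
    have := hbc₁ 0 le_rfl hh.le
    rw [hu0] at this; simpa using this
  have hy0 : fderiv ℝ u (0, 0) ((0 : ℝ), (1 : ℝ)) = 0 := by
    have hneg : ((0 : ℝ), (1 : ℝ)) = -((0 : ℝ), (-1 : ℝ)) := by norm_num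
    rw [hneg, map_neg, hbm, neg_zero]
  have hx0 : fderiv ℝ u (0, 0) ((1 : ℝ), (0 : ℝ)) = 0 := by
    have h2 := hbc₂ 0 le_rfl hh.le
    rw [zero_mul, zero_mul, hu0] at h2
    have hdec : ((-Real.sin θ₀ : ℝ), (Real.cos θ₀ : ℝ))
        = (-Real.sin θ₀) • ((1 : ℝ), (0 : ℝ)) + Real.cos θ₀ • ((0 : ℝ), (1 : ℝ)) := by
      ext <;> simp
    rw [hdec, map_add, map_smul, map_smul, hy0, smul_zero, add_zero, mul_zero, add_zero] at h2
    have := smul_eq_zero.mp h2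
    rcases this with h3 | h3
    · exact absurd (neg_eq_zero.mp h3) hsin
    · exact h3
  have hL0 : fderiv ℝ u (0, 0) = 0 := clm_eq_zero_of_basis _ hx0 hy0
  -- second derivative applied maps
  have hAp : ∀ v : ℝ × ℝ, HasFDerivAt (fun x => fderiv ℝ u x v)
      ((ContinuousLinearMap.apply ℝ ℂ v).comp D) (0, 0) := fun v =>
    ((ContinuousLinearMap.apply ℝ ℂ v).hasFDerivAt).comp (0, 0) hD
  have hU : UniqueDiffWithinAt ℝ (Set.Icc (0 : ℝ) h) 0 :=
    (uniqueDiffOn_Icc hh) 0 ⟨le_rfl, hh.le⟩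
  -- along Γ⁻
  have hγ₁ : HasDerivAt (fun r : ℝ => ((r : ℝ), (0 : ℝ))) ((1 : ℝ), (0 : ℝ)) 0 :=
    HasDerivAt.prodMk (hasDerivAt_id (0 : ℝ)) (hasDerivAt_const (0 : ℝ) (0 : ℝ))
  have hF₁pre : HasDerivAt (fun r : ℝ => fderiv ℝ u (r, 0) ((0 : ℝ), (-1 : ℝ)))
      (((ContinuousLinearMap.apply ℝ ℂ ((0 : ℝ), (-1 : ℝ))).comp D) ((1 : ℝ), (0 : ℝ))) 0 :=
    HasFDerivAt.comp_hasDerivAt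
      (l := fun x : ℝ × ℝ => fderiv ℝ u x ((0 : ℝ), (-1 : ℝ)))
      (f := fun r : ℝ => ((r : ℝ), (0 : ℝ))) 0 (hAp ((0 : ℝ), (-1 : ℝ))) hγ₁
  have hF₁ : HasDerivAt (fun r : ℝ => fderiv ℝ u (r, 0) ((0 : ℝ), (-1 : ℝ)))
      (D (1, 0) (0, -1)) 0 := hF₁pre
  have hg₁ : HasDerivAt (fun r : ℝ => u (r, 0)) 0 0 := by
    have step : HasDerivAt (fun r : ℝ => u (r, 0))
        (fderiv ℝ u (0, 0) ((1 : ℝ), (0 : ℝ))) 0 :=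
      HasFDerivAt.comp_hasDerivAt (l := u) (f := fun r : ℝ => ((r : ℝ), (0 : ℝ))) 0
        hdu.hasFDerivAt hγ₁
    rw [hx0] at step
    exact step
  have hφ₁ : ContinuousWithinAt (fun r : ℝ => η₁ (r, 0)) (Set.Icc 0 h) 0 := by
    have hc : ContinuousWithinAt η₁
        {p : ℝ × ℝ | ∃ r : ℝ, 0 ≤ r ∧ r ≤ h ∧ p = (r, 0)} (0, 0) :=
      hη₁.continuousOn _ ⟨0, le_rfl, hh.le, rfl⟩
    have hmaps : Set.MapsTo (fun r : ℝ => ((r : ℝ), (0 : ℝ))) (Set.Icc 0 h)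
        {p : ℝ × ℝ | ∃ r : ℝ, 0 ≤ r ∧ r ≤ h ∧ p = (r, 0)} :=
      fun r hr => ⟨r, hr.1, hr.2, rfl⟩
    exact ContinuousWithinAt.comp hc (Continuous.continuousWithinAt (by fun_prop)) hmaps
  have hprod₁ : HasDerivWithinAt (fun r : ℝ => η₁ (r, 0) * u (r, 0)) 0 (Set.Icc 0 h) 0 :=
    mul_hasDerivWithinAt_zero hφ₁ hg₁.hasDerivWithinAt hu0
  have hb2 : D (1, 0) ((0 : ℝ), (-1 : ℝ)) = 0 := by
    have hsum : HasDerivWithinAt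
        (fun r : ℝ => fderiv ℝ u (r, 0) ((0 : ℝ), (-1 : ℝ)) + η₁ (r, 0) * u (r, 0))
        (D (1, 0) (0, -1) + 0) (Set.Icc 0 h) 0 := hF₁.hasDerivWithinAt.add hprod₁
    have hzero : HasDerivWithinAt
        (fun r : ℝ => fderiv ℝ u (r, 0) ((0 : ℝ), (-1 : ℝ)) + η₁ (r, 0) * u (r, 0))
        0 (Set.Icc 0 h) 0 := by
      apply (hasDerivWithinAt_const (0 : ℝ) (Set.Icc 0 h) (0 : ℂ)).congr
      · intro y hy; exact hbc₁ y hy.1 hy.2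
      · exact hbc₁ 0 le_rfl hh.le
    have h1 := hsum.derivWithin hU
    rw [hzero.derivWithin hU] at h1
    simpa using h1.symm
  have hb12 : D (1, 0) ((0 : ℝ), (1 : ℝ)) = 0 := by
    have hneg : ((0 : ℝ), (1 : ℝ)) = -((0 : ℝ), (-1 : ℝ)) := by norm_num
    rw [hneg, map_neg, hb2, neg_zero]
  have hb21 : D ((0 : ℝ), (1 : ℝ)) ((1 : ℝ), (0 : ℝ)) = 0 := (hsymm _ _).trans hb12
  -- along Γ⁺
  have hγ₂ : HasDerivAt (fun r : ℝ => (r * Real.cos θ₀, r * Real.sin θ₀))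
      ((Real.cos θ₀ : ℝ), (Real.sin θ₀ : ℝ)) 0 := by
    have h1 : HasDerivAt (fun r : ℝ => r * Real.cos θ₀) (Real.cos θ₀) 0 := by
      simpa using (hasDerivAt_id (0 : ℝ)).mul_const (Real.cos θ₀)
    have h2 : HasDerivAt (fun r : ℝ => r * Real.sin θ₀) (Real.sin θ₀) 0 := by
      simpa using (hasDerivAt_id (0 : ℝ)).mul_const (Real.sin θ₀)
    exact HasDerivAt.prodMk h1 h2
  have hF₂ : HasDerivAt
      (fun r : ℝ => fderiv ℝ u (r * Real.cos θ₀, r * Real.sin θ₀) (-Real.sin θ₀, Real.cos θ₀))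
      (D (Real.cos θ₀, Real.sin θ₀) (-Real.sin θ₀, Real.cos θ₀)) 0 := by
    have step : HasDerivAt
        (fun r : ℝ => fderiv ℝ u (r * Real.cos θ₀, r * Real.sin θ₀) (-Real.sin θ₀, Real.cos θ₀))
        (((ContinuousLinearMap.apply ℝ ℂ (-Real.sin θ₀, Real.cos θ₀)).comp D)
          ((Real.cos θ₀ : ℝ), (Real.sin θ₀ : ℝ))) 0 :=
      HasFDerivAt.comp_hasDerivAt_of_eq
        (l := fun x : ℝ × ℝ => fderiv ℝ u x (-Real.sin θ₀, Real.cos θ₀))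
        (f := fun r : ℝ => (r * Real.cos θ₀, r * Real.sin θ₀)) 0
        (hAp (-Real.sin θ₀, Real.cos θ₀)) hγ₂ (by norm_num)
    exact step
  have hg₂ : HasDerivAt (fun r : ℝ => u (r * Real.cos θ₀, r * Real.sin θ₀)) 0 0 := by
    have step : HasDerivAt (fun r : ℝ => u (r * Real.cos θ₀, r * Real.sin θ₀))
        (fderiv ℝ u (0, 0) ((Real.cos θ₀ : ℝ), (Real.sin θ₀ : ℝ))) 0 :=
      HasFDerivAt.comp_hasDerivAt_of_eq (l := u)
        (f := fun r : ℝ => (r * Real.cos θ₀, r * Real.sin θ₀)) 0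
        hdu.hasFDerivAt hγ₂ (by norm_num)
    have h0 : fderiv ℝ u (0, 0) ((Real.cos θ₀ : ℝ), (Real.sin θ₀ : ℝ)) = 0 := by
      rw [hL0]; rfl
    rw [h0] at step
    exact step
  have hφ₂ : ContinuousWithinAt
      (fun r : ℝ => η₂ (r * Real.cos θ₀, r * Real.sin θ₀)) (Set.Icc 0 h) 0 := by
    have hc : ContinuousWithinAt η₂
        {p : ℝ × ℝ | ∃ r : ℝ, 0 ≤ r ∧ r ≤ h ∧ p = (r * Real.cos θ₀, r * Real.sin θ₀)}
        ((0 : ℝ) * Real.cos θ₀, (0 : ℝ) * Real.sin θ₀) :=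
      hη₂.continuousOn _ ⟨0, le_rfl, hh.le, rfl⟩
    have hmaps : Set.MapsTo (fun r : ℝ => (r * Real.cos θ₀, r * Real.sin θ₀)) (Set.Icc 0 h)
        {p : ℝ × ℝ | ∃ r : ℝ, 0 ≤ r ∧ r ≤ h ∧ p = (r * Real.cos θ₀, r * Real.sin θ₀)} :=
      fun r hr => ⟨r, hr.1, hr.2, rfl⟩
    exact ContinuousWithinAt.comp hc (Continuous.continuousWithinAt (by fun_prop)) hmaps
  have hprod₂ : HasDerivWithinAt
      (fun r : ℝ => η₂ (r * Real.cos θ₀, r * Real.sin θ₀) *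
        u (r * Real.cos θ₀, r * Real.sin θ₀)) 0 (Set.Icc 0 h) 0 :=
    mul_hasDerivWithinAt_zero hφ₂ hg₂.hasDerivWithinAt (by simpa using hu0)
  have hDων : D (Real.cos θ₀, Real.sin θ₀) (-Real.sin θ₀, Real.cos θ₀) = 0 := by
    have hsum : HasDerivWithinAt
        (fun r : ℝ => fderiv ℝ u (r * Real.cos θ₀, r * Real.sin θ₀)
            (-Real.sin θ₀, Real.cos θ₀)
          + η₂ (r * Real.cos θ₀, r * Real.sin θ₀) * u (r * Real.cos θ₀, r * Real.sin θ₀))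
        (D (Real.cos θ₀, Real.sin θ₀) (-Real.sin θ₀, Real.cos θ₀) + 0) (Set.Icc 0 h) 0 :=
      hF₂.hasDerivWithinAt.add hprod₂
    have hzero : HasDerivWithinAt
        (fun r : ℝ => fderiv ℝ u (r * Real.cos θ₀, r * Real.sin θ₀)
            (-Real.sin θ₀, Real.cos θ₀)
          + η₂ (r * Real.cos θ₀, r * Real.sin θ₀) * u (r * Real.cos θ₀, r * Real.sin θ₀))
        0 (Set.Icc 0 h) 0 := by
      apply (hasDerivWithinAt_const (0 : ℝ) (Set.Icc 0 h) (0 : ℂ)).congr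
      · intro y hy; exact hbc₂ y hy.1 hy.2
      · exact hbc₂ 0 le_rfl hh.le
    have h1 := hsum.derivWithin hU
    rw [hzero.derivWithin hU] at h1
    simpa using h1.symm
  -- PDE at origin
  have ha_d : D ((1 : ℝ), (0 : ℝ)) ((1 : ℝ), (0 : ℝ))
      + D ((0 : ℝ), (1 : ℝ)) ((0 : ℝ), (1 : ℝ)) = 0 := by
    have hpde := hu_eq (0, 0) h0Ω
    have h1 : pd1 (pd1 u) (0, 0) = D (1, 0) (1, 0) := by
      show fderiv ℝ (fun x => fderiv ℝ u x (1, 0)) (0, 0) (1, 0) = _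
      rw [(hAp ((1 : ℝ), (0 : ℝ))).fderiv]
      rfl
    have h2 : pd2 (pd2 u) (0, 0) = D (0, 1) (0, 1) := by
      show fderiv ℝ (fun x => fderiv ℝ u x (0, 1)) (0, 0) (0, 1) = _
      rw [(hAp ((0 : ℝ), (1 : ℝ))).fderiv]
      rfl
    rw [h1, h2, hu0, mul_zero, add_zero] at hpde
    exact hpde
  have had : D ((1 : ℝ), (0 : ℝ)) ((1 : ℝ), (0 : ℝ))
      = -D ((0 : ℝ), (1 : ℝ)) ((0 : ℝ), (1 : ℝ)) := by
    linear_combination ha_d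
  -- expand the mixed second derivative
  have hωdec : ((Real.cos θ₀ : ℝ), (Real.sin θ₀ : ℝ))
      = Real.cos θ₀ • ((1 : ℝ), (0 : ℝ)) + Real.sin θ₀ • ((0 : ℝ), (1 : ℝ)) := by
    ext <;> simp
  have hνdec : ((-Real.sin θ₀ : ℝ), (Real.cos θ₀ : ℝ))
      = (-Real.sin θ₀) • ((1 : ℝ), (0 : ℝ)) + Real.cos θ₀ • ((0 : ℝ), (1 : ℝ)) := by
    ext <;> simp
  have hd0 : D ((0 : ℝ), (1 : ℝ)) ((0 : ℝ), (1 : ℝ)) = 0 := by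
    have hexp : D (Real.cos θ₀, Real.sin θ₀) (-Real.sin θ₀, Real.cos θ₀)
        = (2 * (Real.sin θ₀ * Real.cos θ₀)) • D ((0 : ℝ), (1 : ℝ)) ((0 : ℝ), (1 : ℝ)) := by
      rw [hωdec, hνdec]
      simp only [map_add, map_smul, ContinuousLinearMap.add_apply,
        ContinuousLinearMap.smul_apply, hb12, hb21, had, smul_zero, add_zero, zero_add]
      module
    rw [hexp] at hDων
    rcases smul_eq_zero.mp hDων with h5 | h5
    · exact absurd h5 (by
        apply mul_ne_zero
        · norm_num
        · exact mul_ne_zero hsin hcos)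
    · exact h5
  have ha0 : D ((1 : ℝ), (0 : ℝ)) ((1 : ℝ), (0 : ℝ)) = 0 := by rw [had, hd0, neg_zero]
  have hD1 : D ((1 : ℝ), (0 : ℝ)) = 0 := clm_eq_zero_of_basis _ ha0 hb12
  have hD2 : D ((0 : ℝ), (1 : ℝ)) = 0 := clm_eq_zero_of_basis _ hb21 hd0
  have hD0 : D = 0 := clm_eq_zero_of_basis D hD1 hD2
  -- conclusion
  intro k hk
  interval_cases k
  · ext m
    rw [iteratedFDeriv_zero_apply, hu0]
    simp
  · ext m
    rw [iteratedFDeriv_one_apply, hL0]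
    simp
  · ext m
    rw [iteratedFDeriv_two_apply, ← hDdef, hD0]
    simp
end

section
/- Let Ω, λ, u, α, θ₀, h, Γ_h^−, Γ_h^+, ν⁺ be as in the context. Suppose Γ_h^− is a nodal line of u, i.e., u(x) = 0 for all x ∈ Γ_h^−, and there is a continuously differentiable (C¹) function η₂ : Γ_h^+ → ℂ with ∇u(x)·ν⁺ + η₂(x)·u(x) = 0 for all x ∈ Γ_h^+. If α ∉ {1/4, 1/2, 3/4}, then u vanishes at 0 up to order 3, i.e., u(0) = 0, ∇u(0) = 0, and all second-order partial derivatives of u vanish at 0. -/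
open Set Asymptotics

lemma aux_deriv_eq_zero {f : ℝ → ℂ} {c : ℂ} {h r : ℝ} (hh : 0 < h)
    (hr : r ∈ Set.Icc (0:ℝ) h) (hf : HasDerivAt f c r)
    (h2 : HasDerivWithinAt f 0 (Set.Icc (0:ℝ) h) r) : c = 0 := by
  have h1 : HasDerivWithinAt f c (Set.Icc (0:ℝ) h) r := hf.hasDerivWithinAt
  have hu := (uniqueDiffOn_Icc hh r hr).eq h1.hasFDerivWithinAt h2.hasFDerivWithinAt
  have := congrFun (congrArg DFunLike.coe hu) 1
  simpa using this

lemma aux_deriv_eq_zero_of_zero {f : ℝ → ℂ} {c : ℂ} {h r : ℝ} (hh : 0 < h)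
    (hr : r ∈ Set.Icc (0:ℝ) h) (hf : HasDerivAt f c r)
    (hz : ∀ s ∈ Set.Icc (0:ℝ) h, f s = 0) : c = 0 :=
  aux_deriv_eq_zero hh hr hf
    ((hasDerivWithinAt_const r (Set.Icc (0:ℝ) h) (0:ℂ)).congr hz (hz r hr))

lemma aux_cos_ne_zero {α : ℝ} (h0 : 0 < α) (h1 : α < 1) (h2 : α ≠ 1/2) :
    Real.cos (α * Real.pi) ≠ 0 := by
  intro hc
  rw [Real.cos_eq_zero_iff] at hc
  obtain ⟨k, hk⟩ := hc
  have hz : (α - (2*(k:ℝ)+1)/2) * Real.pi = 0 := by linear_combination hk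
  rcases mul_eq_zero.1 hz with h' | h'
  · have hα : α = (2*(k:ℝ)+1)/2 := by linarith
    have hl : (0:ℤ) < 2*k+1 := by exact_mod_cast (by nlinarith : (0:ℝ) < 2*(k:ℝ)+1)
    have hr : (2*k+1 : ℤ) < 2 := by exact_mod_cast (by nlinarith : (2*(k:ℝ)+1) < 2)
    have hk0 : k = 0 := by omega
    subst hk0
    apply h2; rw [hα]; norm_num
  · exact Real.pi_ne_zero h'

lemma aux_cos2_ne_zero {α : ℝ} (h0 : 0 < α) (h1 : α < 1) (h2 : α ≠ 1/4) (h3 : α ≠ 3/4) :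
    Real.cos (α * Real.pi) ^ 2 - Real.sin (α * Real.pi) ^ 2 ≠ 0 := by
  rw [← Real.cos_two_mul']
  intro hc
  rw [Real.cos_eq_zero_iff] at hc
  obtain ⟨k, hk⟩ := hc
  have hz : (α - (2*(k:ℝ)+1)/4) * Real.pi = 0 := by linear_combination hk / 2
  rcases mul_eq_zero.1 hz with h' | h'
  · have hα : α = (2*(k:ℝ)+1)/4 := by linarith
    have hl : (0:ℤ) < 2*k+1 := by exact_mod_cast (by nlinarith : (0:ℝ) < 2*(k:ℝ)+1)
    have hr : (2*k+1 : ℤ) < 4 := by exact_mod_cast (by nlinarith : (2*(k:ℝ)+1) < 4)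
    have hk0 : k = 0 ∨ k = 1 := by omega
    rcases hk0 with rfl | rfl
    · apply h2; rw [hα]; norm_num
    · apply h3; rw [hα]; norm_num
  · exact Real.pi_ne_zero h'

/-- A nodal line `Γ_h^−` and a generalized singular line `Γ_h^+` with a `C¹` parameter `η₂`,
intersecting at the origin at angle `θ₀ = απ` with `α ∉ {1/4, 1/2, 3/4}`: the eigenfunction
vanishes at `0` up to order `3`. -/
theorem stmt14
    (Ω : Set (ℝ × ℝ)) (hΩ : IsOpen Ω)
    (lam : ℝ) (hlam : 0 < lam)
    (u : ℝ × ℝ → ℂ)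
    (hu_an : AnalyticOnNhd ℝ u Ω)
    (hu_eq : ∀ x ∈ Ω, pd1 (pd1 u) x + pd2 (pd2 u) x + (lam : ℂ) * u x = 0)
    (α : ℝ) (hα : α ∈ Set.Ioo (0 : ℝ) 1)
    (θ₀ : ℝ) (hθ₀ : θ₀ = α * Real.pi)
    (h : ℝ) (hh : 0 < h)
    (hdisk : ∀ x : ℝ × ℝ, x.1 ^ 2 + x.2 ^ 2 ≤ h ^ 2 → x ∈ Ω)
    (hnodal_m : ∀ r : ℝ, 0 ≤ r → r ≤ h → u (r, 0) = 0)
    (η₂ : ℝ × ℝ → ℂ)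
    (hη₂ : ContDiffOn ℝ 1 η₂
      {p : ℝ × ℝ | ∃ r : ℝ, 0 ≤ r ∧ r ≤ h ∧ p = (r * Real.cos θ₀, r * Real.sin θ₀)})
    (hbc₂ : ∀ r : ℝ, 0 ≤ r → r ≤ h →
      fderiv ℝ u (r * Real.cos θ₀, r * Real.sin θ₀) (-Real.sin θ₀, Real.cos θ₀)
        + η₂ (r * Real.cos θ₀, r * Real.sin θ₀) * u (r * Real.cos θ₀, r * Real.sin θ₀) = 0)
    (hα4 : α ≠ 1 / 4) (hα2 : α ≠ 1 / 2) (hα34 : α ≠ 3 / 4) :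
    ∀ k : ℕ, k < 3 → iteratedFDeriv ℝ k u (0, 0) = 0 := by
  obtain ⟨hα0, hα1⟩ := hα
  have hcos : Real.cos θ₀ ≠ 0 := by rw [hθ₀]; exact aux_cos_ne_zero hα0 hα1 hα2
  have hcos2 : Real.cos θ₀ ^ 2 - Real.sin θ₀ ^ 2 ≠ 0 := by
    rw [hθ₀]; exact aux_cos2_ne_zero hα0 hα1 hα4 hα34
  have hmemΩ : ∀ r ∈ Icc (0:ℝ) h, ((r, 0) : ℝ × ℝ) ∈ Ω := fun r hr =>
    hdisk (r, 0) (by simp only []; nlinarith [hr.1, hr.2])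
  have h0Ω : (((0:ℝ), (0:ℝ)) : ℝ × ℝ) ∈ Ω := hmemΩ 0 ⟨le_rfl, hh.le⟩
  have hγΩ : ∀ r ∈ Icc (0:ℝ) h, ((r * Real.cos θ₀, r * Real.sin θ₀) : ℝ × ℝ) ∈ Ω := fun r hr =>
    hdisk _ (by
      simp only []
      nlinarith [Real.sin_sq_add_cos_sq θ₀, hr.1, hr.2, sq_nonneg r])
  have hudiff : ∀ x ∈ Ω, DifferentiableAt ℝ u x := fun x hx => (hu_an x hx).differentiableAt
  have hC2 : ContDiffAt ℝ 2 u (((0:ℝ), (0:ℝ))) := (hu_an _ h0Ω).contDiffAt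
  have hF1 : ContDiffAt ℝ 1 (fderiv ℝ u) ((0:ℝ),(0:ℝ)) := hC2.fderiv_right (by norm_num)
  have hFd : DifferentiableAt ℝ (fderiv ℝ u) ((0:ℝ),(0:ℝ)) := hF1.differentiableAt one_ne_zero
  have hB : HasFDerivAt (fderiv ℝ u) (fderiv ℝ (fderiv ℝ u) ((0:ℝ),(0:ℝ))) ((0:ℝ),(0:ℝ)) :=
    hFd.hasFDerivAt
  have hBappF : ∀ w : ℝ × ℝ, HasFDerivAt (fun x => fderiv ℝ u x w)
      ((ContinuousLinearMap.apply ℝ ℂ w).comp (fderiv ℝ (fderiv ℝ u) ((0:ℝ),(0:ℝ))))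
      ((0:ℝ),(0:ℝ)) := fun w =>
    ((ContinuousLinearMap.apply ℝ ℂ w).hasFDerivAt).comp _ hB
  have hu0 : u ((0:ℝ),(0:ℝ)) = 0 := hnodal_m 0 le_rfl hh.le
  have hu0' : u (0 : ℝ × ℝ) = 0 := hu0
  have hγ0 : ((0 * Real.cos θ₀, 0 * Real.sin θ₀) : ℝ × ℝ) = ((0:ℝ),(0:ℝ)) := by norm_num
  -- first derivative in direction (1,0) vanishes along the nodal segment
  have hFe1 : ∀ r ∈ Icc (0:ℝ) h, fderiv ℝ u (r, 0) (1, 0) = 0 := by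
    intro r hr
    have hL : HasDerivAt (fun s : ℝ => ((s, 0) : ℝ × ℝ)) (1, 0) r :=
      HasDerivAt.prodMk (hasDerivAt_id r) (hasDerivAt_const r 0)
    have hu' : HasFDerivAt u (fderiv ℝ u (r, 0)) (r, 0) := (hudiff _ (hmemΩ r hr)).hasFDerivAt
    have hc : HasDerivAt (fun s : ℝ => u (s, 0)) (fderiv ℝ u (r, 0) (1, 0)) r :=
      hu'.comp_hasDerivAt r hL
    exact aux_deriv_eq_zero_of_zero hh hr hc (fun s hs => hnodal_m s hs.1 hs.2)
  have hD1 : fderiv ℝ u ((0:ℝ),(0:ℝ)) (1, 0) = 0 := hFe1 0 ⟨le_rfl, hh.le⟩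
  -- first derivative in the conormal direction vanishes at the origin
  have hbc0 := hbc₂ 0 le_rfl hh.le
  rw [hγ0, hu0, mul_zero, add_zero] at hbc0
  have hdecomp : ∀ a b : ℝ, ((a, b) : ℝ × ℝ)
      = a • (((1:ℝ),(0:ℝ)) : ℝ × ℝ) + b • (((0:ℝ),(1:ℝ)) : ℝ × ℝ) := by
    intro a b
    simp [Prod.ext_iff]
  have hD2 : fderiv ℝ u ((0:ℝ),(0:ℝ)) (0, 1) = 0 := by
    rw [hdecomp (-Real.sin θ₀) (Real.cos θ₀), map_add, map_smul, map_smul, hD1, smul_zero,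
      zero_add] at hbc0
    rcases smul_eq_zero.1 hbc0 with h' | h'
    · exact absurd h' hcos
    · exact h'
  have hfderiv0 : fderiv ℝ u ((0:ℝ),(0:ℝ)) = 0 := by
    refine ContinuousLinearMap.ext fun v => ?_
    conv_lhs => rw [show (v : ℝ × ℝ) = (v.1, v.2) from rfl, hdecomp v.1 v.2]
    rw [map_add, map_smul, map_smul, hD1, hD2]
    simp
  -- second derivatives
  have hB11 : fderiv ℝ (fderiv ℝ u) ((0:ℝ),(0:ℝ)) (1,0) (1,0) = 0 := by
    have hL : HasDerivAt (fun s : ℝ => ((s, 0) : ℝ × ℝ)) (1, 0) 0 :=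
      HasDerivAt.prodMk (hasDerivAt_id 0) (hasDerivAt_const 0 0)
    have hc : HasDerivAt (fun s : ℝ => fderiv ℝ u (s, 0) (1, 0))
        (((ContinuousLinearMap.apply ℝ ℂ ((1:ℝ),(0:ℝ))).comp
          (fderiv ℝ (fderiv ℝ u) ((0:ℝ),(0:ℝ)))) (1,0)) 0 :=
      HasFDerivAt.comp_hasDerivAt (f := fun s : ℝ => ((s, 0) : ℝ × ℝ)) 0 (hBappF (1,0)) hL
    exact aux_deriv_eq_zero_of_zero hh ⟨le_rfl, hh.le⟩ hc hFe1
  have hpd11 : pd1 (pd1 u) ((0:ℝ),(0:ℝ)) = fderiv ℝ (fderiv ℝ u) ((0:ℝ),(0:ℝ)) (1,0) (1,0) := by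
    have e : pd1 (pd1 u) ((0:ℝ),(0:ℝ))
        = fderiv ℝ (fun x => fderiv ℝ u x (1,0)) ((0:ℝ),(0:ℝ)) (1,0) := rfl
    rw [e, (hBappF (1,0)).fderiv]; rfl
  have hpd22 : pd2 (pd2 u) ((0:ℝ),(0:ℝ)) = fderiv ℝ (fderiv ℝ u) ((0:ℝ),(0:ℝ)) (0,1) (0,1) := by
    have e : pd2 (pd2 u) ((0:ℝ),(0:ℝ))
        = fderiv ℝ (fun x => fderiv ℝ u x (0,1)) ((0:ℝ),(0:ℝ)) (0,1) := rfl
    rw [e, (hBappF (0,1)).fderiv]; rfl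
  have hB22 : fderiv ℝ (fderiv ℝ u) ((0:ℝ),(0:ℝ)) (0,1) (0,1) = 0 := by
    have hpde := hu_eq ((0:ℝ),(0:ℝ)) h0Ω
    rw [hpd11, hpd22, hB11, hu0, mul_zero, add_zero, zero_add] at hpde
    exact hpde
  -- the curve along Γ⁺
  have hγd : ∀ r : ℝ, HasDerivAt (fun s : ℝ => ((s * Real.cos θ₀, s * Real.sin θ₀) : ℝ × ℝ))
      (Real.cos θ₀, Real.sin θ₀) r := fun r => by
    simpa using HasDerivAt.prodMk ((hasDerivAt_id r).mul_const (Real.cos θ₀))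
      ((hasDerivAt_id r).mul_const (Real.sin θ₀))
  -- derivative of r ↦ u(γ r) at 0 is 0 and u∘γ = o(r)
  have hulo : (fun r : ℝ => u (r * Real.cos θ₀, r * Real.sin θ₀)) =o[nhds 0] (fun r : ℝ => r) := by
    have h1 : HasFDerivAt u (fderiv ℝ u ((0:ℝ),(0:ℝ)))
        ((0 * Real.cos θ₀, 0 * Real.sin θ₀) : ℝ × ℝ) := by
      rw [hγ0]; exact (hudiff _ h0Ω).hasFDerivAt
    have huγ : HasDerivAt (fun r : ℝ => u (r * Real.cos θ₀, r * Real.sin θ₀))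
        (fderiv ℝ u ((0:ℝ),(0:ℝ)) (Real.cos θ₀, Real.sin θ₀)) 0 :=
      HasFDerivAt.comp_hasDerivAt
        (f := fun s : ℝ => ((s * Real.cos θ₀, s * Real.sin θ₀) : ℝ × ℝ)) 0 h1 (hγd 0)
    rw [hfderiv0] at huγ
    have := hasDerivAt_iff_isLittleO.1 huγ
    simpa [hγ0, hu0, hu0'] using this
  -- η₂ ∘ γ is continuous within [0,h] at 0
  have hγmemS : ∀ r ∈ Icc (0:ℝ) h, ((r * Real.cos θ₀, r * Real.sin θ₀) : ℝ × ℝ) ∈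
      {p : ℝ × ℝ | ∃ r : ℝ, 0 ≤ r ∧ r ≤ h ∧ p = (r * Real.cos θ₀, r * Real.sin θ₀)} :=
    fun r hr => ⟨r, hr.1, hr.2, rfl⟩
  have hcontη : ContinuousWithinAt (fun r : ℝ => η₂ (r * Real.cos θ₀, r * Real.sin θ₀))
      (Icc (0:ℝ) h) 0 := by
    have hγc : ContinuousWithinAt
        (fun r : ℝ => ((r * Real.cos θ₀, r * Real.sin θ₀) : ℝ × ℝ)) (Icc (0:ℝ) h) 0 :=
      Continuous.continuousWithinAt (by fun_prop)
    exact ContinuousWithinAt.comp (g := η₂)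
      (f := fun r : ℝ => ((r * Real.cos θ₀, r * Real.sin θ₀) : ℝ × ℝ)) (x := 0)
      (hη₂.continuousOn _ (hγmemS 0 ⟨le_rfl, hh.le⟩)) hγc (fun r hr => hγmemS r hr)
  have hψ : HasDerivWithinAt
      (fun r : ℝ => η₂ (r * Real.cos θ₀, r * Real.sin θ₀)
        * u (r * Real.cos θ₀, r * Real.sin θ₀)) 0 (Icc (0:ℝ) h) 0 := by
    have hηO : (fun r : ℝ => η₂ (r * Real.cos θ₀, r * Real.sin θ₀))
        =O[nhdsWithin 0 (Icc (0:ℝ) h)] (fun _ : ℝ => (1:ℝ)) := hcontη.isBigO_one ℝ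
    have hψo := hηO.mul_isLittleO (hulo.mono nhdsWithin_le_nhds)
    rw [hasDerivWithinAt_iff_isLittleO]
    simpa [hγ0, hu0, hu0'] using hψo
  -- derivative of the conormal derivative along the curve at 0
  have hgd : HasDerivAt
      (fun r : ℝ => fderiv ℝ u (r * Real.cos θ₀, r * Real.sin θ₀) (-Real.sin θ₀, Real.cos θ₀))
      (((ContinuousLinearMap.apply ℝ ℂ ((-Real.sin θ₀, Real.cos θ₀) : ℝ × ℝ)).comp
        (fderiv ℝ (fderiv ℝ u) ((0:ℝ),(0:ℝ)))) (Real.cos θ₀, Real.sin θ₀)) 0 := by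
    have h1 : HasFDerivAt (fun x => fderiv ℝ u x (-Real.sin θ₀, Real.cos θ₀))
        ((ContinuousLinearMap.apply ℝ ℂ ((-Real.sin θ₀, Real.cos θ₀) : ℝ × ℝ)).comp
          (fderiv ℝ (fderiv ℝ u) ((0:ℝ),(0:ℝ))))
        ((0 * Real.cos θ₀, 0 * Real.sin θ₀) : ℝ × ℝ) := by
      rw [hγ0]; exact hBappF _
    exact HasFDerivAt.comp_hasDerivAt
      (f := fun s : ℝ => ((s * Real.cos θ₀, s * Real.sin θ₀) : ℝ × ℝ)) 0 h1 (hγd 0)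
  have hgW : HasDerivWithinAt
      (fun r : ℝ => fderiv ℝ u (r * Real.cos θ₀, r * Real.sin θ₀)
        (-Real.sin θ₀, Real.cos θ₀)) 0 (Icc (0:ℝ) h) 0 := by
    have hneg := hψ.neg
    rw [neg_zero] at hneg
    refine hneg.congr (fun r hr => ?_) ?_
    · exact eq_neg_of_add_eq_zero_left (hbc₂ r hr.1 hr.2)
    · exact eq_neg_of_add_eq_zero_left (hbc₂ 0 le_rfl hh.le)
  have hBτν : fderiv ℝ (fderiv ℝ u) ((0:ℝ),(0:ℝ)) (Real.cos θ₀, Real.sin θ₀)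
      (-Real.sin θ₀, Real.cos θ₀) = 0 :=
    aux_deriv_eq_zero hh ⟨le_rfl, hh.le⟩ hgd hgW
  -- symmetry of the second derivative
  have hsymm : fderiv ℝ (fderiv ℝ u) ((0:ℝ),(0:ℝ)) ((1:ℝ),(0:ℝ)) ((0:ℝ),(1:ℝ))
      = fderiv ℝ (fderiv ℝ u) ((0:ℝ),(0:ℝ)) ((0:ℝ),(1:ℝ)) ((1:ℝ),(0:ℝ)) :=
    (hC2.isSymmSndFDerivAt (by simp)) _ _
  have hB12 : fderiv ℝ (fderiv ℝ u) ((0:ℝ),(0:ℝ)) ((1:ℝ),(0:ℝ)) ((0:ℝ),(1:ℝ)) = 0 := by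
    have hexp : fderiv ℝ (fderiv ℝ u) ((0:ℝ),(0:ℝ)) (Real.cos θ₀, Real.sin θ₀)
        (-Real.sin θ₀, Real.cos θ₀)
        = (Real.cos θ₀ ^ 2 - Real.sin θ₀ ^ 2) •
          fderiv ℝ (fderiv ℝ u) ((0:ℝ),(0:ℝ)) ((1:ℝ),(0:ℝ)) ((0:ℝ),(1:ℝ)) := by
      rw [hdecomp (Real.cos θ₀) (Real.sin θ₀), hdecomp (-Real.sin θ₀) (Real.cos θ₀)]
      rw [map_add, map_smul]
      simp only [ContinuousLinearMap.add_apply, ContinuousLinearMap.coe_smul',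
        Pi.smul_apply, map_add, map_smul]
      rw [hB11, hB22, ← hsymm]
      simp only [smul_zero, zero_add, add_zero, smul_smul]
      rw [← add_smul]
      ring_nf
    rw [hexp] at hBτν
    rcases smul_eq_zero.1 hBτν with h' | h'
    · exact absurd h' hcos2
    · exact h'
  have hB21 : fderiv ℝ (fderiv ℝ u) ((0:ℝ),(0:ℝ)) ((0:ℝ),(1:ℝ)) ((1:ℝ),(0:ℝ)) = 0 :=
    hsymm ▸ hB12
  have hBzero : ∀ v w : ℝ × ℝ, fderiv ℝ (fderiv ℝ u) ((0:ℝ),(0:ℝ)) v w = 0 := by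
    intro v w
    conv_lhs => rw [show (v : ℝ × ℝ) = (v.1, v.2) from rfl, hdecomp v.1 v.2,
      show (w : ℝ × ℝ) = (w.1, w.2) from rfl, hdecomp w.1 w.2]
    rw [map_add, map_smul]
    simp only [ContinuousLinearMap.add_apply, ContinuousLinearMap.coe_smul',
      Pi.smul_apply, map_add, map_smul]
    rw [hB11, hB22, hB12, hB21]
    simp
  -- conclusion
  have hfderiv0' : fderiv ℝ u (0 : ℝ × ℝ) = 0 := hfderiv0
  intro k hk
  interval_cases k
  · ext m
    simp [iteratedFDeriv_zero_apply, hu0, hu0']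
  · ext m
    simp [iteratedFDeriv_one_apply, hfderiv0, hfderiv0']
  · ext m
    rw [iteratedFDeriv_two_apply]
    simpa using hBzero (m 0) (m 1)
end
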